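/- arXiv:1408.0538 — 8 statements merged into one kernel-verified Lean document; each statement's English description precedes it below -/
import Mathlib

section
/- Let X be a square-integrable random variable on a probability space (Ω, F, μ) and let F₁, …, Fₙ be pairwise independent σ-subalgebras of F. Then Var(X) ≥ Σ_{i=1}^n Var(E[X | F_i]). -/
open MeasureTheory ProbabilityTheory

open scoped RealInnerProductSpace

private lemma integrable_mul_of_memL2 {α : Type*} {m : MeasurableSpace α} {μ : Measure α}
    {f g : α → ℝ} (hf : MemLp f 2 μ) (hg : MemLp g 2 μ) :
    Integrable (fun ω => f ω * g ω) μ := by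
  have h := MeasureTheory.L2.integrable_inner (𝕜 := ℝ) (hf.toLp f) (hg.toLp g)
  refine h.congr ?_
  filter_upwards [hf.coeFn_toLp, hg.coeFn_toLp] with ω h1 h2
  simp [h1, h2, mul_comm]

private lemma inner_toLp_eq {α : Type*} {m : MeasurableSpace α} {μ : Measure α}
    {f g : α → ℝ} (hf : MemLp f 2 μ) (hg : MemLp g 2 μ) :
    ⟪hf.toLp f, hg.toLp g⟫ = ∫ ω, f ω * g ω ∂μ := by
  rw [MeasureTheory.L2.inner_def]
  refine integral_congr_ae ?_
  filter_upwards [hf.coeFn_toLp, hg.coeFn_toLp] with ω h1 h2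
  simp [h1, h2, mul_comm]

private lemma memL2_condexp {α : Type*} {m m0 : MeasurableSpace α} (hm : m ≤ m0)
    {μ : Measure α} [IsFiniteMeasure μ] {f : α → ℝ} (hf : MemLp f 2 μ) :
    MemLp (μ[f|m]) 2 μ := by
  have hint : Integrable f μ := hf.integrable one_le_two
  have heq : ((condExpL2 ℝ ℝ hm (hf.toLp f) : α →₂[μ] ℝ) : α → ℝ) =ᵐ[μ] μ[f|m] := by
    refine ae_eq_condExp_of_forall_setIntegral_eq hm hint
      (fun s _ hμs => integrableOn_condExpL2_of_measure_ne_top hm hμs.ne _)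
      (fun s hs hμs => ?_) (aestronglyMeasurable_condExpL2 hm _)
    rw [integral_condExpL2_eq hm (hf.toLp f) hs hμs.ne]
    exact setIntegral_congr_ae (hm s hs) (hf.coeFn_toLp.mono fun ω hω _ => hω)
  exact (Lp.memLp _).ae_eq heq

theorem stmt_3 (Ω : Type*) [m0 : MeasurableSpace Ω] (μ : Measure Ω) [IsProbabilityMeasure μ]
    (X : Ω → ℝ) (hX : MemLp X 2 μ)
    (n : ℕ) (F : Fin n → MeasurableSpace Ω) (hF : ∀ i, F i ≤ m0)
    (hindep : Pairwise fun i j => ProbabilityTheory.Indep (F i) (F j) μ) :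
    ∑ i, variance (μ[X | F i]) μ ≤ variance X μ := by
  classical
  have hXint : Integrable X μ := hX.integrable one_le_two
  set c : ℝ := ∫ ω, X ω ∂μ with hc
  have hf2 : ∀ i, MemLp (μ[X | F i]) 2 μ := fun i => memL2_condexp (hF i) hX
  have hfI : ∀ i, Integrable (μ[X | F i]) μ := fun i => integrable_condExp
  have hfmean : ∀ i, ∫ ω, (μ[X | F i]) ω ∂μ = c := fun i => integral_condExp (hF i)
  -- key product identities
  have hXf : ∀ i, ∫ ω, (μ[X | F i]) ω * X ω ∂μ = ∫ ω, (μ[X | F i]) ω * (μ[X | F i]) ω ∂μ := by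
    intro i
    have hmul : Integrable (μ[X | F i] * X) μ := integrable_mul_of_memL2 (hf2 i) hX
    have h1 := condExp_mul_of_stronglyMeasurable_left (m := F i) (μ := μ)
      (stronglyMeasurable_condExp (f := X)) hmul hXint
    calc ∫ ω, (μ[X | F i]) ω * X ω ∂μ
        = ∫ ω, (μ[μ[X | F i] * X | F i]) ω ∂μ := (integral_condExp (hF i)).symm
      _ = ∫ ω, ((μ[X | F i]) * (μ[X | F i])) ω ∂μ := integral_congr_ae h1
      _ = ∫ ω, (μ[X | F i]) ω * (μ[X | F i]) ω ∂μ := rfl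
  have hcross : ∀ i j, i ≠ j →
      ∫ ω, (μ[X | F i]) ω * (μ[X | F j]) ω ∂μ = c * c := by
    intro i j hij
    have hind : IndepFun (μ[X | F i]) (μ[X | F j]) μ := by
      have h1 : MeasurableSpace.comap (μ[X | F i]) inferInstance ≤ F i :=
        (stronglyMeasurable_condExp (f := X)).measurable.comap_le
      have h2 : MeasurableSpace.comap (μ[X | F j]) inferInstance ≤ F j :=
        (stronglyMeasurable_condExp (f := X)).measurable.comap_le
      exact indep_of_indep_of_le_right (indep_of_indep_of_le_left (hindep hij) h1) h2
    have h := IndepFun.integral_mul_eq_mul_integral hind (hfI i).aestronglyMeasurable (hfI j).aestronglyMeasurable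
    calc ∫ ω, (μ[X | F i]) ω * (μ[X | F j]) ω ∂μ
        = integral μ (μ[X | F i] * μ[X | F j]) := rfl
      _ = integral μ (μ[X | F i]) * integral μ (μ[X | F j]) := h
      _ = c * c := by rw [show integral μ (μ[X | F i]) = c from hfmean i,
            show integral μ (μ[X | F j]) = c from hfmean j]
  -- variances in product form
  have hsq : ∀ h : Ω → ℝ, ∫ ω, (h ^ 2) ω ∂μ = ∫ ω, h ω * h ω ∂μ := by
    intro h
    refine integral_congr_ae (Filter.Eventually.of_forall fun ω => ?_)
    simp [sq]
  have hvf : ∀ i, variance (μ[X | F i]) μ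
      = ∫ ω, (μ[X | F i]) ω * (μ[X | F i]) ω ∂μ - c * c := by
    intro i
    rw [variance_eq_sub (hf2 i), hsq, hfmean i, sq]
  have hvX : variance X μ = (∫ ω, X ω * X ω ∂μ) - c * c := by
    rw [variance_eq_sub hX, hsq, ← hc, sq]
  -- Lp elements
  set A : Lp ℝ 2 μ := hX.toLp X with hA
  set B : Fin n → Lp ℝ 2 μ := fun i => (hf2 i).toLp (μ[X | F i]) with hB
  set C : Lp ℝ 2 μ := (memLp_const c).toLp (fun _ => c) with hC
  have IAA : ⟪A, A⟫ = ∫ ω, X ω * X ω ∂μ := inner_toLp_eq hX hX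
  have IAB : ∀ i, ⟪A, B i⟫ = ∫ ω, (μ[X | F i]) ω * (μ[X | F i]) ω ∂μ := by
    intro i
    rw [hA, hB, inner_toLp_eq hX (hf2 i), ← hXf i]
    exact integral_congr_ae (Filter.Eventually.of_forall fun ω => mul_comm _ _)
  have IBA : ∀ i, ⟪B i, A⟫ = ∫ ω, (μ[X | F i]) ω * (μ[X | F i]) ω ∂μ := by
    intro i; rw [real_inner_comm]; exact IAB i
  have IBB : ∀ i, ⟪B i, B i⟫ = ∫ ω, (μ[X | F i]) ω * (μ[X | F i]) ω ∂μ :=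
    fun i => inner_toLp_eq (hf2 i) (hf2 i)
  have IBBc : ∀ i j, i ≠ j → ⟪B i, B j⟫ = c * c := by
    intro i j hij
    rw [hB, inner_toLp_eq (hf2 i) (hf2 j)]
    exact hcross i j hij
  have IAC : ⟪A, C⟫ = c * c := by
    rw [hA, hC, inner_toLp_eq hX (memLp_const c)]
    rw [integral_mul_const]
  have ICA : ⟪C, A⟫ = c * c := by rw [real_inner_comm]; exact IAC
  have ICB : ∀ i, ⟪C, B i⟫ = c * c := by
    intro i
    rw [hC, hB, inner_toLp_eq (memLp_const c) (hf2 i)]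
    rw [integral_const_mul, hfmean i]
  have IBC : ∀ i, ⟪B i, C⟫ = c * c := by
    intro i; rw [real_inner_comm]; exact ICB i
  have ICC : ⟪C, C⟫ = c * c := by
    rw [hC, inner_toLp_eq (memLp_const c) (memLp_const c)]
    simp
  -- centered elements
  set x : Lp ℝ 2 μ := A - C with hx
  set y : Fin n → Lp ℝ 2 μ := fun i => B i - C with hy
  set v : Fin n → ℝ := fun i => ∫ ω, (μ[X | F i]) ω * (μ[X | F i]) ω ∂μ - c * c with hv
  have hxx : ⟪x, x⟫ = variance X μ := by
    rw [hx, inner_sub_sub_self, IAA, IAC, ICA, ICC, hvX]; ring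
  have hxy : ∀ i, ⟪x, y i⟫ = v i := by
    intro i
    rw [hx, hy, hv]
    simp only [inner_sub_left, inner_sub_right, IAB i, IAC, ICB i, ICC]
    ring
  have hyy : ∀ i, ⟪y i, y i⟫ = v i := by
    intro i
    rw [hy, hv, inner_sub_sub_self, IBB i, IBC i, ICB i, ICC]
    ring
  have hyyc : ∀ i j, i ≠ j → ⟪y i, y j⟫ = 0 := by
    intro i j hij
    rw [hy]
    simp only [inner_sub_left, inner_sub_right, IBBc i j hij, IBC i, ICB j, ICC]
    ring
  -- orthogonality computation
  have hsum1 : ⟪x, ∑ i, y i⟫ = ∑ i, v i := by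
    rw [inner_sum]
    exact Finset.sum_congr rfl fun i _ => hxy i
  have hsum2 : ⟪∑ i, y i, ∑ i, y i⟫ = ∑ i, v i := by
    rw [sum_inner]
    refine Finset.sum_congr rfl fun i _ => ?_
    rw [inner_sum]
    rw [Finset.sum_eq_single i (fun j _ hj => hyyc i j (Ne.symm hj)) (by simp)]
    exact hyy i
  have hsum1' : ⟪∑ i, y i, x⟫ = ∑ i, v i := by rw [real_inner_comm]; exact hsum1
  have h0 : (0 : ℝ) ≤ ⟪x - ∑ i, y i, x - ∑ i, y i⟫ := real_inner_self_nonneg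
  rw [inner_sub_sub_self, hxx, hsum1, hsum2, hsum1'] at h0
  have hfinal : ∑ i, v i ≤ variance X μ := by linarith
  calc ∑ i, variance (μ[X | F i]) μ = ∑ i, v i :=
        Finset.sum_congr rfl fun i _ => hvf i
    _ ≤ variance X μ := hfinal
end

section
/- Let μ be a Borel measure on ℝ with μ(ℝ) ≤ 1 and μ({ζ : |ζ| > R}) ≤ C₀/R for all R ≥ C₁, where C₀, C₁ ≥ 1. Let I ⊂ ℝ be a nondegenerate bounded interval, m_I the uniform probability measure on I, and u(x) = ∫_ℝ log|x − ζ| dμ(ζ). Then the L²(I, m_I)-norm of u is at most A · max(1, log M, −log|I|, log C₀, log C₁) for some absolute constant A, where M = sup_{x ∈ I} |x| and |I| is the length of I. -/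
open MeasureTheory Real
open scoped ENNReal NNReal

noncomputable def S1 : ℝ := ∑' k : ℕ, (k : ℝ) * (1/2)^k
noncomputable def S2 : ℝ := ∑' k : ℕ, ((k : ℝ) + 1)^2 * (1/2)^k

lemma S1_nonneg : 0 ≤ S1 := tsum_nonneg (fun k : ℕ => by positivity)
lemma S2_nonneg : 0 ≤ S2 := tsum_nonneg (fun k : ℕ => by positivity)

lemma summable1 : Summable (fun k : ℕ => (k : ℝ) * (1/2)^k) := by
  have h : ‖(1/2 : ℝ)‖ < 1 := by rw [Real.norm_eq_abs, abs_lt]; constructor <;> norm_num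
  exact (hasSum_coe_mul_geometric_of_norm_lt_one h).summable

lemma summable2 : Summable (fun k : ℕ => ((k : ℝ) + 1)^2 * (1/2)^k) := by
  have h : ‖(1/2 : ℝ)‖ < 1 := by rw [Real.norm_eq_abs, abs_lt]; constructor <;> norm_num
  have h2 : Summable (fun n : ℕ => ((n : ℝ))^2 * (1/2)^n) :=
    summable_pow_mul_geometric_of_norm_lt_one 2 h
  have h1 : Summable (fun n : ℕ => ((n : ℝ))^1 * (1/2)^n) :=
    summable_pow_mul_geometric_of_norm_lt_one 1 h
  have h0 : Summable (fun n : ℕ => ((n : ℝ))^0 * (1/2)^n) :=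
    summable_pow_mul_geometric_of_norm_lt_one 0 h
  refine ((h2.add (h1.mul_left 2)).add h0).congr (fun n => ?_)
  ring

lemma tsum_half : ∑' k : ℕ, ((1:ℝ)/2)^k = 2 := by
  rw [tsum_geometric_of_lt_one (by norm_num) (by norm_num)]; norm_num

lemma summable_half : Summable (fun k : ℕ => ((1:ℝ)/2)^k) :=
  summable_geometric_of_lt_one (by norm_num) (by norm_num)

lemma two_pow_ge_one (k : ℕ) : (1:ℝ) ≤ 2^k := by
  simpa using pow_le_pow_right₀ (by norm_num : (1:ℝ) ≤ 2) (Nat.zero_le k)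

lemma ofReal_rpow_two (t : ℝ) (ht : 0 ≤ t) :
    ENNReal.ofReal t ^ (2:ℝ) = ENNReal.ofReal (t^2) := by
  rw [ENNReal.ofReal_rpow_of_nonneg ht (by norm_num : (0:ℝ) ≤ 2)]
  norm_num [Real.rpow_natCast t 2]

lemma neg_bound (ζ a b K : ℝ) (hab : a < b) (hK1 : 1 ≤ K) (hKL : -Real.log (b-a) ≤ K) :
    ∫⁻ x in Set.Icc a b, ENNReal.ofReal (-Real.log |x - ζ|) ^ (2:ℝ) ∂volume ≤
      ENNReal.ofReal ((b-a) * ((9 + 4*S2) * K^2)) := by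
  have hK0 : 0 < K := lt_of_lt_of_le one_pos hK1
  set L : ℝ := b - a with hLdef
  have hL0 : 0 < L := sub_pos.2 hab
  set r : ℝ := min L 1 with hrdef
  have hr0 : 0 < r := lt_min hL0 one_pos
  have hrL : r ≤ L := min_le_left _ _
  have hr1 : r ≤ 1 := min_le_right _ _
  set c : ℝ := max (-Real.log r) 0 with hcdef
  have hc0 : 0 ≤ c := le_max_right _ _
  have hcK : c ≤ K := by
    rcases min_choice L 1 with h | h
    · rw [hcdef, hrdef, h]
      exact max_le hKL (by linarith)
    · rw [hcdef, hrdef, h]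
      simp [Real.log_one]
      linarith
  have hlogr : -Real.log r ≤ c := le_max_left _ _
  set F : ℝ → ℝ≥0∞ := fun x => ENNReal.ofReal (-Real.log |x - ζ|) ^ (2:ℝ) with hF
  set Far : Set ℝ := {x | r < |x - ζ| ∨ |x - ζ| = 0} with hFar
  set S : ℕ → Set ℝ := fun k => {x | r * (1/2)^(k+1) < |x - ζ| ∧ |x - ζ| ≤ r * (1/2)^k}
    with hS
  set ρ : Measure ℝ := volume.restrict (Set.Icc a b) with hρ
  have hρuniv : ρ Set.univ ≤ ENNReal.ofReal L := by
    rw [hρ, Measure.restrict_apply_univ, Real.volume_Icc]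
  have cover : (Set.univ : Set ℝ) ⊆ Far ∪ ⋃ k, S k := by
    intro x _
    rcases eq_or_lt_of_le (abs_nonneg (x - ζ)) with h0 | h0
    · exact Or.inl (Or.inr h0.symm)
    rcases lt_or_ge r |x - ζ| with h1 | h1
    · exact Or.inl (Or.inl h1)
    · right
      have hex : ∃ k : ℕ, r * (1/2)^k < |x - ζ| := by
        obtain ⟨n, hn⟩ := exists_pow_lt_of_lt_one (div_pos h0 hr0) (by norm_num : (1:ℝ)/2 < 1)
        refine ⟨n, ?_⟩
        rw [lt_div_iff₀ hr0] at hn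
        linarith [hn]
      have h0' : ¬ (r * (1/2)^0 < |x - ζ|) := by simpa using h1
      have hspec : r * (1/2)^(Nat.find hex) < |x - ζ| := Nat.find_spec hex
      have hk0ne : Nat.find hex ≠ 0 := by
        intro he
        exact h0' (by rwa [he] at hspec)
      obtain ⟨m, hm⟩ := Nat.exists_eq_succ_of_ne_zero hk0ne
      refine Set.mem_iUnion.2 ⟨m, ?_, ?_⟩
      · rw [show m + 1 = Nat.find hex from hm.symm]
        exact hspec
      · have := Nat.find_min hex (by omega : m < Nat.find hex)
        push_neg at this
        exact this
  have hSmeas : ∀ k, MeasurableSet (S k) := by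
    intro k
    exact (measurableSet_lt measurable_const (measurable_id.sub_const ζ).abs).inter
      (measurableSet_le (measurable_id.sub_const ζ).abs measurable_const)
  have hFarmeas : MeasurableSet Far :=
    (measurableSet_lt measurable_const (measurable_id.sub_const ζ).abs).union
      (measurableSet_eq_fun (measurable_id.sub_const ζ).abs measurable_const)
  -- far piece
  have hfar : ∫⁻ x in Far, F x ∂ρ ≤ ENNReal.ofReal (K^2) * ENNReal.ofReal L := by
    calc ∫⁻ x in Far, F x ∂ρ ≤ ∫⁻ _ in Far, ENNReal.ofReal (K^2) ∂ρ := by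
          apply setLIntegral_mono' hFarmeas
          intro x hx
          rcases hx with hx | hx
          · have hlog : -Real.log |x - ζ| ≤ c := by
              have : Real.log r ≤ Real.log |x - ζ| := Real.log_le_log hr0 hx.le
              linarith [hlogr]
            calc F x ≤ ENNReal.ofReal c ^ (2:ℝ) := by
                  rw [hF]
                  exact ENNReal.rpow_le_rpow (ENNReal.ofReal_le_ofReal hlog) (by norm_num)
              _ = ENNReal.ofReal (c^2) := ofReal_rpow_two c hc0
              _ ≤ ENNReal.ofReal (K^2) := by
                  apply ENNReal.ofReal_le_ofReal
                  nlinarith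
          · have : F x = 0 := by
              rw [hF]
              simp only [hx, Real.log_zero, neg_zero, ENNReal.ofReal_zero]
              exact ENNReal.zero_rpow_of_pos (by norm_num)
            rw [this]
            exact zero_le
      _ = ENNReal.ofReal (K^2) * ρ Far := setLIntegral_const _ _
      _ ≤ ENNReal.ofReal (K^2) * ENNReal.ofReal L := by
          gcongr
          exact le_trans (measure_mono (Set.subset_univ _)) hρuniv
  -- shell pieces
  have hshell : ∀ k : ℕ, ∫⁻ x in S k, F x ∂ρ ≤
      ENNReal.ofReal ((2*K^2 + 2*((k:ℝ)+1)^2) * (2*r*(1/2)^k)) := by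
    intro k
    have hrk0 : (0:ℝ) < r * (1/2)^(k+1) := by positivity
    have hval : ∀ x ∈ S k, F x ≤ ENNReal.ofReal (2*K^2 + 2*((k:ℝ)+1)^2) := by
      rintro x ⟨h1, h2⟩
      have hlog2 : Real.log 2 ≤ 1 := by
        have := Real.log_le_sub_one_of_pos (by norm_num : (0:ℝ) < 2)
        linarith
      have hlog : -Real.log |x - ζ| ≤ c + ((k:ℝ)+1) := by
        have hmono : Real.log (r * (1/2)^(k+1)) ≤ Real.log |x - ζ| :=
          Real.log_le_log hrk0 h1.le
        have hsplit : Real.log (r * (1/2)^(k+1)) = Real.log r - ((k:ℝ)+1) * Real.log 2 := by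
          rw [Real.log_mul (ne_of_gt hr0) (by positivity), one_div,
            Real.log_pow, Real.log_inv]
          push_cast
          ring
        have hkk : ((k:ℝ)+1) * Real.log 2 ≤ (k:ℝ)+1 :=
          mul_le_of_le_one_right (by positivity) hlog2
        have := hmono
        rw [hsplit] at this
        linarith [hlogr]
      have hnn : (0:ℝ) ≤ c + ((k:ℝ)+1) := by positivity
      calc F x ≤ ENNReal.ofReal (c + ((k:ℝ)+1)) ^ (2:ℝ) := by
            rw [hF]
            exact ENNReal.rpow_le_rpow (ENNReal.ofReal_le_ofReal hlog) (by norm_num)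
        _ = ENNReal.ofReal ((c + ((k:ℝ)+1))^2) := ofReal_rpow_two _ hnn
        _ ≤ ENNReal.ofReal (2*K^2 + 2*((k:ℝ)+1)^2) := by
            apply ENNReal.ofReal_le_ofReal
            nlinarith [sq_nonneg (c - ((k:ℝ)+1)), sq_nonneg ((k:ℝ)+1)]
    have hmeasS : ρ (S k) ≤ ENNReal.ofReal (2*r*(1/2)^k) := by
      have hsub : S k ⊆ {x : ℝ | |x - ζ| ≤ r * (1/2)^k} := fun x hx => hx.2
      have hIcc : {x : ℝ | |x - ζ| ≤ r * (1/2)^k} =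
          Set.Icc (ζ - r * (1/2)^k) (ζ + r * (1/2)^k) := by
        ext x
        simp only [Set.mem_setOf_eq, Set.mem_Icc, abs_sub_le_iff]
        constructor <;> rintro ⟨h1, h2⟩ <;> constructor <;> linarith
      calc ρ (S k) = volume (S k ∩ Set.Icc a b) := Measure.restrict_apply (hSmeas k)
        _ ≤ volume {x : ℝ | |x - ζ| ≤ r * (1/2)^k} :=
            measure_mono (Set.Subset.trans Set.inter_subset_left hsub)
        _ = ENNReal.ofReal (2*r*(1/2)^k) := by
            rw [hIcc, Real.volume_Icc]
            congr 1
            ring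
    calc ∫⁻ x in S k, F x ∂ρ
        ≤ ∫⁻ _ in S k, ENNReal.ofReal (2*K^2 + 2*((k:ℝ)+1)^2) ∂ρ :=
          setLIntegral_mono' (hSmeas k) hval
      _ = ENNReal.ofReal (2*K^2 + 2*((k:ℝ)+1)^2) * ρ (S k) := setLIntegral_const _ _
      _ ≤ ENNReal.ofReal (2*K^2 + 2*((k:ℝ)+1)^2) * ENNReal.ofReal (2*r*(1/2)^k) := by
          gcongr
      _ = ENNReal.ofReal ((2*K^2 + 2*((k:ℝ)+1)^2) * (2*r*(1/2)^k)) := by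
          rw [← ENNReal.ofReal_mul (by positivity)]
  have hsummable : Summable (fun k : ℕ => (2*K^2 + 2*((k:ℝ)+1)^2) * (2*r*(1/2)^k)) := by
    refine (((summable_half.mul_left (2*K^2*(2*r))).add
      (summable2.mul_left (2*(2*r)))).congr (fun k => ?_))
    ring
  have hsum : ∑' k : ℕ, (2*K^2 + 2*((k:ℝ)+1)^2) * (2*r*(1/2)^k) = 8*r*K^2 + 4*r*S2 := by
    have heq : ∀ k : ℕ, (2*K^2 + 2*((k:ℝ)+1)^2) * (2*r*(1/2)^k) =
        (2*K^2*(2*r))*(1/2)^k + (2*(2*r))*(((k:ℝ)+1)^2*(1/2)^k) := by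
      intro k; ring
    rw [tsum_congr heq, Summable.tsum_add (summable_half.mul_left _) (summable2.mul_left _),
      tsum_mul_left, tsum_mul_left, tsum_half, S2]
    ring
  have hS2 : 0 ≤ S2 := tsum_nonneg (fun k : ℕ => by positivity)
  calc ∫⁻ x in Set.Icc a b, F x ∂volume = ∫⁻ x in Set.univ, F x ∂ρ := by
        rw [hρ, setLIntegral_univ]
    _ ≤ ∫⁻ x in Far ∪ ⋃ k, S k, F x ∂ρ := lintegral_mono_set cover
    _ ≤ (∫⁻ x in Far, F x ∂ρ) + ∫⁻ x in ⋃ k, S k, F x ∂ρ := lintegral_union_le _ _ _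
    _ ≤ ENNReal.ofReal (K^2) * ENNReal.ofReal L + ∑' k : ℕ, ∫⁻ x in S k, F x ∂ρ := by
        gcongr
        exact lintegral_iUnion_le _ _
    _ ≤ ENNReal.ofReal (K^2) * ENNReal.ofReal L +
        ∑' k : ℕ, ENNReal.ofReal ((2*K^2 + 2*((k:ℝ)+1)^2) * (2*r*(1/2)^k)) := by
        gcongr with k
        exact hshell k
    _ = ENNReal.ofReal (K^2 * L) + ENNReal.ofReal (8*r*K^2 + 4*r*S2) := by
        rw [← ENNReal.ofReal_mul (by positivity)]
        congr 1
        rw [(ENNReal.ofReal_tsum_of_nonneg (fun k => by positivity) hsummable).symm, hsum]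
    _ ≤ ENNReal.ofReal (L * ((9 + 4*S2) * K^2)) := by
        rw [← ENNReal.ofReal_add (by positivity) (by positivity)]
        apply ENNReal.ofReal_le_ofReal
        have hK2 : (1:ℝ) ≤ K^2 := by nlinarith
        have t1 : r*K^2 ≤ L*K^2 := mul_le_mul_of_nonneg_right hrL (sq_nonneg K)
        have t2 : r*S2 ≤ L*S2 := mul_le_mul_of_nonneg_right hrL hS2
        have t3 : L*S2*1 ≤ L*S2*K^2 :=
          mul_le_mul_of_nonneg_left hK2 (mul_nonneg hL0.le hS2)
        nlinarith [t1, t2, t3]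

lemma pos_bound (μ : Measure ℝ) (hμ1 : μ Set.univ ≤ 1) (C₀ C₁ M T K : ℝ)
    (hM : 0 ≤ M)
    (hT1 : 1 ≤ T) (hTC₀ : C₀ ≤ T) (hTC₁ : C₁ ≤ T) (hTM : M ≤ T)
    (hK1 : 1 ≤ K) (hKT : Real.log T ≤ K)
    (htail : ∀ R : ℝ, C₁ ≤ R → μ {ζ : ℝ | |ζ| > R} ≤ ENNReal.ofReal (C₀ / R)) :
    ∫⁻ ζ, ENNReal.ofReal (Real.log (1 + M + |ζ|)) ∂μ ≤ ENNReal.ofReal ((9 + S1) * K) := by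
  have hT0 : 0 < T := lt_of_lt_of_le one_pos hT1
  have hK0 : 0 < K := lt_of_lt_of_le one_pos hK1
  set f : ℝ → ℝ≥0∞ := fun ζ => ENNReal.ofReal (Real.log (1 + M + |ζ|)) with hf
  set Core : Set ℝ := {ζ | |ζ| ≤ T} with hCore
  set W : ℕ → Set ℝ := fun k => {ζ | T * 2^k < |ζ| ∧ |ζ| ≤ T * 2^(k+1)} with hW
  have cover : (Set.univ : Set ℝ) ⊆ Core ∪ ⋃ k, W k := by
    intro ζ _
    rcases le_or_gt |ζ| T with h | h
    · exact Or.inl h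
    · right
      have hex : ∃ k : ℕ, |ζ| ≤ T * 2^k := by
        obtain ⟨n, hn⟩ := pow_unbounded_of_one_lt (|ζ| / T) (by norm_num : (1:ℝ) < 2)
        exact ⟨n, by rw [div_lt_iff₀ hT0] at hn; nlinarith⟩
      have h0 : ¬ (|ζ| ≤ T * 2^0) := by simpa using not_le.2 h
      have hspec : |ζ| ≤ T * 2^(Nat.find hex) := Nat.find_spec hex
      have hk0ne : Nat.find hex ≠ 0 := by
        intro he
        exact h0 (by rwa [he] at hspec)
      obtain ⟨m, hm⟩ := Nat.exists_eq_succ_of_ne_zero hk0ne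
      refine Set.mem_iUnion.2 ⟨m, ?_, ?_⟩
      · have := Nat.find_min hex (by omega : m < Nat.find hex)
        push_neg at this
        exact this
      · rw [show m + 1 = Nat.find hex from hm.symm]
        exact hspec
  have hWmeas : ∀ k, MeasurableSet (W k) := by
    intro k
    exact (measurableSet_lt measurable_const measurable_abs).inter
      (measurableSet_le measurable_abs measurable_const)
  have hcore : ∫⁻ ζ in Core, f ζ ∂μ ≤ ENNReal.ofReal (3*K) := by
    calc ∫⁻ ζ in Core, f ζ ∂μ ≤ ∫⁻ _ in Core, ENNReal.ofReal (3*K) ∂μ := by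
          apply setLIntegral_mono' (measurableSet_le measurable_abs measurable_const)
          intro ζ hζ
          apply ENNReal.ofReal_le_ofReal
          have hz : |ζ| ≤ T := hζ
          have harg : 1 + M + |ζ| ≤ 3 * T := by linarith
          have hlog : Real.log (1 + M + |ζ|) ≤ Real.log (3*T) :=
            Real.log_le_log (by positivity) harg
          have h3 : Real.log (3*T) = Real.log 3 + Real.log T :=
            Real.log_mul (by norm_num) (ne_of_gt hT0)
          have hlog3 : Real.log 3 ≤ 2 := by
            have := Real.log_le_sub_one_of_pos (by norm_num : (0:ℝ) < 3)
            linarith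
          linarith
      _ = ENNReal.ofReal (3*K) * μ Core := setLIntegral_const _ _
      _ ≤ ENNReal.ofReal (3*K) * 1 := by
          gcongr
          exact le_trans (measure_mono (Set.subset_univ _)) hμ1
      _ = ENNReal.ofReal (3*K) := mul_one _
  have hshellb : ∀ k : ℕ, ∫⁻ ζ in W k, f ζ ∂μ ≤
      ENNReal.ofReal ((3*K + (k:ℝ)) * (1/2)^k) := by
    intro k
    have hval : ∫⁻ ζ in W k, f ζ ∂μ ≤ ∫⁻ _ in W k, ENNReal.ofReal (3*K + (k:ℝ)) ∂μ := by
      apply setLIntegral_mono' (hWmeas k)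
      rintro ζ ⟨h1, h2⟩
      apply ENNReal.ofReal_le_ofReal
      have h2p1 : (1:ℝ) ≤ 2^(k+1) := two_pow_ge_one (k+1)
      have harg : 1 + M + |ζ| ≤ T * 2^(k+2) := by
        have e1 : (1:ℝ) + M ≤ 2 * T := by linarith
        have e2 : (2:ℝ) * T ≤ T * 2^(k+1) := by
          have h22 : (2:ℝ) ≤ 2^(k+1) := by
            calc (2:ℝ) = 2^1 := (pow_one 2).symm
            _ ≤ 2^(k+1) := pow_le_pow_right₀ (by norm_num) (by omega)
          nlinarith
        have e3 : T * 2^(k+1) + T * 2^(k+1) = T * 2^(k+2) := by ring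
        linarith
      have hlog : Real.log (1 + M + |ζ|) ≤ Real.log (T * 2^(k+2)) :=
        Real.log_le_log (by positivity) harg
      have hsplit : Real.log (T * 2^(k+2)) = Real.log T + ((k:ℝ)+2) * Real.log 2 := by
        rw [Real.log_mul (ne_of_gt hT0) (by positivity), Real.log_pow]
        push_cast
        ring
      have hlog2 : Real.log 2 ≤ 1 := by
        have := Real.log_le_sub_one_of_pos (by norm_num : (0:ℝ) < 2)
        linarith
      have hk2 : (0:ℝ) ≤ (k:ℝ) + 2 := by positivity
      have hmul : ((k:ℝ)+2) * Real.log 2 ≤ (k:ℝ) + 2 :=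
        mul_le_of_le_one_right hk2 hlog2
      have : Real.log (1 + M + |ζ|) ≤ Real.log T + ((k:ℝ) + 2) := by
        rw [hsplit] at hlog
        linarith
      linarith
    have hmeas : μ (W k) ≤ ENNReal.ofReal ((1/2)^k) := by
      have hsub : W k ⊆ {ζ : ℝ | |ζ| > T * 2^k} := fun ζ hζ => hζ.1
      have h2k1 : (1:ℝ) ≤ 2^k := two_pow_ge_one k
      have hR : C₁ ≤ T * 2^k := by nlinarith
      refine le_trans (measure_mono hsub) (le_trans (htail _ hR) ?_)
      apply ENNReal.ofReal_le_ofReal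
      have h2k : (0:ℝ) < 2^k := by positivity
      rw [div_le_iff₀ (by positivity)]
      calc C₀ ≤ T := hTC₀
        _ = T * ((1/2)^k * 2^k) := by
            rw [one_div, inv_pow, inv_mul_cancel₀ (ne_of_gt h2k), mul_one]
        _ = (1/2)^k * (T * 2^k) := by ring
    calc ∫⁻ ζ in W k, f ζ ∂μ ≤ ∫⁻ _ in W k, ENNReal.ofReal (3*K + (k:ℝ)) ∂μ := hval
      _ = ENNReal.ofReal (3*K + (k:ℝ)) * μ (W k) := setLIntegral_const _ _
      _ ≤ ENNReal.ofReal (3*K + (k:ℝ)) * ENNReal.ofReal ((1/2)^k) := by gcongr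
      _ = ENNReal.ofReal ((3*K + (k:ℝ)) * (1/2)^k) := by
          rw [← ENNReal.ofReal_mul (by positivity)]
  have hsummable : Summable (fun k : ℕ => (3*K + (k:ℝ)) * (1/2)^k) := by
    refine ((summable_half.mul_left (3*K)).add summable1).congr (fun k => ?_)
    ring
  calc ∫⁻ ζ, f ζ ∂μ = ∫⁻ ζ in Set.univ, f ζ ∂μ := (setLIntegral_univ f).symm
    _ ≤ ∫⁻ ζ in Core ∪ ⋃ k, W k, f ζ ∂μ := lintegral_mono_set cover
    _ ≤ (∫⁻ ζ in Core, f ζ ∂μ) + ∫⁻ ζ in ⋃ k, W k, f ζ ∂μ := lintegral_union_le _ _ _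
    _ ≤ ENNReal.ofReal (3*K) + ∑' k : ℕ, ∫⁻ ζ in W k, f ζ ∂μ := by
        gcongr
        exact lintegral_iUnion_le _ _
    _ ≤ ENNReal.ofReal (3*K) + ∑' k : ℕ, ENNReal.ofReal ((3*K + (k:ℝ)) * (1/2)^k) := by
        gcongr with k
        exact hshellb k
    _ = ENNReal.ofReal (3*K) + ENNReal.ofReal (∑' k : ℕ, (3*K + (k:ℝ)) * (1/2)^k) := by
        congr 1
        exact (ENNReal.ofReal_tsum_of_nonneg (fun k => by positivity) hsummable).symm
    _ ≤ ENNReal.ofReal ((9 + S1) * K) := by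
        have hsum : ∑' k : ℕ, (3*K + (k:ℝ)) * (1/2)^k = 3*K*2 + S1 := by
          have heq : ∀ k : ℕ, (3*K + (k:ℝ)) * (1/2)^k = 3*K*(1/2)^k + (k:ℝ)*(1/2)^k := by
            intro k; ring
          rw [tsum_congr heq, Summable.tsum_add (summable_half.mul_left _) summable1,
            tsum_mul_left, tsum_half, S1]
        have hS1 : 0 ≤ S1 := tsum_nonneg (fun k : ℕ => by positivity)
        rw [← ENNReal.ofReal_add (by positivity) (by rw [hsum]; positivity)]
        apply ENNReal.ofReal_le_ofReal
        rw [hsum]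
        nlinarith

theorem stmt_5 :
    ∃ A : ℝ, 0 < A ∧
      ∀ (μ : Measure ℝ) (_ : μ Set.univ ≤ 1) (C₀ C₁ : ℝ) (_ : 1 ≤ C₀) (_ : 1 ≤ C₁)
        (_ : ∀ R : ℝ, C₁ ≤ R → μ {ζ : ℝ | |ζ| > R} ≤ ENNReal.ofReal (C₀ / R))
        (a b : ℝ) (_ : a < b),
        (eLpNorm (fun x => ∫ ζ, Real.log |x - ζ| ∂μ) 2
            ((ENNReal.ofReal (b - a))⁻¹ • volume.restrict (Set.Icc a b))).toReal ≤
          A * max 1 (max (Real.log (max |a| |b|))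
            (max (-Real.log (b - a)) (max (Real.log C₀) (Real.log C₁)))) := by
  have hS1 : 0 ≤ S1 := S1_nonneg
  have hS2 : 0 ≤ S2 := S2_nonneg
  have hsqrt : 0 ≤ Real.sqrt (9 + 4*S2) := Real.sqrt_nonneg _
  refine ⟨9 + S1 + Real.sqrt (9 + 4*S2), by linarith, ?_⟩
  intro μ hμ1 C₀ C₁ hC₀ hC₁ htail a b hab
  set M : ℝ := max |a| |b| with hMdef
  set L : ℝ := b - a with hLdef
  set K : ℝ := max 1 (max (Real.log M)
    (max (-Real.log L) (max (Real.log C₀) (Real.log C₁)))) with hKdef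
  have hK1 : 1 ≤ K := le_max_left _ _
  have hK0 : (0:ℝ) ≤ K := by linarith
  have hM0 : (0:ℝ) ≤ M := le_trans (abs_nonneg a) (le_max_left _ _)
  have hL0 : (0:ℝ) < L := sub_pos.2 hab
  have hKL : -Real.log L ≤ K :=
    le_trans (le_max_left _ _) (le_trans (le_max_right (Real.log M) _) (le_max_right 1 _))
  have hKC₀ : Real.log C₀ ≤ K :=
    le_trans (le_max_left _ _) (le_trans (le_max_right (-Real.log L) _)
      (le_trans (le_max_right (Real.log M) _) (le_max_right 1 _)))
  have hKC₁ : Real.log C₁ ≤ K :=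
    le_trans (le_max_right (Real.log C₀) _) (le_trans (le_max_right (-Real.log L) _)
      (le_trans (le_max_right (Real.log M) _) (le_max_right 1 _)))
  have hKM : Real.log M ≤ K := le_trans (le_max_left _ _) (le_max_right 1 _)
  set T : ℝ := max 1 (max C₁ (max C₀ M)) with hTdef
  have hT1 : 1 ≤ T := le_max_left _ _
  have hTC₁ : C₁ ≤ T := le_trans (le_max_left _ _) (le_max_right 1 _)
  have hTC₀ : C₀ ≤ T := le_trans (le_max_left _ _)
    (le_trans (le_max_right C₁ _) (le_max_right 1 _))
  have hTM : M ≤ T := le_trans (le_max_right C₀ _)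
    (le_trans (le_max_right C₁ _) (le_max_right 1 _))
  have hKT : Real.log T ≤ K := by
    rcases max_choice 1 (max C₁ (max C₀ M)) with h | h
    · rw [hTdef, h, Real.log_one]; linarith
    · rw [hTdef, h]
      rcases max_choice C₁ (max C₀ M) with h2 | h2
      · rw [h2]; exact hKC₁
      · rw [h2]
        rcases max_choice C₀ M with h3 | h3
        · rw [h3]; exact hKC₀
        · rw [h3]; exact hKM
  -- the measure ν
  set ν : Measure ℝ := (ENNReal.ofReal L)⁻¹ • volume.restrict (Set.Icc a b) with hνdef
  have hLne0 : ENNReal.ofReal L ≠ 0 := (ENNReal.ofReal_pos.2 hL0).ne'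
  have hLnetop : ENNReal.ofReal L ≠ ⊤ := ENNReal.ofReal_ne_top
  have hνuniv : ν Set.univ = 1 := by
    rw [hνdef, Measure.smul_apply, smul_eq_mul, Measure.restrict_apply_univ, Real.volume_Icc,
      ← hLdef]
    exact ENNReal.inv_mul_cancel hLne0 hLnetop
  haveI hνprob : IsProbabilityMeasure ν := ⟨hνuniv⟩
  haveI hμfin : IsFiniteMeasure μ := ⟨lt_of_le_of_lt hμ1 ENNReal.one_lt_top⟩
  set u : ℝ → ℝ := fun x => ∫ ζ, Real.log |x - ζ| ∂μ with hudef
  set g : ℝ → ℝ → ℝ≥0∞ := fun x ζ => ENNReal.ofReal (-Real.log |x - ζ|) with hgdef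
  set N : ℝ → ℝ≥0∞ := fun x => ∫⁻ ζ, g x ζ ∂μ with hNdef
  have hgmeas : Measurable (Function.uncurry g) := by
    apply Measurable.ennreal_ofReal
    exact ((measurable_fst.sub measurable_snd).abs.log).neg
  have hNmeas : Measurable N := hgmeas.lintegral_prod_right'
  set c1 : ℝ≥0∞ := ENNReal.ofReal ((9 + S1) * K) with hc1def
  -- a.e. pointwise bound
  have hae : ∀ᵐ x ∂ν, x ∈ Set.Icc a b := by
    have h0 : ∀ᵐ x ∂(volume.restrict (Set.Icc a b)), x ∈ Set.Icc a b :=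
      ae_restrict_mem measurableSet_Icc
    rw [hνdef]
    exact Measure.ae_smul_measure h0 _
  have hpb : ∀ᵐ x ∂ν, (‖u x‖₊ : ℝ≥0∞) ≤ c1 + N x := by
    filter_upwards [hae] with x hx
    have hxM : |x| ≤ M := by
      rw [abs_le]
      constructor
      · have := neg_abs_le a
        have h1 : |a| ≤ M := le_max_left _ _
        have := hx.1
        linarith
      · have h2 : |b| ≤ M := le_max_right _ _
        have hb := le_abs_self b
        have := hx.2
        linarith
    calc (‖u x‖₊ : ℝ≥0∞) ≤ ∫⁻ ζ, (‖Real.log |x - ζ|‖₊ : ℝ≥0∞) ∂μ :=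
          enorm_integral_le_lintegral_enorm _
      _ ≤ ∫⁻ ζ, (ENNReal.ofReal (Real.log (1 + M + |ζ|)) + g x ζ) ∂μ := by
          apply lintegral_mono
          intro ζ
          show (‖Real.log |x - ζ|‖₊ : ℝ≥0∞) ≤ ENNReal.ofReal (Real.log (1 + M + |ζ|)) + g x ζ
          have hnorm : (‖Real.log |x - ζ|‖₊ : ℝ≥0∞) = ENNReal.ofReal (abs (Real.log |x - ζ|)) := by
            exact (ofReal_norm _).symm.trans (congrArg ENNReal.ofReal (Real.norm_eq_abs _))
          rw [hnorm]
          have hs0 : (0:ℝ) ≤ |x - ζ| := abs_nonneg _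
          rcases le_or_gt 1 |x - ζ| with hs | hs
          · have habs : abs (Real.log |x - ζ|) = Real.log |x - ζ| :=
              abs_of_nonneg (Real.log_nonneg hs)
            have harg : |x - ζ| ≤ 1 + M + |ζ| := by
              have h1 : |x - ζ| ≤ |x| + |ζ| := abs_sub x ζ
              linarith
            have hlog : Real.log |x - ζ| ≤ Real.log (1 + M + |ζ|) :=
              Real.log_le_log (by linarith) harg
            rw [habs]
            exact le_trans (ENNReal.ofReal_le_ofReal hlog) (self_le_add_right _ _)
          · have hlognp : Real.log |x - ζ| ≤ 0 := Real.log_nonpos hs0 hs.le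
            have habs : abs (Real.log |x - ζ|) = -Real.log |x - ζ| := abs_of_nonpos hlognp
            rw [habs]
            exact self_le_add_left _ _
      _ = (∫⁻ ζ, ENNReal.ofReal (Real.log (1 + M + |ζ|)) ∂μ) + N x := by
          rw [hNdef]
          exact lintegral_add_left (((measurable_abs.const_add (1 + M)).log).ennreal_ofReal) _
      _ ≤ c1 + N x := by
          gcongr
          exact pos_bound μ hμ1 C₀ C₁ M T K hM0 hT1 hTC₀ hTC₁ hTM hK1 hKT htail
  -- conjugate exponent 2 2
  have hpq : Real.HolderConjugate 2 2 := Real.HolderConjugate.two_two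
  -- pointwise Cauchy-Schwarz in ζ
  have hCS : ∀ x : ℝ, N x ^ (2:ℝ) ≤ ∫⁻ ζ, g x ζ ^ (2:ℝ) ∂μ := by
    intro x
    have hgxmeas : Measurable (g x) := by
      apply Measurable.ennreal_ofReal
      exact ((measurable_const.sub measurable_id).abs.log).neg
    have hone : (∫⁻ ζ, (1:ℝ≥0∞) ^ (2:ℝ) ∂μ) ^ (1/(2:ℝ)) ≤ 1 := by
      simp only [ENNReal.one_rpow, lintegral_one]
      calc (μ Set.univ) ^ (1/(2:ℝ)) ≤ (1:ℝ≥0∞) ^ (1/(2:ℝ)) :=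
            ENNReal.rpow_le_rpow hμ1 (by norm_num)
        _ = 1 := ENNReal.one_rpow _
    have hH := ENNReal.lintegral_mul_le_Lp_mul_Lq μ hpq hgxmeas.aemeasurable
      aemeasurable_const (g := fun _ => (1:ℝ≥0∞))
    simp only [mul_one, Pi.mul_apply] at hH
    have hN1 : N x ≤ (∫⁻ ζ, g x ζ ^ (2:ℝ) ∂μ) ^ (1/(2:ℝ)) := by
      rw [hNdef]
      calc (∫⁻ ζ, g x ζ ∂μ) ≤ (∫⁻ ζ, g x ζ ^ (2:ℝ) ∂μ) ^ (1/(2:ℝ)) *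
            (∫⁻ ζ, (1:ℝ≥0∞) ^ (2:ℝ) ∂μ) ^ (1/(2:ℝ)) := hH
        _ ≤ (∫⁻ ζ, g x ζ ^ (2:ℝ) ∂μ) ^ (1/(2:ℝ)) * 1 := by gcongr
        _ = (∫⁻ ζ, g x ζ ^ (2:ℝ) ∂μ) ^ (1/(2:ℝ)) := mul_one _
    calc N x ^ (2:ℝ) ≤ ((∫⁻ ζ, g x ζ ^ (2:ℝ) ∂μ) ^ (1/(2:ℝ))) ^ (2:ℝ) := by
          exact ENNReal.rpow_le_rpow hN1 (by norm_num)
      _ = ∫⁻ ζ, g x ζ ^ (2:ℝ) ∂μ := by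
          rw [← ENNReal.rpow_mul]
          norm_num
  -- the square integral of N
  have hinner : ∀ ζ : ℝ, (∫⁻ x, g x ζ ^ (2:ℝ) ∂ν) ≤ ENNReal.ofReal ((9 + 4*S2) * K^2) := by
    intro ζ
    have hb := neg_bound ζ a b K hab hK1 hKL
    rw [← hLdef] at hb
    calc (∫⁻ x, g x ζ ^ (2:ℝ) ∂ν)
        = (ENNReal.ofReal L)⁻¹ * ∫⁻ x in Set.Icc a b, g x ζ ^ (2:ℝ) ∂volume := by
          rw [hνdef, lintegral_smul_measure, smul_eq_mul]
      _ ≤ (ENNReal.ofReal L)⁻¹ * ENNReal.ofReal (L * ((9 + 4*S2) * K^2)) := by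
          gcongr
      _ = ENNReal.ofReal ((9 + 4*S2) * K^2) := by
          rw [ENNReal.ofReal_mul hL0.le, ← mul_assoc,
            ENNReal.inv_mul_cancel hLne0 hLnetop, one_mul]
  have hNsq : (∫⁻ x, N x ^ (2:ℝ) ∂ν) ≤ ENNReal.ofReal ((9 + 4*S2) * K^2) := by
    have hswap : (∫⁻ x, ∫⁻ ζ, g x ζ ^ (2:ℝ) ∂μ ∂ν) = ∫⁻ ζ, ∫⁻ x, g x ζ ^ (2:ℝ) ∂ν ∂μ := by
      apply lintegral_lintegral_swap
      exact (hgmeas.pow measurable_const).aemeasurable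
    calc (∫⁻ x, N x ^ (2:ℝ) ∂ν) ≤ ∫⁻ x, ∫⁻ ζ, g x ζ ^ (2:ℝ) ∂μ ∂ν :=
          lintegral_mono (fun x => hCS x)
      _ = ∫⁻ ζ, ∫⁻ x, g x ζ ^ (2:ℝ) ∂ν ∂μ := hswap
      _ ≤ ∫⁻ _, ENNReal.ofReal ((9 + 4*S2) * K^2) ∂μ := lintegral_mono (fun ζ => hinner ζ)
      _ = ENNReal.ofReal ((9 + 4*S2) * K^2) * μ Set.univ := lintegral_const _
      _ ≤ ENNReal.ofReal ((9 + 4*S2) * K^2) * 1 := by gcongr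
      _ = ENNReal.ofReal ((9 + 4*S2) * K^2) := mul_one _
  -- main chain
  have hmain : eLpNorm u 2 ν ≤ ENNReal.ofReal ((9 + S1 + Real.sqrt (9 + 4*S2)) * K) := by
    have hadd := ENNReal.lintegral_Lp_add_le (μ := ν) (p := (2:ℝ))
      (f := fun _ : ℝ => c1) (g := N) aemeasurable_const hNmeas.aemeasurable one_le_two
    simp only [Pi.add_apply] at hadd
    calc eLpNorm u 2 ν = (∫⁻ x, (‖u x‖₊ : ℝ≥0∞) ^ (2:ℝ) ∂ν) ^ (1/(2:ℝ)) := by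
          rw [eLpNorm_eq_lintegral_rpow_enorm_toReal (by norm_num) (by norm_num)]
          norm_num
          rfl
      _ ≤ (∫⁻ x, (c1 + N x) ^ (2:ℝ) ∂ν) ^ (1/(2:ℝ)) := by
          apply ENNReal.rpow_le_rpow _ (by norm_num)
          apply lintegral_mono_ae
          filter_upwards [hpb] with x hx
          exact ENNReal.rpow_le_rpow hx (by norm_num)
      _ ≤ (∫⁻ _, c1 ^ (2:ℝ) ∂ν) ^ (1/(2:ℝ)) + (∫⁻ x, N x ^ (2:ℝ) ∂ν) ^ (1/(2:ℝ)) := hadd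
      _ ≤ c1 + ENNReal.ofReal (Real.sqrt (9 + 4*S2) * K) := by
          gcongr
          · -- constant part
            rw [lintegral_const, hνuniv, mul_one, ← ENNReal.rpow_mul]
            norm_num
          · -- N part
            calc (∫⁻ x, N x ^ (2:ℝ) ∂ν) ^ (1/(2:ℝ))
                ≤ (ENNReal.ofReal ((9 + 4*S2) * K^2)) ^ (1/(2:ℝ)) :=
                  ENNReal.rpow_le_rpow hNsq (by norm_num)
              _ = ENNReal.ofReal (((9 + 4*S2) * K^2) ^ (1/(2:ℝ))) :=
                  ENNReal.ofReal_rpow_of_nonneg (by positivity) (by norm_num)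
              _ = ENNReal.ofReal (Real.sqrt (9 + 4*S2) * K) := by
                  congr 1
                  rw [← Real.sqrt_eq_rpow, Real.sqrt_mul (by linarith), Real.sqrt_sq hK0]
      _ = ENNReal.ofReal ((9 + S1 + Real.sqrt (9 + 4*S2)) * K) := by
          rw [hc1def, ← ENNReal.ofReal_add (by positivity) (by positivity)]
          congr 1
          ring
  refine ENNReal.toReal_le_of_le_ofReal (by positivity) ?_
  exact hmain
end

section
/- Let H₁ and H₂ be self-adjoint (symmetric real) operators on the same finite-dimensional real inner product space, and let E ∈ ℝ with E not an eigenvalue of H₁ nor of H₂. Then log|det(H₁ − E)| − log|det(H₂ − E)| ≤ 4·rank(H₁ − H₂)·max( log⁺(|E| + ‖H₁‖), log⁻ dist(E, spec H₂) ), where log⁺ t = max(log t, 0), log⁻ t = max(−log t, 0), ‖H₁‖ is the operator norm, and dist(E, spec H₂) is the distance from E to the set of eigenvalues of H₂. -/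
open Real

section AuxLemmas

open Module

private lemma det_restrict_of_sub_mem' {F : Type*} [NormedAddCommGroup F] [InnerProductSpace ℝ F]
    [FiniteDimensional ℝ F] (V : Submodule ℝ F) (T : F →ₗ[ℝ] F)
    (h : ∀ x, T x - x ∈ V) (hV : ∀ x ∈ V, T x ∈ V) :
    LinearMap.det T = LinearMap.det (T.restrict hV) := by
  have hc : IsCompl V Vᗮ := V.isCompl_orthogonal
  set e := V.prodEquivOfIsCompl Vᗮ hc with he
  set bV : Basis (Fin (finrank ℝ V)) ℝ V := finBasis ℝ V with hbV
  set bW : Basis (Fin (finrank ℝ Vᗮ)) ℝ Vᗮ := finBasis ℝ Vᗮ with hbW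
  set b := bV.prod bW with hb
  have key : LinearMap.toMatrix b b (e.symm.toLinearMap ∘ₗ T ∘ₗ e.toLinearMap) =
      Matrix.fromBlocks (LinearMap.toMatrix bV bV (T.restrict hV))
        (Matrix.of fun i j => (bV.repr (⟨T (bW j) - bW j, h (bW j)⟩ : V)) i) 0 1 := by
    ext (i | i) (j | j)
    · have h1 : e (bV j, 0) = (bV j : F) := by simp [he, Submodule.coe_prodEquivOfIsCompl']
      have h2 : e.symm (T (bV j)) = (⟨T (bV j), hV _ (bV j).2⟩, 0) := by
        rw [LinearEquiv.symm_apply_eq]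
        simp [he, Submodule.coe_prodEquivOfIsCompl']
      simp [LinearMap.toMatrix_apply, h1, h2, LinearMap.restrict_apply, hb, Basis.prod_repr_inl,
        Basis.prod_apply]
    · have h1 : e (0, bW j) = (bW j : F) := by simp [he, Submodule.coe_prodEquivOfIsCompl']
      have h2 : e.symm (T (bW j)) = (⟨T (bW j) - bW j, h _⟩, bW j) := by
        rw [LinearEquiv.symm_apply_eq]
        simp [he, Submodule.coe_prodEquivOfIsCompl']
      simp [LinearMap.toMatrix_apply, h1, h2, hb, Basis.prod_repr_inl, Basis.prod_apply]
    · have h1 : e (bV j, 0) = (bV j : F) := by simp [he, Submodule.coe_prodEquivOfIsCompl']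
      have h2 : e.symm (T (bV j)) = (⟨T (bV j), hV _ (bV j).2⟩, 0) := by
        rw [LinearEquiv.symm_apply_eq]
        simp [he, Submodule.coe_prodEquivOfIsCompl']
      simp [LinearMap.toMatrix_apply, h1, h2, hb, Basis.prod_repr_inr, Basis.prod_apply]
    · have h1 : e (0, bW j) = (bW j : F) := by simp [he, Submodule.coe_prodEquivOfIsCompl']
      have h2 : e.symm (T (bW j)) = (⟨T (bW j) - bW j, h _⟩, bW j) := by
        rw [LinearEquiv.symm_apply_eq]
        simp [he, Submodule.coe_prodEquivOfIsCompl']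
      simp [LinearMap.toMatrix_apply, h1, h2, hb, Basis.prod_repr_inr, Basis.prod_apply,
        Matrix.one_apply, Basis.repr_self, Finsupp.single_apply, eq_comm]
  calc LinearMap.det T = LinearMap.det (e.symm.toLinearMap ∘ₗ T ∘ₗ e.toLinearMap) := by
        rw [show e.symm.toLinearMap ∘ₗ T ∘ₗ e.toLinearMap
            = (e.symm : F →ₗ[ℝ] (V × Vᗮ)) ∘ₗ T ∘ₗ ((e.symm).symm : (V × Vᗮ) →ₗ[ℝ] F) by rfl,
          LinearMap.det_conj]
    _ = Matrix.det (LinearMap.toMatrix b b (e.symm.toLinearMap ∘ₗ T ∘ₗ e.toLinearMap)) := by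
        rw [LinearMap.det_toMatrix]
    _ = LinearMap.det (T.restrict hV) := by
        rw [key, Matrix.det_fromBlocks_zero₂₁, Matrix.det_one, mul_one, LinearMap.det_toMatrix]

private lemma abs_det_le_pow_of_norm_le' {F : Type*} [NormedAddCommGroup F]
    [InnerProductSpace ℝ F] [FiniteDimensional ℝ F] (T : F →ₗ[ℝ] F) (C : ℝ) (hC : 0 ≤ C)
    (h : ∀ x, ‖T x‖ ≤ C * ‖x‖) :
    |LinearMap.det T| ≤ C ^ (finrank ℝ F) := by
  set S : F →ₗ[ℝ] F := LinearMap.adjoint T * T with hS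
  have hsym : S.IsSymmetric := LinearMap.isSymmetric_adjoint_mul_self T
  have hn : finrank ℝ F = finrank ℝ F := rfl
  set b := hsym.eigenvectorBasis hn with hb
  set μ := hsym.eigenvalues hn with hμ
  have hmat : LinearMap.toMatrix b.toBasis b.toBasis S = Matrix.diagonal μ := by
    ext i j
    rw [LinearMap.toMatrix_apply]
    have h0 : S (b.toBasis j) = μ j • b.toBasis j := by
      rw [show b.toBasis j = b j from by rw [OrthonormalBasis.coe_toBasis]]
      exact hsym.apply_eigenvectorBasis hn j
    rw [h0, map_smul, Basis.repr_self, Finsupp.smul_apply, Finsupp.single_apply,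
      Matrix.diagonal_apply]
    by_cases hij : i = j <;> simp [hij, eq_comm]
  have hdetS : LinearMap.det S = ∏ i, μ i := by
    rw [← LinearMap.det_toMatrix b.toBasis, hmat, Matrix.det_diagonal]
  have hnn : ∀ i, 0 ≤ μ i := fun i =>
    eigenvalue_nonneg_of_nonneg (hsym.hasEigenvalue_eigenvalues hn i)
      (LinearMap.re_inner_adjoint_mul_self_nonneg T)
  have hub : ∀ i, μ i ≤ C ^ 2 := by
    intro i
    have hev := hsym.hasEigenvector_eigenvectorBasis hn i
    have hvne : (b i : F) ≠ 0 := hev.2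
    have happ : S (b i) = μ i • b i := hsym.apply_eigenvectorBasis hn i
    have h1 : μ i * ‖(b i : F)‖ ^ 2 = ‖T (b i)‖ ^ 2 := by
      have : inner ℝ (b i) (S (b i)) = μ i * (‖(b i : F)‖ : ℝ) ^ 2 := by
        rw [happ, inner_smul_right, real_inner_self_eq_norm_sq]
      rw [← this, hS]
      simp only [Module.End.mul_apply, LinearMap.adjoint_inner_right]
      rw [real_inner_self_eq_norm_sq]
    have h2 : ‖T (b i)‖ ^ 2 ≤ (C * ‖(b i : F)‖) ^ 2 := by
      have := h (b i)
      have hnorm : (0:ℝ) ≤ ‖T (b i)‖ := norm_nonneg _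
      nlinarith
    have hb2 : (0:ℝ) < ‖(b i : F)‖ ^ 2 := by
      have : (0:ℝ) < ‖(b i : F)‖ := norm_pos_iff.mpr hvne
      positivity
    nlinarith [h1, h2]
  have hadj : LinearMap.det (LinearMap.adjoint T) = LinearMap.det T := by
    rw [← LinearMap.det_toMatrix b.toBasis, LinearMap.toMatrix_adjoint b b,
      Matrix.det_conjTranspose, star_trivial, LinearMap.det_toMatrix]
  have hsq : (LinearMap.det T) ^ 2 = ∏ i, μ i := by
    rw [← hdetS, hS, Module.End.mul_eq_comp, LinearMap.det_comp, hadj, sq]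
  have hprod : ∏ i, μ i ≤ (C ^ (finrank ℝ F)) ^ 2 := by
    calc ∏ i, μ i ≤ ∏ _i : Fin (finrank ℝ F), C ^ 2 :=
          Finset.prod_le_prod (fun i _ => hnn i) (fun i _ => hub i)
      _ = (C ^ (finrank ℝ F)) ^ 2 := by
          rw [Finset.prod_const, Finset.card_univ, Fintype.card_fin, ← pow_mul, ← pow_mul,
            Nat.mul_comm]
  have h1 : |LinearMap.det T| ^ 2 ≤ (C ^ (finrank ℝ F)) ^ 2 := by
    rw [sq_abs, hsq]; exact hprod
  have h2 : (0:ℝ) ≤ C ^ (finrank ℝ F) := by positivity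
  nlinarith [abs_nonneg (LinearMap.det T)]

private lemma mem_spectrum_of_eigen' {n : ℕ}
    {A : EuclideanSpace ℝ (Fin n) →L[ℝ] EuclideanSpace ℝ (Fin n)}
    {μ : ℝ} {v : EuclideanSpace ℝ (Fin n)} (hv : v ≠ 0) (hAv : A v = μ • v) :
    μ ∈ spectrum ℝ A := by
  rw [spectrum.mem_iff]
  intro hu
  have hzero : ((algebraMap ℝ _) μ - A) v = 0 := by
    simp [Algebra.algebraMap_eq_smul_one, hAv]
  set u := hu.unit with hu'
  have hval : (u : EuclideanSpace ℝ (Fin n) →L[ℝ] EuclideanSpace ℝ (Fin n))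
      = (algebraMap ℝ _) μ - A := hu.unit_spec
  apply hv
  have h1 : ((↑u⁻¹ * ↑u : EuclideanSpace ℝ (Fin n) →L[ℝ] EuclideanSpace ℝ (Fin n))) v = v := by
    rw [Units.inv_mul]; rfl
  have h2 : ((↑u⁻¹ * ↑u : EuclideanSpace ℝ (Fin n) →L[ℝ] EuclideanSpace ℝ (Fin n))) v = 0 := by
    rw [ContinuousLinearMap.mul_apply, hval, hzero, map_zero]
  exact h1.symm.trans h2

private lemma resolvent_lower_bound' {n : ℕ}
    (H : EuclideanSpace ℝ (Fin n) →L[ℝ] EuclideanSpace ℝ (Fin n))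
    (hsa : IsSelfAdjoint H) (E : ℝ) (x : EuclideanSpace ℝ (Fin n)) :
    Metric.infDist E (spectrum ℝ H) * ‖x‖ ≤ ‖(H - E • 1) x‖ := by
  set d := Metric.infDist E (spectrum ℝ H) with hd
  have hd0 : 0 ≤ d := Metric.infDist_nonneg
  have hsym : (↑H : EuclideanSpace ℝ (Fin n) →ₗ[ℝ] EuclideanSpace ℝ (Fin n)).IsSymmetric :=
    (ContinuousLinearMap.isSelfAdjoint_iff_isSymmetric).mp hsa
  have hn : finrank ℝ (EuclideanSpace ℝ (Fin n)) = n := finrank_euclideanSpace_fin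
  set b := hsym.eigenvectorBasis hn with hb
  set μ := hsym.eigenvalues hn with hμ
  have hdist : ∀ i, d ≤ |E - μ i| := by
    intro i
    have hev := hsym.hasEigenvector_eigenvectorBasis hn i
    have hmem : μ i ∈ spectrum ℝ H := by
      refine mem_spectrum_of_eigen' hev.2 ?_
      exact_mod_cast hsym.apply_eigenvectorBasis hn i
    simpa [Real.dist_eq] using Metric.infDist_le_dist_of_mem hmem
  have hrepr : ∀ i, b.repr ((H - E • 1) x) i = (μ i - E) * b.repr x i := by
    intro i
    have h1 : b.repr (H x) i = μ i * b.repr x i := by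
      have := hsym.eigenvectorBasis_apply_self_apply hn x i
      simpa using this
    have : (H - E • 1) x = H x - E • x := by
      simp [ContinuousLinearMap.sub_apply, ContinuousLinearMap.smul_apply]
    rw [this, map_sub, map_smul]
    simp [h1]
    ring
  have hx : ‖x‖ = ‖b.repr x‖ := (b.repr.norm_map x).symm
  have hy : ‖(H - E • 1) x‖ = ‖b.repr ((H - E • 1) x)‖ := (b.repr.norm_map _).symm
  have hsq : (d * ‖x‖) ^ 2 ≤ ‖(H - E • 1) x‖ ^ 2 := by
    rw [hx, hy, EuclideanSpace.norm_eq, EuclideanSpace.norm_eq]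
    rw [Real.sq_sqrt (by positivity), mul_pow, Real.sq_sqrt (by positivity)]
    rw [Finset.mul_sum]
    apply Finset.sum_le_sum
    intro i _
    rw [hrepr i]
    have h1 := hdist i
    have h2 : |E - μ i| = |μ i - E| := abs_sub_comm _ _
    rw [h2] at h1
    have := abs_nonneg (μ i - E)
    have hre : ‖(b.repr x) i‖ ^ 2 = (b.repr x i) ^ 2 := by
      rw [Real.norm_eq_abs, sq_abs]
    have hre2 : ‖((μ i - E) * b.repr x i : ℝ)‖ ^ 2 = ((μ i - E) * b.repr x i) ^ 2 := by
      rw [Real.norm_eq_abs, sq_abs]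
    rw [hre, hre2, mul_pow]
    have : d ^ 2 ≤ (μ i - E) ^ 2 := by nlinarith [sq_abs (μ i - E)]
    nlinarith [sq_nonneg (b.repr x i)]
  nlinarith [norm_nonneg ((H - E • 1) x), mul_nonneg hd0 (norm_nonneg x)]

end AuxLemmas

set_option maxHeartbeats 2000000 in
theorem stmt_7 (n : ℕ)
    (H₁ H₂ : EuclideanSpace ℝ (Fin n) →L[ℝ] EuclideanSpace ℝ (Fin n))
    (h₁ : IsSelfAdjoint H₁) (h₂ : IsSelfAdjoint H₂) (E : ℝ)
    (hE₁ : E ∉ spectrum ℝ H₁) (hE₂ : E ∉ spectrum ℝ H₂) :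
    Real.log (abs (LinearMap.det ((H₁ - E • 1 :
        EuclideanSpace ℝ (Fin n) →L[ℝ] EuclideanSpace ℝ (Fin n)) :
        EuclideanSpace ℝ (Fin n) →ₗ[ℝ] EuclideanSpace ℝ (Fin n)))) -
      Real.log (abs (LinearMap.det ((H₂ - E • 1 :
        EuclideanSpace ℝ (Fin n) →L[ℝ] EuclideanSpace ℝ (Fin n)) :
        EuclideanSpace ℝ (Fin n) →ₗ[ℝ] EuclideanSpace ℝ (Fin n)))) ≤
    4 * (Module.finrank ℝ (LinearMap.range ((H₁ - H₂ :
        EuclideanSpace ℝ (Fin n) →L[ℝ] EuclideanSpace ℝ (Fin n)) :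
        EuclideanSpace ℝ (Fin n) →ₗ[ℝ] EuclideanSpace ℝ (Fin n)))) *
      max (max (Real.log (|E| + ‖H₁‖)) 0)
        (max (-Real.log (Metric.infDist E (spectrum ℝ H₂))) 0) := by
  classical
  -- notation
  set Mx : ℝ := max (max (Real.log (|E| + ‖H₁‖)) 0)
      (max (-Real.log (Metric.infDist E (spectrum ℝ H₂))) 0) with hMx
  have hMx0 : 0 ≤ Mx := le_trans (le_max_right _ 0) (le_max_left _ _)
  have hMa : Real.log (|E| + ‖H₁‖) ≤ Mx := le_trans (le_max_left _ 0) (le_max_left _ _)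
  have hMd : -Real.log (Metric.infDist E (spectrum ℝ H₂)) ≤ Mx :=
    le_trans (le_max_left _ 0) (le_max_right _ _)
  rcases Nat.eq_zero_or_pos n with hn0 | hn0
  · -- trivial case n = 0
    subst hn0
    have hsub : Subsingleton (EuclideanSpace ℝ (Fin 0)) := by infer_instance
    have : ((H₁ - E • 1 : EuclideanSpace ℝ (Fin 0) →L[ℝ] EuclideanSpace ℝ (Fin 0)) :
        EuclideanSpace ℝ (Fin 0) →ₗ[ℝ] EuclideanSpace ℝ (Fin 0)) =
        ((H₂ - E • 1 : EuclideanSpace ℝ (Fin 0) →L[ℝ] EuclideanSpace ℝ (Fin 0)) :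
        EuclideanSpace ℝ (Fin 0) →ₗ[ℝ] EuclideanSpace ℝ (Fin 0)) := Subsingleton.elim _ _
    rw [this, sub_self]
    exact mul_nonneg (mul_nonneg (by norm_num) (Nat.cast_nonneg _)) hMx0
  -- main case
  haveI hMnt : Nontrivial (EuclideanSpace ℝ (Fin n)) := by
    have : 0 < Module.finrank ℝ (EuclideanSpace ℝ (Fin n)) := by
      rw [finrank_euclideanSpace_fin]; exact hn0
    exact Module.nontrivial_of_finrank_pos this
  set D₁ := (H₁ - E • 1 : EuclideanSpace ℝ (Fin n) →L[ℝ] EuclideanSpace ℝ (Fin n)) with hD₁def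
  set D₂ := (H₂ - E • 1 : EuclideanSpace ℝ (Fin n) →L[ℝ] EuclideanSpace ℝ (Fin n)) with hD₂def
  -- invertibility of D₂ and D₁
  have hu₂ : IsUnit D₂ := by
    have h := spectrum.notMem_iff.mp hE₂
    have : D₂ = -((algebraMap ℝ _) E - H₂) := by
      rw [Algebra.algebraMap_eq_smul_one, neg_sub, hD₂def]
    rw [this]
    exact h.neg
  have hu₁ : IsUnit D₁ := by
    have h := spectrum.notMem_iff.mp hE₁
    have : D₁ = -((algebraMap ℝ _) E - H₁) := by
      rw [Algebra.algebraMap_eq_smul_one, neg_sub, hD₁def]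
    rw [this]
    exact h.neg
  set w := hu₂.unit with hw
  have hwval : (w : EuclideanSpace ℝ (Fin n) →L[ℝ] EuclideanSpace ℝ (Fin n)) = D₂ :=
    hu₂.unit_spec
  set R := ((w⁻¹ : _ˣ) : EuclideanSpace ℝ (Fin n) →L[ℝ] EuclideanSpace ℝ (Fin n)) with hR
  have hD₂R : D₂ * R = 1 := by rw [← hwval, hR, Units.mul_inv]
  have hRD₂ : R * D₂ = 1 := by rw [← hwval, hR, Units.inv_mul]
  set T := D₁ * R with hT
  have hTD₂ : T * D₂ = D₁ := by
    rw [hT, mul_assoc, hRD₂, mul_one]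
  -- coerced linear maps
  set A := (H₁ - H₂ : EuclideanSpace ℝ (Fin n) →L[ℝ] EuclideanSpace ℝ (Fin n)) with hA
  set V := LinearMap.range ((A :  EuclideanSpace ℝ (Fin n) →L[ℝ] EuclideanSpace ℝ (Fin n)) :
      EuclideanSpace ℝ (Fin n) →ₗ[ℝ] EuclideanSpace ℝ (Fin n)) with hV
  set r := Module.finrank ℝ V with hr
  -- T x - x ∈ V
  have hmemT : ∀ x, (T : EuclideanSpace ℝ (Fin n) →ₗ[ℝ] EuclideanSpace ℝ (Fin n)) x - x ∈ V := by
    intro x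
    have hx : x = D₂ (R x) := by
      rw [← ContinuousLinearMap.mul_apply, hD₂R, ContinuousLinearMap.one_apply]
    have h1 : (T : EuclideanSpace ℝ (Fin n) →ₗ[ℝ] EuclideanSpace ℝ (Fin n)) x - x
        = A (R x) := by
      show T x - x = A (R x)
      conv_lhs => rw [hT, ContinuousLinearMap.mul_apply]
      nth_rewrite 2 [hx]
      rw [hD₁def, hD₂def, hA]
      simp only [ContinuousLinearMap.sub_apply, ContinuousLinearMap.smul_apply,
        ContinuousLinearMap.one_apply]
      abel
    rw [h1]
    exact LinearMap.mem_range_self _ _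
  have hVmap : ∀ x ∈ V, (T : EuclideanSpace ℝ (Fin n) →ₗ[ℝ] EuclideanSpace ℝ (Fin n)) x ∈ V := by
    intro x hx
    have := hmemT x
    have h2 : (T : EuclideanSpace ℝ (Fin n) →ₗ[ℝ] EuclideanSpace ℝ (Fin n)) x
        = ((T : EuclideanSpace ℝ (Fin n) →ₗ[ℝ] EuclideanSpace ℝ (Fin n)) x - x) + x := by abel
    rw [h2]
    exact V.add_mem this hx
  -- determinant identities
  have hdet : LinearMap.det (D₁ : EuclideanSpace ℝ (Fin n) →ₗ[ℝ] EuclideanSpace ℝ (Fin n))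
      = LinearMap.det (T : EuclideanSpace ℝ (Fin n) →ₗ[ℝ] EuclideanSpace ℝ (Fin n))
        * LinearMap.det (D₂ : EuclideanSpace ℝ (Fin n) →ₗ[ℝ] EuclideanSpace ℝ (Fin n)) := by
    rw [← LinearMap.det_comp]
    congr 1
    rw [← hTD₂]
    rfl
  have hdet₂ : LinearMap.det (D₂ : EuclideanSpace ℝ (Fin n) →ₗ[ℝ] EuclideanSpace ℝ (Fin n)) ≠ 0 := by
    have hunit : IsUnit (D₂ : EuclideanSpace ℝ (Fin n) →ₗ[ℝ] EuclideanSpace ℝ (Fin n)) := by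
      refine ⟨⟨(D₂ : EuclideanSpace ℝ (Fin n) →ₗ[ℝ] EuclideanSpace ℝ (Fin n)),
        (R : EuclideanSpace ℝ (Fin n) →ₗ[ℝ] EuclideanSpace ℝ (Fin n)), ?_, ?_⟩, rfl⟩
      · exact LinearMap.ext fun x => show D₂ (R x) = x from by
          rw [← ContinuousLinearMap.mul_apply, hD₂R, ContinuousLinearMap.one_apply]
      · exact LinearMap.ext fun x => show R (D₂ x) = x from by
          rw [← ContinuousLinearMap.mul_apply, hRD₂, ContinuousLinearMap.one_apply]
    exact IsUnit.ne_zero (LinearMap.isUnit_det _ hunit)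
  have hdet₁ : LinearMap.det (D₁ : EuclideanSpace ℝ (Fin n) →ₗ[ℝ]
      EuclideanSpace ℝ (Fin n)) ≠ 0 := by
    obtain ⟨w₁, hw₁⟩ := hu₁
    set R₁ := ((w₁⁻¹ : _ˣ) : EuclideanSpace ℝ (Fin n) →L[ℝ] EuclideanSpace ℝ (Fin n))
    have h11 : D₁ * R₁ = 1 := by rw [← hw₁, Units.mul_inv]
    have h12 : R₁ * D₁ = 1 := by rw [← hw₁, Units.inv_mul]
    have hunit : IsUnit (D₁ : EuclideanSpace ℝ (Fin n) →ₗ[ℝ] EuclideanSpace ℝ (Fin n)) := by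
      refine ⟨⟨(D₁ : EuclideanSpace ℝ (Fin n) →ₗ[ℝ] EuclideanSpace ℝ (Fin n)),
        (R₁ : EuclideanSpace ℝ (Fin n) →ₗ[ℝ] EuclideanSpace ℝ (Fin n)), ?_, ?_⟩, rfl⟩
      · exact LinearMap.ext fun x => show D₁ (R₁ x) = x from by
          rw [← ContinuousLinearMap.mul_apply, h11, ContinuousLinearMap.one_apply]
      · exact LinearMap.ext fun x => show R₁ (D₁ x) = x from by
          rw [← ContinuousLinearMap.mul_apply, h12, ContinuousLinearMap.one_apply]
    exact IsUnit.ne_zero (LinearMap.isUnit_det _ hunit)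
  have hdetT : LinearMap.det (T : EuclideanSpace ℝ (Fin n) →ₗ[ℝ]
      EuclideanSpace ℝ (Fin n)) ≠ 0 := by
    intro h0
    rw [hdet, h0, zero_mul] at hdet₁
    exact hdet₁ rfl
  -- LHS = log |det T|
  have hLHS : Real.log (abs (LinearMap.det (D₁ : EuclideanSpace ℝ (Fin n) →ₗ[ℝ]
        EuclideanSpace ℝ (Fin n)))) -
      Real.log (abs (LinearMap.det (D₂ : EuclideanSpace ℝ (Fin n) →ₗ[ℝ]
        EuclideanSpace ℝ (Fin n)))) =
      Real.log (abs (LinearMap.det (T : EuclideanSpace ℝ (Fin n) →ₗ[ℝ]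
        EuclideanSpace ℝ (Fin n)))) := by
    rw [hdet, abs_mul, Real.log_mul (by positivity) (by positivity)]
    ring
  -- distance positivity
  set d := Metric.infDist E (spectrum ℝ H₂) with hd
  have hd0 : 0 < d := by
    have hclosed : IsClosed (spectrum ℝ H₂) := spectrum.isClosed H₂
    have hne : (spectrum ℝ H₂).Nonempty := by
      have hsym : (↑H₂ : EuclideanSpace ℝ (Fin n) →ₗ[ℝ]
          EuclideanSpace ℝ (Fin n)).IsSymmetric :=
        (ContinuousLinearMap.isSelfAdjoint_iff_isSymmetric).mp h₂
      have hfin : Module.finrank ℝ (EuclideanSpace ℝ (Fin n)) = n := finrank_euclideanSpace_fin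
      have hev := hsym.hasEigenvector_eigenvectorBasis hfin ⟨0, hn0⟩
      refine ⟨hsym.eigenvalues hfin ⟨0, hn0⟩, mem_spectrum_of_eigen' hev.2 ?_⟩
      exact_mod_cast hsym.apply_eigenvectorBasis hfin ⟨0, hn0⟩
    exact (hclosed.notMem_iff_infDist_pos hne).mp hE₂
  -- norm bounds
  have hRnorm : ‖R‖ ≤ d⁻¹ := by
    refine ContinuousLinearMap.opNorm_le_bound _ (by positivity) fun y => ?_
    have h1 := resolvent_lower_bound' H₂ h₂ E (R y)
    rw [← hD₂def] at h1
    have h2 : D₂ (R y) = y := by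
      rw [← ContinuousLinearMap.mul_apply, hD₂R, ContinuousLinearMap.one_apply]
    rw [h2] at h1
    calc ‖R y‖ = d⁻¹ * (d * ‖R y‖) := by field_simp
      _ ≤ d⁻¹ * ‖y‖ := by
          have hdi : (0:ℝ) ≤ d⁻¹ := by positivity
          exact mul_le_mul_of_nonneg_left h1 hdi
  have haD₁ : ‖D₁‖ ≤ |E| + ‖H₁‖ := by
    rw [hD₁def]
    refine le_trans (norm_sub_le _ _) ?_
    have h1 : ‖(E • 1 : EuclideanSpace ℝ (Fin n) →L[ℝ] EuclideanSpace ℝ (Fin n))‖ = |E| := by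
      rw [← Algebra.algebraMap_eq_smul_one, norm_algebraMap', Real.norm_eq_abs]
    rw [h1]
    linarith
  -- restriction and determinant bound
  have hdet_restrict : LinearMap.det (T : EuclideanSpace ℝ (Fin n) →ₗ[ℝ]
      EuclideanSpace ℝ (Fin n)) = LinearMap.det
      ((T : EuclideanSpace ℝ (Fin n) →ₗ[ℝ] EuclideanSpace ℝ (Fin n)).restrict hVmap) :=
    det_restrict_of_sub_mem' V _ hmemT hVmap
  set C : ℝ := (|E| + ‖H₁‖) * d⁻¹ with hC
  have hCnn : 0 ≤ C := by
    have h1 : (0:ℝ) ≤ |E| + ‖H₁‖ := by positivity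
    positivity
  have habs : |LinearMap.det ((T : EuclideanSpace ℝ (Fin n) →ₗ[ℝ]
      EuclideanSpace ℝ (Fin n)).restrict hVmap)| ≤ C ^ r := by
    rw [hr]
    refine abs_det_le_pow_of_norm_le' _ C hCnn fun v => ?_
    have h0 : ‖((T : EuclideanSpace ℝ (Fin n) →ₗ[ℝ]
        EuclideanSpace ℝ (Fin n)).restrict hVmap) v‖ = ‖T (v : EuclideanSpace ℝ (Fin n))‖ := rfl
    have h0' : ‖v‖ = ‖(v : EuclideanSpace ℝ (Fin n))‖ := rfl
    rw [h0, h0']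
    have h1 : ‖T (v : EuclideanSpace ℝ (Fin n))‖ ≤ ‖D₁‖ * (‖R‖ * ‖(v : EuclideanSpace ℝ (Fin n))‖) := by
      rw [hT, ContinuousLinearMap.mul_apply]
      refine le_trans (D₁.le_opNorm _) ?_
      have := R.le_opNorm (v : EuclideanSpace ℝ (Fin n))
      have := ContinuousLinearMap.opNorm_nonneg D₁
      nlinarith
    refine le_trans h1 ?_
    rw [hC]
    have hRnn : (0:ℝ) ≤ ‖R‖ := norm_nonneg _
    have hD₁nn : (0:ℝ) ≤ ‖D₁‖ := norm_nonneg _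
    have hvnn : (0:ℝ) ≤ ‖(v : EuclideanSpace ℝ (Fin n))‖ := norm_nonneg _
    have hdinv : (0:ℝ) ≤ d⁻¹ := by positivity
    nlinarith [mul_le_mul haD₁ hRnorm hRnn (by positivity : (0:ℝ) ≤ |E| + ‖H₁‖)]
  -- conclude
  rw [hLHS]
  have hTabs : 0 < |LinearMap.det (T : EuclideanSpace ℝ (Fin n) →ₗ[ℝ]
      EuclideanSpace ℝ (Fin n))| := abs_pos.mpr hdetT
  rcases Nat.eq_zero_or_pos r with hr0 | hrpos
  · -- rank zero
    have : |LinearMap.det (T : EuclideanSpace ℝ (Fin n) →ₗ[ℝ]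
        EuclideanSpace ℝ (Fin n))| ≤ 1 := by
      rw [hdet_restrict]
      calc |LinearMap.det ((T : EuclideanSpace ℝ (Fin n) →ₗ[ℝ]
          EuclideanSpace ℝ (Fin n)).restrict hVmap)| ≤ C ^ r := habs
        _ = 1 := by rw [hr0, pow_zero]
    have hlog : Real.log (abs (LinearMap.det (T : EuclideanSpace ℝ (Fin n) →ₗ[ℝ]
        EuclideanSpace ℝ (Fin n)))) ≤ 0 := Real.log_nonpos (abs_nonneg _) this
    refine le_trans hlog ?_
    rw [hr0]
    simp
  · -- positive rank
    have hCpos : 0 < C := by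
      rcases lt_or_eq_of_le hCnn with h | h
      · exact h
      · exfalso
        rw [hdet_restrict] at hTabs
        have : (C:ℝ) ^ r = 0 := by rw [← h, zero_pow (by omega : r ≠ 0)]
        rw [this] at habs
        linarith
    have hlog1 : Real.log (abs (LinearMap.det (T : EuclideanSpace ℝ (Fin n) →ₗ[ℝ]
        EuclideanSpace ℝ (Fin n)))) ≤ r * Real.log C := by
      rw [hdet_restrict]
      calc Real.log (abs (LinearMap.det ((T : EuclideanSpace ℝ (Fin n) →ₗ[ℝ]
            EuclideanSpace ℝ (Fin n)).restrict hVmap)))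
          ≤ Real.log (C ^ r) := by
            apply Real.log_le_log _ habs
            rw [← hdet_restrict]
            exact hTabs
        _ = r * Real.log C := by rw [Real.log_pow]
    have hlogC : Real.log C ≤ Real.log (|E| + ‖H₁‖) + (- Real.log d) := by
      have hapos : 0 < |E| + ‖H₁‖ := by
        by_contra hneg
        push_neg at hneg
        have : (|E| + ‖H₁‖) * d⁻¹ ≤ 0 := by
          have : (0:ℝ) ≤ d⁻¹ := by positivity
          nlinarith
        linarith [hCpos]
      rw [hC, Real.log_mul (ne_of_gt hapos) (by positivity), Real.log_inv]
    have hfinal : Real.log (abs (LinearMap.det (T : EuclideanSpace ℝ (Fin n) →ₗ[ℝ]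
        EuclideanSpace ℝ (Fin n)))) ≤ (r : ℝ) * (2 * Mx) := by
      refine le_trans hlog1 ?_
      have h2 : Real.log C ≤ 2 * Mx := by
        refine le_trans hlogC ?_
        linarith [hMa, hMd]
      have : (0:ℝ) ≤ (r:ℝ) := Nat.cast_nonneg r
      nlinarith [h2, Real.log_le_log (by positivity) (le_refl C)]
    refine le_trans hfinal ?_
    have : (0:ℝ) ≤ (r:ℝ) := Nat.cast_nonneg r
    nlinarith [hMx0]
end

section
/- Let A, B be self-adjoint operators on an N-dimensional inner product space with r = rank(A − B), and let E₁^A ≤ … ≤ E_N^A and E₁^B ≤ … ≤ E_N^B be their eigenvalues in increasing order. Then E_j^A ≤ E_{j+r}^B for all 1 ≤ j ≤ N − r, and E_{j−r}^B ≤ E_j^A for all r + 1 ≤ j ≤ N. -/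
open Finset Module

local notation "⟪" x ", " y "⟫" => @inner ℝ _ _ x y

private lemma quad_lb {E : Type*} [NormedAddCommGroup E] [InnerProductSpace ℝ E]
    {ι : Type*} [Fintype ι] (v : ι → E) (hv : Orthonormal ℝ v) (T : E →ₗ[ℝ] E) (μ : ι → ℝ)
    (hTv : ∀ i, T (v i) = μ i • v i) (c : ℝ) (hc : ∀ i, c ≤ μ i)
    {x : E} (hx : x ∈ Submodule.span ℝ (Set.range v)) :
    c * ‖x‖ ^ 2 ≤ ⟪x, T x⟫ := by
  obtain ⟨d, rfl⟩ := (Submodule.mem_span_range_iff_exists_fun ℝ).mp hx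
  have hTx : T (∑ i, d i • v i) = ∑ i, (μ i * d i) • v i := by
    rw [map_sum]
    refine Finset.sum_congr rfl fun i _ => ?_
    rw [map_smul, hTv, smul_smul, mul_comm]
  have h1 : ⟪(∑ i, d i • v i), T (∑ i, d i • v i)⟫ = ∑ i, d i * (μ i * d i) := by
    rw [hTx, hv.inner_sum]
    simp
  have h2 : ‖(∑ i, d i • v i)‖ ^ 2 = ∑ i, d i * d i := by
    rw [← real_inner_self_eq_norm_sq, hv.inner_sum]
    simp
  rw [h1, h2, Finset.mul_sum]
  refine Finset.sum_le_sum fun i _ => ?_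
  have : c * (d i * d i) ≤ μ i * (d i * d i) :=
    mul_le_mul_of_nonneg_right (hc i) (mul_self_nonneg _)
  nlinarith

private lemma quad_ub {E : Type*} [NormedAddCommGroup E] [InnerProductSpace ℝ E]
    {ι : Type*} [Fintype ι] (v : ι → E) (hv : Orthonormal ℝ v) (T : E →ₗ[ℝ] E) (μ : ι → ℝ)
    (hTv : ∀ i, T (v i) = μ i • v i) (c : ℝ) (hc : ∀ i, μ i ≤ c)
    {x : E} (hx : x ∈ Submodule.span ℝ (Set.range v)) :
    ⟪x, T x⟫ ≤ c * ‖x‖ ^ 2 := by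
  have := quad_lb v hv (-T) (fun i => -μ i) (fun i => by simp [hTv]) (-c)
    (fun i => neg_le_neg (hc i)) hx
  have h2 : ⟪x, (-T) x⟫ = -⟪x, T x⟫ := by simp
  rw [h2] at this
  linarith

private lemma rank_neg' {N : ℕ} (M : Matrix (Fin N) (Fin N) ℝ) : (-M).rank = M.rank := by
  unfold Matrix.rank
  have : (-M).mulVecLin = -M.mulVecLin := by
    ext x
    simp [Matrix.neg_mulVec]
  rw [this, LinearMap.range_neg]

set_option maxHeartbeats 1000000 in
private theorem weyl_half (N : ℕ) (A B : Matrix (Fin N) (Fin N) ℝ)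
    (hA : A.IsHermitian) (hB : B.IsHermitian)
    (a b : Fin N → ℝ) (ha : Monotone a) (hb : Monotone b)
    (haA : ∃ σ : Equiv.Perm (Fin N), a = hA.eigenvalues ∘ σ)
    (hbB : ∃ σ : Equiv.Perm (Fin N), b = hB.eigenvalues ∘ σ)
    (j k : Fin N) (hjk : (j : ℕ) + (A - B).rank = (k : ℕ)) : a j ≤ b k := by
  classical
  obtain ⟨σ, rfl⟩ := haA
  obtain ⟨τ, rfl⟩ := hbB
  set r := (A - B).rank with hr
  set a : Fin N → ℝ := hA.eigenvalues ∘ σ with ha'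
  set b : Fin N → ℝ := hB.eigenvalues ∘ τ with hb'
  set u : Fin N → EuclideanSpace ℝ (Fin N) := fun i => hA.eigenvectorBasis (σ i) with hudef
  set w : Fin N → EuclideanSpace ℝ (Fin N) := fun i => hB.eigenvectorBasis (τ i) with hwdef
  have hu : Orthonormal ℝ u := hA.eigenvectorBasis.orthonormal.comp _ σ.injective
  have hw : Orthonormal ℝ w := hB.eigenvectorBasis.orthonormal.comp _ τ.injective
  have hAu : ∀ i, Matrix.toEuclideanLin A (u i) = a i • u i := by
    intro i
    have := hA.mulVec_eigenvectorBasis (σ i)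
    apply (WithLp.equiv 2 (Fin N → ℝ)).injective
    simpa [Matrix.toEuclideanLin_apply, hudef, ha'] using this
  have hBw : ∀ i, Matrix.toEuclideanLin B (w i) = b i • w i := by
    intro i
    have := hB.mulVec_eigenvectorBasis (τ i)
    apply (WithLp.equiv 2 (Fin N → ℝ)).injective
    simpa [Matrix.toEuclideanLin_apply, hwdef, hb'] using this
  set U := Submodule.span ℝ
    (Set.range (u ∘ (Subtype.val : {i : Fin N // i ∈ Finset.Ici j} → Fin N))) with hUdef
  set V := Submodule.span ℝ
    (Set.range (w ∘ (Subtype.val : {i : Fin N // i ∈ Finset.Iic k} → Fin N))) with hVdef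
  set K := LinearMap.ker (Matrix.toEuclideanLin (A - B)) with hKdef
  have hEdim : finrank ℝ (EuclideanSpace ℝ (Fin N)) = N := by simp
  have hUdim : finrank ℝ U = N - (j : ℕ) := by
    rw [hUdef, finrank_span_eq_card ((hu.comp _ Subtype.val_injective).linearIndependent),
      Fintype.card_of_subtype (Finset.Ici j) (fun x => Iff.rfl), Fin.card_Ici]
  have hVdim : finrank ℝ V = (k : ℕ) + 1 := by
    rw [hVdef, finrank_span_eq_card ((hw.comp _ Subtype.val_injective).linearIndependent),
      Fintype.card_of_subtype (Finset.Iic k) (fun x => Iff.rfl), Fin.card_Iic]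
  have hKdim : finrank ℝ K + r = N := by
    have h1 := LinearMap.finrank_range_add_finrank_ker (Matrix.toEuclideanLin (A - B))
    have h2 : r = finrank ℝ (LinearMap.range (Matrix.toEuclideanLin (A - B))) := by
      rw [hr, Matrix.toEuclideanLin_eq_toLin]
      exact Matrix.rank_eq_finrank_range_toLin (A - B) _ _
    rw [hEdim] at h1
    rw [hKdef]
    omega
  have hsum1 : finrank ℝ U + finrank ℝ V ≤ finrank ℝ ↥(U ⊓ V) + N := by
    rw [← Submodule.finrank_sup_add_finrank_inf_eq]
    have h := Submodule.finrank_le (U ⊔ V)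
    rw [hEdim] at h
    omega
  have hsum2 : finrank ℝ ↥(U ⊓ V) + finrank ℝ K ≤ finrank ℝ ↥(U ⊓ V ⊓ K) + N := by
    rw [← Submodule.finrank_sup_add_finrank_inf_eq]
    have h := Submodule.finrank_le (U ⊓ V ⊔ K)
    rw [hEdim] at h
    omega
  have hk : (k : ℕ) < N := k.isLt
  have hpos : 0 < finrank ℝ ↥(U ⊓ V ⊓ K) := by omega
  obtain ⟨x, hx0⟩ := Module.finrank_pos_iff_exists_ne_zero.mp hpos
  obtain ⟨⟨hxU, hxV⟩, hxK⟩ := x.2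
  have hy0 : (x : EuclideanSpace ℝ (Fin N)) ≠ 0 := fun h => hx0 (Subtype.ext h)
  have hnorm : (0 : ℝ) < ‖(x : EuclideanSpace ℝ (Fin N))‖ ^ 2 :=
    pow_pos (norm_pos_iff.mpr hy0) 2
  have lb : a j * ‖(x : EuclideanSpace ℝ (Fin N))‖ ^ 2 ≤
      ⟪(x : EuclideanSpace ℝ (Fin N)), Matrix.toEuclideanLin A (x : EuclideanSpace ℝ (Fin N))⟫ :=
    quad_lb (u ∘ (Subtype.val : {i : Fin N // i ∈ Finset.Ici j} → Fin N))
      (hu.comp _ Subtype.val_injective) (Matrix.toEuclideanLin A)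
      (a ∘ Subtype.val) (fun i => hAu i) (a j) (fun i => ha (Finset.mem_Ici.mp i.2)) hxU
  have ub : ⟪(x : EuclideanSpace ℝ (Fin N)),
      Matrix.toEuclideanLin B (x : EuclideanSpace ℝ (Fin N))⟫ ≤
      b k * ‖(x : EuclideanSpace ℝ (Fin N))‖ ^ 2 :=
    quad_ub (w ∘ (Subtype.val : {i : Fin N // i ∈ Finset.Iic k} → Fin N))
      (hw.comp _ Subtype.val_injective) (Matrix.toEuclideanLin B)
      (b ∘ Subtype.val) (fun i => hBw i) (b k) (fun i => hb (Finset.mem_Iic.mp i.2)) hxV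
  have heq : Matrix.toEuclideanLin A (x : EuclideanSpace ℝ (Fin N)) =
      Matrix.toEuclideanLin B (x : EuclideanSpace ℝ (Fin N)) := by
    have h0 : Matrix.toEuclideanLin (A - B) (x : EuclideanSpace ℝ (Fin N)) = 0 := hxK
    rw [map_sub] at h0
    have h1 : (Matrix.toEuclideanLin A - Matrix.toEuclideanLin B)
        (x : EuclideanSpace ℝ (Fin N)) = 0 := h0
    rw [LinearMap.sub_apply, sub_eq_zero] at h1
    exact h1
  rw [heq] at lb
  have := lb.trans ub
  exact le_of_mul_le_mul_right (by linarith) hnorm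

theorem stmt_8 (N : ℕ) (A B : Matrix (Fin N) (Fin N) ℝ)
    (hA : A.IsHermitian) (hB : B.IsHermitian)
    (a b : Fin N → ℝ) (ha : Monotone a) (hb : Monotone b)
    (haA : ∃ σ : Equiv.Perm (Fin N), a = hA.eigenvalues ∘ σ)
    (hbB : ∃ σ : Equiv.Perm (Fin N), b = hB.eigenvalues ∘ σ) :
    ∀ j k : Fin N, (j : ℕ) + (A - B).rank = (k : ℕ) → a j ≤ b k ∧ b j ≤ a k := by
  intro j k hjk
  have hrk : (B - A).rank = (A - B).rank := by
    rw [← neg_sub A B, rank_neg']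
  constructor
  · exact weyl_half N A B hA hB a b ha hb haA hbB j k hjk
  · exact weyl_half N B A hB hA b a hb ha hbB haA j k (by rw [hrk]; exact hjk)
end

section
/- Let M₁, …, M_N be W × W real matrices, and let A_N be the NW × NW block-tridiagonal matrix with diagonal blocks M₁, …, M_N and off-diagonal blocks −I (i.e., A_N has M_k in the k-th diagonal block position and −I in the blocks immediately above and below the diagonal). Then det A_N equals the determinant of the top-left W × W block of the product ∏_{k=N}^{1} [[M_k, −I], [I, 0]] of 2W × 2W block matrices (the product taken in order with index k decreasing from N to 1). -/
open Matrix Polynomial Finset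

variable {R : Type*} [CommRing R] {W : ℕ}

def PP (M : ℕ → Matrix (Fin W) (Fin W) R) : ℕ → Matrix (Fin W) (Fin W) R × Matrix (Fin W) (Fin W) R
  | 0 => (1, 0)
  | n+1 => (M n * (PP M n).1 - (PP M n).2, (PP M n).1)

theorem transfer_prod (M : ℕ → Matrix (Fin W) (Fin W) R) (n : ℕ) :
    ∃ C D, (List.ofFn fun k : Fin n =>
      (Matrix.fromBlocks (M k) (-1) 1 0 : Matrix (Fin W ⊕ Fin W) (Fin W ⊕ Fin W) R)).reverse.prod
      = Matrix.fromBlocks (PP M n).1 C (PP M n).2 D := by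
  induction n with
  | zero => exact ⟨0, 1, by simp [PP, Matrix.fromBlocks_one]⟩
  | succ n ih =>
    obtain ⟨C, D, h⟩ := ih
    refine ⟨M n * C - D, C, ?_⟩
    rw [List.ofFn_succ']
    simp only [List.concat_eq_append, List.reverse_append, List.reverse_cons, List.reverse_nil,
      List.nil_append, List.singleton_append, List.prod_cons, Fin.coe_castSucc, Fin.val_last]
    rw [h, Matrix.fromBlocks_multiply]
    simp [PP, sub_eq_add_neg]

def Amat (N W : ℕ) (M : ℕ → Matrix (Fin W) (Fin W) R) :
    Matrix (Fin N × Fin W) (Fin N × Fin W) R :=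
  fun p q => if (p.1 : ℕ) = (q.1 : ℕ) then M p.1 p.2 q.2
    else if (p.1 : ℕ) + 1 = (q.1 : ℕ) ∨ (q.1 : ℕ) + 1 = (p.1 : ℕ) then
      (if p.2 = q.2 then -1 else 0) else 0

noncomputable def Bb (M : ℕ → Matrix (Fin W) (Fin W) ℝ) (i j : ℕ) : Matrix (Fin W) (Fin W) ℝ :=
  if i ≤ j then (PP M i).1 * ((PP M j).1)⁻¹ else 0

noncomputable def Bm (N : ℕ) (M : ℕ → Matrix (Fin W) (Fin W) ℝ) :
    Matrix (Fin N × Fin W) (Fin N × Fin W) ℝ :=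
  fun p q => Bb M p.1 q.1 p.2 q.2

lemma sum_fin_ite {N : ℕ} {α : Type*} [AddCommMonoid α] (g : Fin N → α) (m : ℕ) :
    ∑ k : Fin N, (if (k : ℕ) = m then g k else 0) = if h : m < N then g ⟨m, h⟩ else 0 := by
  split
  · next h =>
    rw [Finset.sum_eq_single ⟨m, h⟩]
    · simp
    · intro b _ hb
      simp only [ite_eq_right_iff]
      intro hbm; exact absurd (Fin.ext hbm) hb
    · simp
  · next h =>
    apply Finset.sum_eq_zero
    intro k _
    simp only [ite_eq_right_iff]
    intro hk; exact absurd (hk ▸ k.isLt) h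

lemma sum_if_const {α β : Type*} [Fintype α] [AddCommMonoid β] (c : Prop) [Decidable c]
    (f : α → β) : ∑ z : α, (if c then f z else 0) = if c then ∑ z, f z else 0 := by
  split <;> simp

lemma AB_entry (N : ℕ) (M : ℕ → Matrix (Fin W) (Fin W) ℝ) (i j : Fin N)
    (hij : (i : ℕ) ≤ (j : ℕ)) (x y : Fin W) :
    (Amat N W M * Bm N M) (i, x) (j, y)
      = ((PP M ((i : ℕ) + 1)).1 * ((PP M (j : ℕ)).1)⁻¹ - Bb M ((i : ℕ) + 1) (j : ℕ)) x y := by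
  rw [Matrix.mul_apply, Fintype.sum_prod_type]
  have hsplit : ∀ (k : Fin N) (z : Fin W),
      Amat N W M (i, x) (k, z) * Bm N M (k, z) (j, y)
      = (if (k : ℕ) = (i : ℕ) then M (i : ℕ) x z * Bb M (i : ℕ) (j : ℕ) z y else 0)
      + (if (k : ℕ) = (i : ℕ) + 1 then
          (if x = z then (-1 : ℝ) else 0) * Bb M ((i : ℕ) + 1) (j : ℕ) z y else 0)
      + (if (k : ℕ) + 1 = (i : ℕ) then
          (if x = z then (-1 : ℝ) else 0) * Bb M ((i : ℕ) - 1) (j : ℕ) z y else 0) := by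
    intro k z
    simp only [Amat, Bm]
    by_cases h1 : (i : ℕ) = (k : ℕ)
    · have hik : i = k := Fin.ext h1
      subst hik
      have e1 : ¬((i:ℕ) = (i:ℕ)+1) := by omega
      have e2 : ¬((i:ℕ)+1 = (i:ℕ)) := by omega
      simp [e1, e2]
    · have h1' : ¬((k:ℕ) = (i:ℕ)) := fun h => h1 h.symm
      by_cases h2 : (i : ℕ) + 1 = (k : ℕ)
      · have e1 : ¬((k:ℕ)+1 = (i:ℕ)) := by omega
        rw [if_neg h1, if_pos (Or.inl h2), if_pos h2.symm, if_neg h1', if_neg e1, ← h2]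
        simp
      · by_cases h3 : (k : ℕ) + 1 = (i : ℕ)
        · have e1 : ¬((k:ℕ) = (i:ℕ)+1) := by omega
          rw [if_neg h1, if_pos (Or.inr h3), if_pos h3, if_neg h1', if_neg e1,
            show (k : ℕ) = (i : ℕ) - 1 by omega]
          simp
        · have e1 : ¬((k:ℕ) = (i:ℕ)+1) := by omega
          rw [if_neg h1, if_neg (by push_neg; exact ⟨h2, h3⟩), if_neg h1', if_neg e1, if_neg h3]
          simp
  simp only [hsplit]
  simp only [Finset.sum_add_distrib, sum_if_const]
  have hjN := j.isLt
  have hiN := i.isLt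
  have e1 : ∑ k : Fin N, (if (k : ℕ) = (i : ℕ) then ∑ z, M (i:ℕ) x z * Bb M (i:ℕ) (j:ℕ) z y else 0)
      = (M (i:ℕ) * Bb M (i:ℕ) (j:ℕ)) x y := by
    rw [sum_fin_ite, dif_pos hiN, Matrix.mul_apply]
  have e2 : ∑ k : Fin N, (if (k : ℕ) = (i : ℕ) + 1 then
        ∑ z, (if x = z then (-1:ℝ) else 0) * Bb M ((i:ℕ)+1) (j:ℕ) z y else 0)
      = -Bb M ((i:ℕ)+1) (j:ℕ) x y := by
    have hz : ∑ z, (if x = z then (-1:ℝ) else 0) * Bb M ((i:ℕ)+1) (j:ℕ) z y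
        = -Bb M ((i:ℕ)+1) (j:ℕ) x y := by
      simp only [ite_mul, neg_one_mul, zero_mul, Finset.sum_ite_eq, Finset.mem_univ, if_pos]
    rw [sum_fin_ite]
    split
    · exact hz
    · next h =>
      rw [Bb, if_neg (by omega)]
      simp
  have e3 : ∑ k : Fin N, (if (k : ℕ) + 1 = (i : ℕ) then
        ∑ z, (if x = z then (-1:ℝ) else 0) * Bb M ((i:ℕ)-1) (j:ℕ) z y else 0)
      = -((PP M (i:ℕ)).2 * ((PP M (j:ℕ)).1)⁻¹) x y := by
    by_cases hi0 : (i:ℕ) = 0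
    · rw [hi0]
      simp [PP]
    · obtain ⟨m, hm⟩ : ∃ m, (i:ℕ) = m + 1 := ⟨(i:ℕ)-1, by omega⟩
      rw [hm]
      simp only [show ∀ k : ℕ, (k + 1 = m + 1) ↔ (k = m) from fun k => by omega]
      rw [sum_fin_ite, dif_pos (show m < N by omega), Nat.add_sub_cancel]
      have hmj : m ≤ (j:ℕ) := by omega
      have hsnd : (PP M (m+1)).2 = (PP M m).1 := rfl
      rw [hsnd]
      simp only [ite_mul, neg_one_mul, zero_mul, Finset.sum_ite_eq, Finset.mem_univ, if_pos,
        Bb, if_pos hmj]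
  rw [e1, e2, e3]
  rw [Bb, if_pos hij, show (PP M ((i:ℕ)+1)).1 = M (i:ℕ) * (PP M (i:ℕ)).1 - (PP M (i:ℕ)).2 from rfl,
    Matrix.sub_mul, ← Matrix.mul_assoc]
  simp only [Matrix.sub_apply, Matrix.mul_apply]
  ring

lemma det_squareBlock {N : ℕ} {β : Type*} [DecidableEq β]
    (C : Matrix (Fin N × Fin W) (Fin N × Fin W) ℝ) (φ : Fin N → β)
    (hφ : Function.Injective φ) (k : Fin N) :
    (C.toSquareBlock (fun p => φ p.1) (φ k)).det
      = (Matrix.of fun x y => C (k, x) (k, y)).det := by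
  let e : Fin W ≃ {p : Fin N × Fin W // φ p.1 = φ k} :=
    { toFun := fun x => ⟨(k, x), rfl⟩
      invFun := fun p => p.1.2
      left_inv := fun x => rfl
      right_inv := fun p => by
        obtain ⟨⟨a, b⟩, h⟩ := p
        have : a = k := hφ h
        subst this
        rfl }
  rw [← Matrix.det_submatrix_equiv_self e ((C.toSquareBlock (fun p => φ p.1) (φ k)))]
  congr 1

lemma det_Bm {N : ℕ} (M : ℕ → Matrix (Fin W) (Fin W) ℝ)
    (h : ∀ k ≤ N, IsUnit ((PP M k).1).det) : (Bm N M).det = 1 := by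
  have ht : (Bm N M).BlockTriangular Prod.fst := by
    intro p q hpq
    have hle : ¬((p.1 : ℕ) ≤ (q.1 : ℕ)) := not_le.2 hpq
    simp [Bm, Bb, hle]
  rw [ht.det_fintype]
  apply Finset.prod_eq_one
  intro k _
  have hid := det_squareBlock (Bm N M) id (fun a b h => h) k
  rw [show (Prod.fst : Fin N × Fin W → Fin N) = fun p => id p.1 from rfl]
  rw [show ((Bm N M).toSquareBlock (fun p => id p.1) k).det
      = ((Bm N M).toSquareBlock (fun p => id p.1) (id k)).det from rfl, hid]
  have h1 : (Matrix.of fun x y => Bm N M (k, x) (k, y)) = Bb M (k:ℕ) (k:ℕ) := by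
    ext x y; rfl
  rw [h1, Bb, if_pos le_rfl, Matrix.mul_nonsing_inv _ (h _ (Nat.le_of_lt k.isLt)),
    Matrix.det_one]

lemma telescope (d : ℕ → ℝ) (h0 : d 0 = 1) :
    ∀ n, (∀ k, k < n → d k ≠ 0) →
      ∏ k ∈ Finset.range n, (d (k+1) * (d k)⁻¹) = d n := by
  intro n
  induction n with
  | zero => simp [h0]
  | succ n ih =>
    intro h
    rw [Finset.prod_range_succ, ih (fun k hk => h k (by omega))]
    have hn : d n ≠ 0 := h n (by omega)
    field_simp

theorem det_Amat_units {N : ℕ} (M : ℕ → Matrix (Fin W) (Fin W) ℝ)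
    (h : ∀ k ≤ N, IsUnit ((PP M k).1).det) :
    (Amat N W M).det = ((PP M N).1).det := by
  have hB := det_Bm M h
  have ht : (Amat N W M * Bm N M).BlockTriangular (fun p => OrderDual.toDual p.1) := by
    intro p q hpq
    obtain ⟨i, x⟩ := p; obtain ⟨j, y⟩ := q
    have hij : (i : ℕ) < (j : ℕ) := OrderDual.toDual_lt_toDual.mp hpq
    rw [AB_entry N M i j hij.le x y, Bb, if_pos (show (i:ℕ)+1 ≤ (j:ℕ) by omega)]
    simp [Matrix.sub_apply]
  have hdet : (Amat N W M).det * (Bm N M).det = (Amat N W M * Bm N M).det :=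
    (Matrix.det_mul _ _).symm
  rw [hB, mul_one] at hdet
  rw [hdet, ht.det_fintype]
  have hprod : ∀ k : Fin N,
      (((Amat N W M * Bm N M)).toSquareBlock (fun p => OrderDual.toDual p.1)
        (OrderDual.toDual k)).det
      = ((PP M ((k:ℕ)+1)).1).det * (((PP M (k:ℕ)).1).det)⁻¹ := by
    intro k
    rw [det_squareBlock _ _ (OrderDual.toDual.injective) k]
    have hmat : (Matrix.of fun x y => (Amat N W M * Bm N M) (k, x) (k, y))
        = (PP M ((k:ℕ)+1)).1 * ((PP M (k:ℕ)).1)⁻¹ := by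
      ext x y
      rw [Matrix.of_apply, AB_entry N M k k le_rfl x y, Bb,
        if_neg (show ¬((k:ℕ)+1 ≤ (k:ℕ)) by omega)]
      simp [Matrix.sub_apply]
    rw [hmat, Matrix.det_mul, Matrix.det_nonsing_inv, Ring.inverse_eq_inv']
  rw [← Fintype.prod_equiv OrderDual.toDual
    (fun k : Fin N => ((Amat N W M * Bm N M).toSquareBlock
      (fun p => OrderDual.toDual p.1) (OrderDual.toDual k)).det) _ (fun x => rfl)]
  simp only [hprod]
  rw [Fin.prod_univ_eq_prod_range (fun k => ((PP M (k+1)).1).det * (((PP M k).1).det)⁻¹) N]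
  exact telescope _ (by simp [PP]) N (fun k hk => (h k hk.le).ne_zero)

-- ## Polynomial machinery

lemma deg_add_lt {p q : ℝ[X]} {d : WithBot ℕ} (hp : p.degree < d) (hq : q.degree < d) :
    (p + q).degree < d :=
  lt_of_le_of_lt (Polynomial.degree_add_le p q) (max_lt hp hq)

lemma deg_sub_lt' {p q : ℝ[X]} {d : WithBot ℕ} (hp : p.degree < d) (hq : q.degree < d) :
    (p - q).degree < d :=
  lt_of_le_of_lt (Polynomial.degree_sub_le p q) (max_lt hp hq)

lemma prod_X_pow_add {ι : Type*} [DecidableEq ι] {n : ℕ} (s : Finset ι) (e : ι → ℝ[X])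
    (he : ∀ i ∈ s, (e i).degree < (n : WithBot ℕ)) :
    ((∏ i ∈ s, ((X : ℝ[X])^n + e i)) - X^(n * s.card)).degree
      < ((n * s.card : ℕ) : WithBot ℕ) := by
  induction s using Finset.induction_on with
  | empty => simpa using WithBot.bot_lt_coe 0
  | insert a s ha ih =>
    have hQ := ih (fun i hi => he i (Finset.mem_insert_of_mem hi))
    have hea := he a (Finset.mem_insert_self a s)
    rw [Finset.prod_insert ha, Finset.card_insert_of_notMem ha]
    have hQle : (∏ i ∈ s, ((X : ℝ[X])^n + e i)).degree ≤ ((n * s.card : ℕ) : WithBot ℕ) := by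
      have := Polynomial.degree_add_le
        ((∏ i ∈ s, ((X : ℝ[X])^n + e i)) - X^(n * s.card)) (X^(n * s.card))
      rw [sub_add_cancel] at this
      refine this.trans (max_le hQ.le ?_)
      rw [Polynomial.degree_X_pow]
    have key : ((X : ℝ[X])^n + e a) * (∏ i ∈ s, ((X : ℝ[X])^n + e i)) - X^(n * (s.card + 1))
        = X^n * ((∏ i ∈ s, ((X : ℝ[X])^n + e i)) - X^(n * s.card))
          + e a * (∏ i ∈ s, ((X : ℝ[X])^n + e i)) := by
      rw [Nat.mul_add, Nat.mul_one, pow_add]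
      ring
    rw [key]
    apply deg_add_lt
    · refine lt_of_le_of_lt (Polynomial.degree_mul_le _ _) ?_
      rw [Polynomial.degree_X_pow]
      calc ((n : WithBot ℕ))
            + ((∏ i ∈ s, ((X : ℝ[X])^n + e i)) - X^(n * s.card)).degree
          < (n : WithBot ℕ) + ((n * s.card : ℕ) : WithBot ℕ) :=
            WithBot.add_lt_add_left (by exact_mod_cast WithBot.coe_ne_bot) hQ
        _ = ((n * (s.card + 1) : ℕ) : WithBot ℕ) := by
            rw [← Nat.cast_add]
            congr 1
            ring
    · refine lt_of_le_of_lt (Polynomial.degree_mul_le _ _) ?_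
      calc (e a).degree + (∏ i ∈ s, ((X : ℝ[X])^n + e i)).degree
          < (n : WithBot ℕ) + ((n * s.card : ℕ) : WithBot ℕ) :=
            by
              rcases eq_or_ne (∏ i ∈ s, ((X : ℝ[X])^n + e i)).degree ⊥ with h0 | h0
              · rw [h0, WithBot.add_bot, ← Nat.cast_add]; exact WithBot.bot_lt_coe _
              · exact WithBot.add_lt_add_of_lt_of_le h0 hea hQle
        _ = ((n * (s.card + 1) : ℕ) : WithBot ℕ) := by
            rw [← Nat.cast_add]
            congr 1
            ring

lemma sum_deg_le {ι : Type*} (s : Finset ι) (f : ι → WithBot ℕ) (n : ℕ)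
    (h : ∀ i ∈ s, f i ≤ (n : WithBot ℕ)) :
    ∑ i ∈ s, f i ≤ ((s.card * n : ℕ) : WithBot ℕ) := by
  classical
  induction s using Finset.induction_on with
  | empty => simp
  | insert a s ha ih =>
    rw [Finset.sum_insert ha, Finset.card_insert_of_notMem ha]
    calc f a + ∑ i ∈ s, f i
        ≤ (n : WithBot ℕ) + ((s.card * n : ℕ) : WithBot ℕ) :=
          add_le_add (h a (Finset.mem_insert_self a s))
            (ih (fun i hi => h i (Finset.mem_insert_of_mem hi)))
      _ = (((s.card + 1) * n : ℕ) : WithBot ℕ) := by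
          rw [← Nat.cast_add]
          congr 1
          ring

lemma det_X_pow_add {n : ℕ} (A : Matrix (Fin W) (Fin W) ℝ[X])
    (h : ∀ i j, (A i j - if i = j then (X : ℝ[X])^n else 0).degree < (n : WithBot ℕ)) :
    A.det ≠ 0 := by
  have hbound : ∀ i j, (A i j).degree ≤ (n : WithBot ℕ) := by
    intro i j
    have h2 := Polynomial.degree_add_le (A i j - if i = j then (X : ℝ[X])^n else 0)
      (if i = j then (X : ℝ[X])^n else 0)
    rw [sub_add_cancel] at h2
    refine h2.trans (max_le (h i j).le ?_)
    split
    · rw [Polynomial.degree_X_pow]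
    · simp
  have main : (A.det - X^(n*W)).degree < ((n*W : ℕ) : WithBot ℕ) := by
    rw [Matrix.det_apply']
    rw [← Finset.add_sum_erase _ _ (Finset.mem_univ (1 : Equiv.Perm (Fin W)))]
    have hterm1 : ((Equiv.Perm.sign (1 : Equiv.Perm (Fin W)) : ℤ) : ℝ[X])
        * ∏ i, A ((1 : Equiv.Perm (Fin W)) i) i = ∏ i, A i i := by
      simp
    rw [hterm1, add_sub_right_comm]
    apply deg_add_lt
    · have hprod := prod_X_pow_add (n := n) Finset.univ (fun i => A i i - X^n)
        (fun i _ => by simpa using h i i)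
      simp only [add_sub_cancel, Finset.card_univ, Fintype.card_fin] at hprod
      exact hprod
    · refine lt_of_le_of_lt (Polynomial.degree_sum_le _ _) ?_
      rw [Finset.sup_lt_iff (WithBot.bot_lt_coe _)]
      intro σ hσ
      have hσ1 : σ ≠ 1 := (Finset.mem_erase.mp hσ).1
      obtain ⟨i₀, hi₀⟩ : ∃ i, σ i ≠ i := by
        by_contra hc
        push_neg at hc
        exact hσ1 (Equiv.ext fun x => hc x)
      have hW : 0 < W := i₀.pos
      refine lt_of_le_of_lt (Polynomial.degree_mul_le _ _) ?_
      have hsign : (((Equiv.Perm.sign σ : ℤ) : ℝ[X])).degree ≤ 0 := Polynomial.degree_intCast_le _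
      have hprod : (∏ i, A (σ i) i).degree < ((n*W : ℕ) : WithBot ℕ) := by
        rw [← Finset.mul_prod_erase Finset.univ _ (Finset.mem_univ i₀)]
        refine lt_of_le_of_lt (Polynomial.degree_mul_le _ _) ?_
        have hfirst : (A (σ i₀) i₀).degree < (n : WithBot ℕ) := by
          have := h (σ i₀) i₀
          rwa [if_neg hi₀, sub_zero] at this
        have hrest : (∏ i ∈ Finset.univ.erase i₀, A (σ i) i).degree
            ≤ (((W - 1) * n : ℕ) : WithBot ℕ) := by
          refine le_trans (Polynomial.degree_prod_le _ _) ?_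
          have := sum_deg_le (Finset.univ.erase i₀) (fun i => (A (σ i) i).degree) n
            (fun i _ => hbound (σ i) i)
          rwa [Finset.card_erase_of_mem (Finset.mem_univ i₀), Finset.card_univ,
            Fintype.card_fin] at this
        calc (A (σ i₀) i₀).degree + (∏ i ∈ Finset.univ.erase i₀, A (σ i) i).degree
            < (n : WithBot ℕ) + (((W - 1) * n : ℕ) : WithBot ℕ) :=
              by
                rcases eq_or_ne (∏ i ∈ Finset.univ.erase i₀, A (σ i) i).degree ⊥ with h0 | h0
                · rw [h0, WithBot.add_bot, ← Nat.cast_add]; exact WithBot.bot_lt_coe _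
                · exact WithBot.add_lt_add_of_lt_of_le h0 hfirst hrest
          _ = ((n * W : ℕ) : WithBot ℕ) := by
              rw [← Nat.cast_add]
              congr 1
              have : W - 1 + 1 = W := Nat.succ_pred_eq_of_pos hW
              calc n + (W - 1) * n = (W - 1 + 1) * n := by ring
                _ = n * W := by rw [this]; ring
      calc (((Equiv.Perm.sign σ : ℤ) : ℝ[X])).degree + (∏ i, A (σ i) i).degree
          ≤ 0 + (∏ i, A (σ i) i).degree := add_le_add_left hsign _
        _ = (∏ i, A (σ i) i).degree := by rw [zero_add]
        _ < ((n*W : ℕ) : WithBot ℕ) := hprod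
  intro h0
  rw [h0, zero_sub, Polynomial.degree_neg, Polynomial.degree_X_pow] at main
  exact lt_irrefl _ main

noncomputable def Mx (M : ℕ → Matrix (Fin W) (Fin W) ℝ) : ℕ → Matrix (Fin W) (Fin W) ℝ[X] :=
  fun k => (M k).map (Polynomial.C) + (X : ℝ[X]) • 1

lemma deg_le_of_sub_lt {p q : ℝ[X]} {d : WithBot ℕ} (h : (p - q).degree < d)
    (hq : q.degree ≤ d) : p.degree ≤ d := by
  have h2 := Polynomial.degree_add_le (p - q) q
  rw [sub_add_cancel] at h2
  exact h2.trans (max_le h.le hq)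

lemma PP_deg (M : ℕ → Matrix (Fin W) (Fin W) ℝ) (n : ℕ) :
    (∀ i j, ((PP (Mx M) n).1 i j - (if i = j then (X : ℝ[X])^n else 0)).degree
      < (n : WithBot ℕ))
    ∧ (∀ i j, ((PP (Mx M) n).2 i j).degree < (n : WithBot ℕ)) := by
  induction n with
  | zero =>
    constructor <;> intro i j
    · have h0 : (PP (Mx M) 0).1 i j - (if i = j then (X : ℝ[X])^0 else 0) = 0 := by
        show (1 : Matrix (Fin W) (Fin W) ℝ[X]) i j - _ = 0
        rw [Matrix.one_apply, pow_zero]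
        split_ifs <;> simp
      rw [h0, Polynomial.degree_zero]
      exact WithBot.bot_lt_coe 0
    · show ((0 : Matrix (Fin W) (Fin W) ℝ[X]) i j).degree < _
      simpa using WithBot.bot_lt_coe 0
  | succ n ih =>
    obtain ⟨ih1, ih2⟩ := ih
    set P := (PP (Mx M) n).1 with hP
    set Q := (PP (Mx M) n).2 with hQ
    have hcast : (n : WithBot ℕ) < ((n+1 : ℕ) : WithBot ℕ) := by
      exact_mod_cast Nat.lt_succ_self n
    have hPle : ∀ i j, (P i j).degree ≤ (n : WithBot ℕ) := by
      intro i j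
      refine deg_le_of_sub_lt (ih1 i j) ?_
      split
      · rw [Polynomial.degree_X_pow]
      · simp
    have hmul : ∀ i j, ((Mx M n * P) i j)
        = (∑ z, Polynomial.C (M n i z) * P z j) + X * P i j := by
      intro i j
      rw [Matrix.mul_apply]
      have hz : ∀ z, Mx M n i z * P z j
          = Polynomial.C (M n i z) * P z j + (if i = z then X * P z j else 0) := by
        intro z
        simp only [Mx, Matrix.add_apply, Matrix.map_apply, Matrix.smul_apply, Matrix.one_apply,
          smul_eq_mul, mul_ite, mul_one, mul_zero, add_mul, ite_mul, zero_mul]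
      simp only [hz, Finset.sum_add_distrib, Finset.sum_ite_eq, Finset.mem_univ, if_pos]
    constructor
    · intro i j
      have key : (PP (Mx M) (n+1)).1 i j - (if i = j then (X : ℝ[X])^(n+1) else 0)
          = ((∑ z, Polynomial.C (M n i z) * P z j)
            + X * (P i j - (if i = j then (X : ℝ[X])^n else 0))) - Q i j := by
        have hx : X * (if i = j then (X : ℝ[X])^n else 0)
            = (if i = j then (X : ℝ[X])^(n+1) else 0) := by
          rw [mul_ite, mul_zero, ← pow_succ']
        show (Mx M n * P - Q) i j - _ = _
        rw [Matrix.sub_apply, hmul, mul_sub, hx]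
        ring
      rw [key]
      apply deg_sub_lt'
      · apply deg_add_lt
        · refine lt_of_le_of_lt (Polynomial.degree_sum_le _ _) ?_
          rw [Finset.sup_lt_iff (WithBot.bot_lt_coe _)]
          intro z _
          refine lt_of_le_of_lt (Polynomial.degree_mul_le _ _) ?_
          calc (Polynomial.C (M n i z)).degree + (P z j).degree
              ≤ 0 + (n : WithBot ℕ) := add_le_add Polynomial.degree_C_le (hPle z j)
            _ = (n : WithBot ℕ) := zero_add _
            _ < ((n+1 : ℕ) : WithBot ℕ) := hcast
        · refine lt_of_le_of_lt (Polynomial.degree_mul_le _ _) ?_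
          rw [Polynomial.degree_X]
          calc (1 : WithBot ℕ) + (P i j - (if i = j then (X : ℝ[X])^n else 0)).degree
              < 1 + (n : WithBot ℕ) :=
                WithBot.add_lt_add_left (by exact_mod_cast WithBot.coe_ne_bot) (ih1 i j)
            _ = ((n+1 : ℕ) : WithBot ℕ) := by
                rw [show ((1 : WithBot ℕ)) = ((1 : ℕ) : WithBot ℕ) from rfl, ← Nat.cast_add]
                congr 1
                omega
      · exact lt_trans (ih2 i j) hcast
    · intro i j
      show (P i j).degree < _
      exact lt_of_le_of_lt (hPle i j) hcast

lemma qk_ne_zero (M : ℕ → Matrix (Fin W) (Fin W) ℝ) (n : ℕ) :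
    ((PP (Mx M) n).1).det ≠ 0 :=
  det_X_pow_add _ (PP_deg M n).1

lemma PP_map {S : Type*} [CommRing S] (f : R →+* S) (M : ℕ → Matrix (Fin W) (Fin W) R)
    (n : ℕ) :
    (PP (fun k => (M k).map f) n).1 = ((PP M n).1).map f
    ∧ (PP (fun k => (M k).map f) n).2 = ((PP M n).2).map f := by
  induction n with
  | zero =>
    constructor <;> ext i j <;>
      simp [PP, Matrix.one_apply, apply_ite f, f.map_one, f.map_zero]
  | succ n ih =>
    obtain ⟨ih1, ih2⟩ := ih
    refine ⟨?_, ih1⟩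
    show (M n).map f * (PP (fun k => (M k).map f) n).1 - (PP (fun k => (M k).map f) n).2 = _
    rw [ih1, ih2]
    ext i j
    rw [show (PP M (n+1)).1 = M n * (PP M n).1 - (PP M n).2 from rfl]
    simp [Matrix.sub_apply, Matrix.mul_apply, Matrix.map_apply, _root_.map_sub, map_sum,
      _root_.map_mul]

lemma Amat_map {S : Type*} [CommRing S] (f : R →+* S) (N : ℕ)
    (M : ℕ → Matrix (Fin W) (Fin W) R) :
    (Amat N W M).map f = Amat N W (fun k => (M k).map f) := by
  ext p q
  simp only [Matrix.map_apply, Amat]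
  split_ifs <;> simp

theorem det_Amat (N : ℕ) (M : ℕ → Matrix (Fin W) (Fin W) ℝ) :
    (Amat N W M).det = ((PP M N).1).det := by
  classical
  have hMt : ∀ t : ℝ, (fun k => (Mx M k).map (Polynomial.eval t)) = (fun k => M k + t • 1) := by
    intro t
    funext k
    ext i j
    simp [Mx, Matrix.map_apply, Matrix.add_apply, Matrix.smul_apply, Matrix.one_apply,
      apply_ite (Polynomial.eval t), mul_ite]
  have hP : ∀ (t : ℝ) (n : ℕ), Polynomial.eval t (((PP (Mx M) n).1).det)
      = ((PP (fun k => M k + t • 1) n).1).det := by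
    intro t n
    have hmap := RingHom.map_det (Polynomial.evalRingHom t) ((PP (Mx M) n).1)
    rw [show ((Polynomial.evalRingHom t) (((PP (Mx M) n).1).det))
      = Polynomial.eval t (((PP (Mx M) n).1).det) from rfl] at hmap
    rw [hmap]
    congr 1
    have hfun : (fun k => (Mx M k).map ⇑(Polynomial.evalRingHom t))
        = (fun k => M k + t • 1) := by
      rw [Polynomial.coe_evalRingHom]
      exact hMt t
    have h2 := (PP_map (Polynomial.evalRingHom t) (Mx M) n).1
    rw [hfun] at h2
    rw [show (RingHom.mapMatrix (Polynomial.evalRingHom t)) ((PP (Mx M) n).1)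
      = ((PP (Mx M) n).1).map ⇑(Polynomial.evalRingHom t) from rfl]
    exact h2.symm
  have hA : ∀ t : ℝ, Polynomial.eval t ((Amat N W (Mx M)).det)
      = (Amat N W (fun k => M k + t • 1)).det := by
    intro t
    have hmap := RingHom.map_det (Polynomial.evalRingHom t) (Amat N W (Mx M))
    rw [show ((Polynomial.evalRingHom t) ((Amat N W (Mx M)).det))
      = Polynomial.eval t ((Amat N W (Mx M)).det) from rfl] at hmap
    rw [hmap]
    congr 1
    rw [show (RingHom.mapMatrix (Polynomial.evalRingHom t)) (Amat N W (Mx M))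
      = (Amat N W (Mx M)).map ⇑(Polynomial.evalRingHom t) from rfl]
    rw [Amat_map]
    rw [Polynomial.coe_evalRingHom, hMt t]
  set F : ℝ[X] := (Amat N W (Mx M)).det - ((PP (Mx M) N).1).det with hF
  set S : Set ℝ := ⋃ k ∈ Set.Iic N,
    {t : ℝ | Polynomial.IsRoot (((PP (Mx M) k).1).det) t} with hS
  have hfin : S.Finite :=
    Set.Finite.biUnion (Set.finite_Iic N)
      (fun k _ => Polynomial.finite_setOf_isRoot (qk_ne_zero M k))
  have hgood : ∀ t : ℝ, t ∉ S → F.IsRoot t := by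
    intro t ht
    have hunits : ∀ k ≤ N, IsUnit (((PP (fun k => M k + t • 1) k).1).det) := by
      intro k hk
      rw [← hP t k]
      rw [isUnit_iff_ne_zero]
      intro h0
      apply ht
      rw [hS]
      exact Set.mem_biUnion (show k ∈ Set.Iic N from hk) h0
    have hmain := det_Amat_units (W := W) (fun k => M k + t • 1) hunits
    show Polynomial.eval t F = 0
    rw [hF, Polynomial.eval_sub, hA t, hP t N, hmain, sub_self]
  have hF0 : F = 0 := by
    apply Polynomial.eq_zero_of_infinite_isRoot
    apply Set.Infinite.mono (s := Sᶜ)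
    · exact fun t ht => hgood t ht
    · exact hfin.infinite_compl
  have h0 := congrArg (Polynomial.eval 0) hF0
  rw [hF, Polynomial.eval_sub, Polynomial.eval_zero, sub_eq_zero, hA 0, hP 0 N] at h0
  have hM0 : (fun k => M k + (0:ℝ) • 1) = M := by
    funext k
    simp
  rw [hM0] at h0
  exact h0

theorem stmt_9 (N W : ℕ) (M : Fin N → Matrix (Fin W) (Fin W) ℝ)
    (A : Matrix (Fin N × Fin W) (Fin N × Fin W) ℝ)
    (hA : ∀ (i j : Fin N) (x y : Fin W), A (i, x) (j, y) =
      if i = j then M i x y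
      else if (i : ℕ) + 1 = (j : ℕ) ∨ (j : ℕ) + 1 = (i : ℕ) then
        (if x = y then -1 else 0)
      else 0) :
    A.det = (Matrix.toBlocks₁₁
      ((List.ofFn fun k : Fin N =>
        (Matrix.fromBlocks (M k) (-1) 1 0 :
          Matrix (Fin W ⊕ Fin W) (Fin W ⊕ Fin W) ℝ)).reverse.prod)).det := by
  classical
  set M' : ℕ → Matrix (Fin W) (Fin W) ℝ := fun k => if h : k < N then M ⟨k, h⟩ else 0 with hM'
  have hAeq : A = Amat N W M' := by
    ext ⟨i, x⟩ ⟨j, y⟩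
    rw [hA]
    simp only [Amat]
    by_cases hij : i = j
    · subst hij
      simp [M', i.isLt]
    · have hij' : ¬((i : ℕ) = (j : ℕ)) := fun h => hij (Fin.ext h)
      simp [hij, hij']
  obtain ⟨Cc, Dd, hprod⟩ := transfer_prod M' N
  have hlist : (List.ofFn fun k : Fin N =>
      (Matrix.fromBlocks (M k) (-1) 1 0 : Matrix (Fin W ⊕ Fin W) (Fin W ⊕ Fin W) ℝ))
      = (List.ofFn fun k : Fin N =>
      (Matrix.fromBlocks (M' ↑k) (-1) 1 0 : Matrix (Fin W ⊕ Fin W) (Fin W ⊕ Fin W) ℝ)) := by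
    congr 1
    funext k
    congr 1
    simp [M', k.isLt]
  rw [hlist, hprod, Matrix.toBlocks_fromBlocks₁₁, hAeq, det_Amat]
end

section
/- For every W ≥ 1 there exists a basis {u_α} of ∧^W ℝ^{2W}, indexed by the W-element subsets α of {1, …, 2W}, consisting of decomposable vectors u_α = u_{α,1} ∧ … ∧ u_{α,W}, such that: (1) writing the 2W × W matrix [u_α] of the vectors u_{α,i} in block form [A_{u_α}; B_{u_α}] with W × W blocks, one has A_{u_α} = I and ‖B_{u_α}‖ ≤ 1; and (2) every standard basis vector e_β = ∧_{i∈β} e_i of ∧^W ℝ^{2W} is a linear combination of the u_α with all coefficients of absolute value at most 1. -/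
open Matrix Finset

namespace Stmt12

variable {W : ℕ}

abbrev Idx (W : ℕ) := {α : Finset (Fin (W + W)) // α.card = W}

noncomputable section

/-- standard wedge family for a subset β -/
def E (β : Idx W) : Fin W → (Fin (W + W) → ℝ) :=
  fun i => Pi.single ((β.1.orderIsoOfFin β.2) i : Fin (W + W)) (1 : ℝ)

def lowS (α : Finset (Fin (W + W))) : Finset (Fin W) :=
  Finset.univ.filter fun j => Fin.castAdd W j ∉ α

def highT (α : Finset (Fin (W + W))) : Finset (Fin (W + W)) :=
  α.filter fun x => ¬ ((x : ℕ) < W)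

lemma card_highT (α : Idx W) : (highT α.1).card = (lowS α.1).card := by
  classical
  have h1 : (α.1.filter fun x : Fin (W+W) => ((x:ℕ) < W)).card + (highT α.1).card = W := by
    rw [highT, Finset.card_filter_add_card_filter_not, α.2]
  have h2 : ((Finset.univ : Finset (Fin W)).filter fun j => Fin.castAdd W j ∈ α.1).card
      + (lowS α.1).card = W := by
    rw [lowS, Finset.card_filter_add_card_filter_not, Finset.card_univ, Fintype.card_fin]
  have h3 : ((Finset.univ : Finset (Fin W)).filter fun j => Fin.castAdd W j ∈ α.1).card
      = (α.1.filter fun x : Fin (W+W) => ((x:ℕ) < W)).card := by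
    apply Finset.card_bij (fun j _ => Fin.castAdd W j)
    · intro a ha
      simp only [Finset.mem_filter, Finset.mem_univ, true_and] at ha ⊢
      exact ⟨ha, a.isLt⟩
    · intro a _ b _ hab
      exact Fin.castAdd_injective _ _ hab
    · intro x hx
      simp only [Finset.mem_filter] at hx
      refine ⟨⟨(x : ℕ), hx.2⟩, ?_, ?_⟩
      · simp only [Finset.mem_filter, Finset.mem_univ, true_and]
        have he : Fin.castAdd W ⟨(x:ℕ), hx.2⟩ = x := Fin.ext rfl
        rw [he]; exact hx.1
      · exact Fin.ext rfl
  omega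

def phi (α : Idx W) (j : Fin W) : Fin (W + W) :=
  if h : j ∈ lowS α.1 then
    (highT α.1).orderEmbOfFin (card_highT α) (((lowS α.1).orderIsoOfFin rfl).symm ⟨j, h⟩)
  else Fin.castAdd W j

lemma phi_mem {α : Idx W} {j : Fin W} (h : j ∈ lowS α.1) : phi α j ∈ highT α.1 := by
  rw [phi, dif_pos h]
  exact Finset.orderEmbOfFin_mem _ _ _

lemma mem_highT_iff {α : Finset (Fin (W + W))} {x : Fin (W + W)} :
    x ∈ highT α ↔ x ∈ α ∧ ¬ ((x : ℕ) < W) := Finset.mem_filter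

lemma mem_lowS_iff {α : Finset (Fin (W + W))} {j : Fin W} :
    j ∈ lowS α ↔ Fin.castAdd W j ∉ α := by
  simp [lowS]

lemma phi_strictMonoOn {α : Idx W} {j j' : Fin W} (h : j ∈ lowS α.1) (h' : j' ∈ lowS α.1)
    (hlt : j < j') : phi α j < phi α j' := by
  rw [phi, dif_pos h, phi, dif_pos h']
  apply ((highT α.1).orderEmbOfFin (card_highT α)).strictMono
  apply (((lowS α.1).orderIsoOfFin rfl).symm).strictMono
  exact hlt

lemma phi_surjOn {α : Idx W} {x : Fin (W + W)} (hx : x ∈ highT α.1) :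
    ∃ j, ∃ _ : j ∈ lowS α.1, phi α j = x := by
  have : x ∈ Set.range ((highT α.1).orderEmbOfFin (card_highT α)) := by
    rw [Finset.range_orderEmbOfFin]; exact hx
  obtain ⟨m, hm⟩ := this
  refine ⟨((lowS α.1).orderIsoOfFin rfl m : Fin W), (((lowS α.1).orderIsoOfFin rfl) m).2, ?_⟩
  rw [phi, dif_pos ((((lowS α.1).orderIsoOfFin rfl) m).2)]
  rw [Subtype.coe_eta, OrderIso.symm_apply_apply]
  exact hm

/-- the vectors u_α -/
def uv (α : Idx W) : Fin W → (Fin (W + W) → ℝ) := fun j =>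
  if Fin.castAdd W j ∈ α.1 then Pi.single (Fin.castAdd W j) (1 : ℝ)
  else Pi.single (Fin.castAdd W j) 1 + Pi.single (phi α j) 1

lemma monoOn_unique {γ δ : Type*} [LinearOrder γ] [LinearOrder δ] (S : Finset γ) (T : Finset δ)
    (h : T.card = S.card) (F G : γ → δ)
    (hF1 : ∀ j ∈ S, F j ∈ T) (hF2 : ∀ j ∈ S, ∀ j' ∈ S, j < j' → F j < F j')
    (hG1 : ∀ j ∈ S, G j ∈ T) (hG2 : ∀ j ∈ S, ∀ j' ∈ S, j < j' → G j < G j') :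
    ∀ j ∈ S, F j = G j := by
  have hmem := fun m => Finset.orderEmbOfFin_mem S rfl m
  have hF : (fun m : Fin S.card => F (S.orderEmbOfFin rfl m)) = T.orderEmbOfFin h :=
    Finset.orderEmbOfFin_unique h (fun m => hF1 _ (hmem m))
      (fun a b hab => hF2 _ (hmem a) _ (hmem b) ((S.orderEmbOfFin rfl).strictMono hab))
  have hG : (fun m : Fin S.card => G (S.orderEmbOfFin rfl m)) = T.orderEmbOfFin h :=
    Finset.orderEmbOfFin_unique h (fun m => hG1 _ (hmem m))
      (fun a b hab => hG2 _ (hmem a) _ (hmem b) ((S.orderEmbOfFin rfl).strictMono hab))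
  intro j hj
  have : j ∈ Set.range (S.orderEmbOfFin rfl) := by rw [Finset.range_orderEmbOfFin]; exact hj
  obtain ⟨m, rfl⟩ := this
  calc F (S.orderEmbOfFin rfl m) = T.orderEmbOfFin h m := congrFun hF m
  _ = G (S.orderEmbOfFin rfl m) := (congrFun hG m).symm


/-- the coordinate-extraction determinant functional -/
def dfun (β : Idx W) : (Fin (W + W) → ℝ) [⋀^Fin W]→ₗ[ℝ] ℝ :=
  (Matrix.detRowAlternating (n := Fin W) (R := ℝ)).compLinearMap
    (LinearMap.funLeft ℝ ℝ (fun j : Fin W => ((β.1.orderIsoOfFin β.2) j : Fin (W + W))))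

lemma dfun_E (β γ : Idx W) : dfun β (E γ) = if γ = β then 1 else 0 := by
  classical
  rw [dfun, AlternatingMap.compLinearMap_apply]
  by_cases h : γ = β
  · subst h
    rw [if_pos rfl]
    have : (fun i => LinearMap.funLeft ℝ ℝ
        (fun j : Fin W => ((γ.1.orderIsoOfFin γ.2) j : Fin (W + W))) (E γ i))
        = (1 : Matrix (Fin W) (Fin W) ℝ) := by
      funext i j
      simp only [LinearMap.funLeft_apply, E, Matrix.one_apply]
      rw [Pi.single_apply]
      by_cases hij : i = j
      · subst hij; simp
      · rw [if_neg (fun hc => (Ne.symm hij) ((γ.1.orderIsoOfFin γ.2).injective (Subtype.ext hc))),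
          if_neg hij]
    rw [this]
    exact Matrix.det_one
  · rw [if_neg h]
    have hns : ¬ γ.1 ⊆ β.1 := by
      intro hsub
      exact h (Subtype.ext (Finset.eq_of_subset_of_card_le hsub (by rw [β.2, γ.2])))
    obtain ⟨x, hxγ, hxβ⟩ := Finset.not_subset.mp hns
    set i : Fin W := (γ.1.orderIsoOfFin γ.2).symm ⟨x, hxγ⟩ with hi
    apply Matrix.det_eq_zero_of_row_eq_zero i
    intro j
    simp only [LinearMap.funLeft_apply, E]
    rw [Pi.single_apply, if_neg]
    intro hc
    apply hxβ
    have : ((γ.1.orderIsoOfFin γ.2) i : Fin (W + W)) = x := by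
      rw [hi, OrderIso.apply_symm_apply]
    rw [← this, ← hc]
    exact Finset.coe_mem _

def Dmap (β : Idx W) : ExteriorAlgebra ℝ (Fin (W + W) → ℝ) →ₗ[ℝ] ℝ :=
  ExteriorAlgebra.liftAlternating
    (Function.update (fun i => (0 : (Fin (W + W) → ℝ) [⋀^Fin i]→ₗ[ℝ] ℝ)) W (dfun β))

lemma Dmap_ιMulti (β : Idx W) (v : Fin W → (Fin (W + W) → ℝ)) :
    Dmap β (ExteriorAlgebra.ιMulti ℝ W v) = dfun β v := by
  rw [Dmap, ExteriorAlgebra.liftAlternating_apply_ιMulti, Function.update_self]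

lemma indep_E : LinearIndependent ℝ (fun β : Idx W => ExteriorAlgebra.ιMulti ℝ W (E β)) := by
  classical
  rw [Fintype.linearIndependent_iff]
  intro c hc β
  have h := congrArg (Dmap β) hc
  simp only [map_sum, _root_.map_smul, Dmap_ιMulti, dfun_E, map_zero, smul_eq_mul, mul_ite, mul_one,
    mul_zero] at h
  rwa [Finset.sum_ite_eq' Finset.univ β c, if_pos (Finset.mem_univ _)] at h

/-- permutation sign lemma -/
lemma wedge_single_reindex (β : Idx W) (r : Fin W → Fin (W + W)) (hr : Function.Injective r)
    (him : ∀ i, r i ∈ β.1) :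
    ∃ ε : ℝ, |ε| = 1 ∧
      ExteriorAlgebra.ιMulti ℝ W (fun i => Pi.single (r i) (1 : ℝ)) =
        ε • ExteriorAlgebra.ιMulti ℝ W (E β) := by
  classical
  set σ0 : Fin W → Fin W := fun i => (β.1.orderIsoOfFin β.2).symm ⟨r i, him i⟩ with hσ0
  have hinj : Function.Injective σ0 := by
    intro a b hab
    apply hr
    have := (β.1.orderIsoOfFin β.2).symm.injective hab
    exact Subtype.ext_iff.mp this
  set σ : Equiv.Perm (Fin W) := Equiv.ofBijective σ0 (Finite.injective_iff_bijective.mp hinj)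
  have hcomp : (fun i => E β (σ i)) = fun i => Pi.single (r i) (1 : ℝ) := by
    funext i
    simp only [E, σ, Equiv.ofBijective_apply, hσ0, OrderIso.apply_symm_apply]
  refine ⟨((Equiv.Perm.sign σ : ℤ) : ℝ), ?_, ?_⟩
  · rcases Int.units_eq_one_or (Equiv.Perm.sign σ) with h | h <;> simp [h]
  · have hperm := (ExteriorAlgebra.ιMulti ℝ W
      (M := Fin (W + W) → ℝ)).map_perm (E β) σ
    have : (fun i => E β (σ i)) = E β ∘ σ := rfl
    rw [← hcomp, this, hperm, Units.smul_def, Int.cast_smul_eq_zsmul]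


lemma multilinear_incl_excl {ι : Type*} [DecidableEq ι] {M N : Type*} [AddCommGroup M]
    [AddCommGroup N] [Module ℝ M] [Module ℝ N]
    (f : MultilinearMap ℝ (fun _ : ι => M) N) (p : ι → M) (t : Finset ι) :
    ∀ q : ι → M, f (t.piecewise (fun j => p j - q j) q)
      = ∑ s ∈ t.powerset, ((-1 : ℝ) ^ (t.card - s.card)) • f (s.piecewise p q) := by
  classical
  induction t using Finset.induction_on with
  | empty => intro q; simp
  | @insert a t ha ih =>
    intro q
    set X := t.piecewise (fun j => p j - q j) q with hX
    set q' := Function.update q a (p a) with hq'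
    have hins : (insert a t).piecewise (fun j => p j - q j) q
        = Function.update X a (p a - q a) := Finset.piecewise_insert _ _ _ _
    have h2 : Function.update X a (q a) = X := by
      have hXa : X a = q a := Finset.piecewise_eq_of_notMem _ _ _ ha
      rw [← hXa]; exact Function.update_eq_self a X
    have h1 : Function.update X a (p a) = t.piecewise (fun j => p j - q' j) q' := by
      funext j
      by_cases hj : j ∈ t
      · have hja : j ≠ a := fun hc => ha (hc ▸ hj)
        rw [Function.update_of_ne hja, Finset.piecewise_eq_of_mem _ _ _ hj, hX,
          Finset.piecewise_eq_of_mem _ _ _ hj, hq', Function.update_of_ne hja]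
      · by_cases hja : j = a
        · subst hja
          rw [Function.update_self, Finset.piecewise_eq_of_notMem _ _ _ hj, hq',
            Function.update_self]
        · rw [Function.update_of_ne hja, hX, Finset.piecewise_eq_of_notMem _ _ _ hj,
            Finset.piecewise_eq_of_notMem _ _ _ hj, hq', Function.update_of_ne hja]
    have hsub := f.map_update_sub X a (p a) (q a)
    rw [hins, hsub, h1, h2, ih q', ih q, Finset.sum_powerset_insert ha]
    have hc1 : ∀ s ∈ t.powerset, ((-1 : ℝ) ^ ((insert a t).card - s.card)) • f (s.piecewise p q)
        = -(((-1 : ℝ) ^ (t.card - s.card)) • f (s.piecewise p q)) := by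
      intro s hs
      have hsc : s.card ≤ t.card := Finset.card_le_card (Finset.mem_powerset.mp hs)
      rw [Finset.card_insert_of_notMem ha]
      rw [show t.card + 1 - s.card = (t.card - s.card) + 1 by omega, pow_succ]
      rw [mul_comm, ← smul_smul]
      simp
    have hc2 : ∀ s ∈ t.powerset,
        ((-1 : ℝ) ^ ((insert a t).card - (insert a s).card)) • f ((insert a s).piecewise p q)
        = ((-1 : ℝ) ^ (t.card - s.card)) • f (s.piecewise p q') := by
      intro s hs
      have hmem := Finset.mem_powerset.mp hs
      have hsa : a ∉ s := fun hc => ha (hmem hc)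
      have hsc : s.card ≤ t.card := Finset.card_le_card hmem
      have hcards : (insert a t).card - (insert a s).card = t.card - s.card := by
        rw [Finset.card_insert_of_notMem ha, Finset.card_insert_of_notMem hsa]; omega
      have hpw : (insert a s).piecewise p q = s.piecewise p q' := by
        funext j
        by_cases hja : j = a
        · subst hja
          rw [Finset.piecewise_eq_of_mem _ _ _ (Finset.mem_insert_self _ s),
            Finset.piecewise_eq_of_notMem _ _ _ hsa, hq', Function.update_self]
        · by_cases hj : j ∈ s
          · rw [Finset.piecewise_eq_of_mem _ _ _ (Finset.mem_insert_of_mem hj),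
              Finset.piecewise_eq_of_mem _ _ _ hj]
          · have : j ∉ insert a s := by simp [hja, hj]
            rw [Finset.piecewise_eq_of_notMem _ _ _ this,
              Finset.piecewise_eq_of_notMem _ _ _ hj, hq', Function.update_of_ne hja]
      rw [hcards, hpw]
    rw [Finset.sum_congr rfl hc1, Finset.sum_congr rfl hc2]
    rw [Finset.sum_neg_distrib]
    abel


def rfn (β : Idx W) (s : Finset (Fin W)) : Fin W → Fin (W + W) := fun j =>
  if j ∈ s then phi β j else Fin.castAdd W j

lemma castAdd_lt (j : Fin W) : ((Fin.castAdd W j : Fin (W + W)) : ℕ) < W := j.isLt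

lemma phi_injOn {β : Idx W} {j j' : Fin W} (hj : j ∈ lowS β.1) (hj' : j' ∈ lowS β.1)
    (h : phi β j = phi β j') : j = j' := by
  rcases lt_trichotomy j j' with hlt | heq | hlt
  · exact absurd h (ne_of_lt (phi_strictMonoOn hj hj' hlt))
  · exact heq
  · exact absurd h.symm (ne_of_lt (phi_strictMonoOn hj' hj hlt))

lemma phi_high_or_cast {β : Idx W} (j : Fin W) :
    (j ∈ lowS β.1 ∧ ¬ ((phi β j : ℕ) < W)) ∨ (j ∉ lowS β.1 ∧ phi β j = Fin.castAdd W j) := by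
  by_cases h : j ∈ lowS β.1
  · exact Or.inl ⟨h, (mem_highT_iff.mp (phi_mem h)).2⟩
  · exact Or.inr ⟨h, by rw [phi, dif_neg h]⟩

lemma rfn_injective (β : Idx W) (s : Finset (Fin W)) : Function.Injective (rfn β s) := by
  intro j j' h
  simp only [rfn] at h
  have hcast : Function.Injective (Fin.castAdd (n := W) W) := fun a b hab =>
    Fin.castAdd_injective _ _ hab
  by_cases hj : j ∈ s <;> by_cases hj' : j' ∈ s
  · rw [if_pos hj, if_pos hj'] at h
    rcases phi_high_or_cast (β := β) j with ⟨hl, hh⟩ | ⟨hl, he⟩ <;>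
      rcases phi_high_or_cast (β := β) j' with ⟨hl', hh'⟩ | ⟨hl', he'⟩
    · exact phi_injOn hl hl' h
    · rw [he'] at h; exact absurd (castAdd_lt j') (h ▸ hh)
    · rw [he] at h; exact absurd (h ▸ castAdd_lt j) hh'
    · rw [he, he'] at h; exact hcast h
  · rw [if_pos hj, if_neg hj'] at h
    rcases phi_high_or_cast (β := β) j with ⟨hl, hh⟩ | ⟨hl, he⟩
    · exact absurd (castAdd_lt j') (h ▸ hh)
    · rw [he] at h; exact hcast h
  · rw [if_neg hj, if_pos hj'] at h
    rcases phi_high_or_cast (β := β) j' with ⟨hl', hh'⟩ | ⟨hl', he'⟩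
    · exact absurd (h ▸ castAdd_lt j) hh'
    · rw [he'] at h; exact hcast h
  · rw [if_neg hj, if_neg hj'] at h; exact hcast h

def AI (β : Idx W) (s : Finset (Fin W)) : Idx W :=
  ⟨Finset.image (rfn β s) Finset.univ, by
    rw [Finset.card_image_of_injective _ (rfn_injective β s), Finset.card_univ,
      Fintype.card_fin]⟩

lemma mem_AI_castAdd {β : Idx W} {s : Finset (Fin W)} (hs : s ⊆ lowS β.1) (j : Fin W) :
    Fin.castAdd W j ∈ (AI β s).1 ↔ j ∉ s := by
  constructor
  · intro hmem hj
    obtain ⟨j', _, hj'⟩ := Finset.mem_image.mp hmem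
    rw [rfn] at hj'
    by_cases h' : j' ∈ s
    · rw [if_pos h'] at hj'
      exact (mem_highT_iff.mp (phi_mem (hs h'))).2 (hj' ▸ castAdd_lt j)
    · rw [if_neg h'] at hj'
      exact h' (Fin.castAdd_injective _ _ hj' ▸ hj)
  · intro hj
    apply Finset.mem_image.mpr
    exact ⟨j, Finset.mem_univ j, by rw [rfn, if_neg hj]⟩

lemma lowS_AI {β : Idx W} {s : Finset (Fin W)} (hs : s ⊆ lowS β.1) :
    lowS (AI β s).1 = s := by
  ext j
  rw [mem_lowS_iff, mem_AI_castAdd hs, not_not]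

lemma highT_AI {β : Idx W} {s : Finset (Fin W)} (hs : s ⊆ lowS β.1) :
    highT (AI β s).1 = s.image (phi β) := by
  ext x
  rw [mem_highT_iff]
  constructor
  · rintro ⟨hx, hW⟩
    obtain ⟨j, _, hj⟩ := Finset.mem_image.mp hx
    rw [rfn] at hj
    by_cases h' : j ∈ s
    · rw [if_pos h'] at hj
      exact Finset.mem_image.mpr ⟨j, h', hj⟩
    · rw [if_neg h'] at hj
      exact absurd (hj ▸ castAdd_lt j) hW
  · intro hx
    obtain ⟨j, hj, rfl⟩ := Finset.mem_image.mp hx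
    refine ⟨Finset.mem_image.mpr ⟨j, Finset.mem_univ j, by rw [rfn, if_pos hj]⟩, ?_⟩
    exact (mem_highT_iff.mp (phi_mem (hs hj))).2

lemma phi_AI_eq {β : Idx W} {s : Finset (Fin W)} (hs : s ⊆ lowS β.1) :
    ∀ j ∈ s, phi (AI β s) j = phi β j := by
  have hcard : (s.image (phi β)).card = s.card :=
    Finset.card_image_of_injOn (fun a ha b hb hab => phi_injOn (hs ha) (hs hb) hab)
  apply monoOn_unique s (s.image (phi β)) hcard
  · intro j hj
    rw [← highT_AI hs]
    exact phi_mem (by rw [lowS_AI hs]; exact hj)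
  · intro j hj j' hj' hlt
    exact phi_strictMonoOn (by rw [lowS_AI hs]; exact hj) (by rw [lowS_AI hs]; exact hj') hlt
  · intro j hj
    exact Finset.mem_image.mpr ⟨j, hj, rfl⟩
  · intro j hj j' hj' hlt
    exact phi_strictMonoOn (hs hj) (hs hj') hlt

lemma uv_AI {β : Idx W} {s : Finset (Fin W)} (hs : s ⊆ lowS β.1) :
    uv (AI β s) = s.piecewise
      (fun j => Pi.single (Fin.castAdd W j) (1 : ℝ) + Pi.single (phi β j) 1)
      (fun j => Pi.single (Fin.castAdd W j) (1 : ℝ)) := by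
  funext j
  by_cases hj : j ∈ s
  · rw [Finset.piecewise_eq_of_mem _ _ _ hj, uv,
      if_neg (by rw [mem_AI_castAdd hs]; exact fun h => h hj), phi_AI_eq hs j hj]
  · rw [Finset.piecewise_eq_of_notMem _ _ _ hj, uv, if_pos ((mem_AI_castAdd hs j).mpr hj)]

lemma rfn_image_lowS (β : Idx W) : Finset.image (rfn β (lowS β.1)) Finset.univ = β.1 := by
  ext x
  constructor
  · intro hx
    obtain ⟨j, _, rfl⟩ := Finset.mem_image.mp hx
    rw [rfn]
    by_cases hj : j ∈ lowS β.1
    · rw [if_pos hj]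
      exact (mem_highT_iff.mp (phi_mem hj)).1
    · rw [if_neg hj]
      rw [mem_lowS_iff, not_not] at hj
      exact hj
  · intro hx
    by_cases hW : (x : ℕ) < W
    · have he : Fin.castAdd W ⟨(x : ℕ), hW⟩ = x := Fin.ext rfl
      refine Finset.mem_image.mpr ⟨⟨(x : ℕ), hW⟩, Finset.mem_univ _, ?_⟩
      rw [rfn, if_neg, he]
      rw [mem_lowS_iff, not_not, he]
      exact hx
    · obtain ⟨j, hj, hphi⟩ := phi_surjOn (mem_highT_iff.mpr ⟨hx, hW⟩)
      exact Finset.mem_image.mpr ⟨j, Finset.mem_univ _, by rw [rfn, if_pos hj]; exact hphi⟩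


lemma rfn_mem (β : Idx W) (i : Fin W) : rfn β (lowS β.1) i ∈ β.1 := by
  rw [rfn]
  by_cases hj : i ∈ lowS β.1
  · rw [if_pos hj]; exact (mem_highT_iff.mp (phi_mem hj)).1
  · rw [if_neg hj]; rw [mem_lowS_iff, not_not] at hj; exact hj

lemma key (β : Idx W) : ∃ c : Idx W → ℝ, (∀ α, |c α| ≤ 1) ∧
    ExteriorAlgebra.ιMulti ℝ W (E β) = ∑ α, c α • ExteriorAlgebra.ιMulti ℝ W (uv α) := by
  classical
  have hmain := multilinear_incl_excl
    (ExteriorAlgebra.ιMulti ℝ W (M := Fin (W + W) → ℝ)).toMultilinearMap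
    (fun j => Pi.single (Fin.castAdd W j) (1 : ℝ) + Pi.single (phi β j) (1 : ℝ))
    (lowS β.1) (fun j => Pi.single (Fin.castAdd W j) (1 : ℝ))
  simp only [AlternatingMap.coe_multilinearMap] at hmain
  have hlhs : ((lowS β.1).piecewise
      (fun j => (Pi.single (Fin.castAdd W j) (1 : ℝ) + Pi.single (phi β j) (1 : ℝ))
        - Pi.single (Fin.castAdd W j) (1 : ℝ))
      (fun j => Pi.single (Fin.castAdd W j) (1 : ℝ)) : Fin W → (Fin (W + W) → ℝ))
      = fun j => Pi.single (rfn β (lowS β.1) j) (1 : ℝ) := by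
    funext j
    by_cases hj : j ∈ lowS β.1
    · rw [Finset.piecewise_eq_of_mem _ _ _ hj, rfn, if_pos hj, add_sub_cancel_left]
    · rw [Finset.piecewise_eq_of_notMem _ _ _ hj, rfn, if_neg hj]
  have huv : ∀ s ∈ (lowS β.1).powerset,
      s.piecewise (fun j => Pi.single (Fin.castAdd W j) (1 : ℝ) + Pi.single (phi β j) (1 : ℝ))
        (fun j => Pi.single (Fin.castAdd W j) (1 : ℝ)) = uv (AI β s) :=
    fun s hs => (uv_AI (Finset.mem_powerset.mp hs)).symm
  obtain ⟨ε, hε, hw⟩ := wedge_single_reindex β (rfn β (lowS β.1)) (rfn_injective β _)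
    (fun i => rfn_mem β i)
  have hε2 : ε * ε = 1 := by
    rcases abs_eq (le_refl (0:ℝ) |>.trans zero_le_one) |>.mp hε with h | h <;> rw [h] <;> norm_num
  rw [hlhs] at hmain
  rw [hw] at hmain
  rw [Finset.sum_congr rfl (fun s hs => by rw [huv s hs])] at hmain
  -- hmain : ε • f (E β) = ∑ s, (-1)^(..) • f (uv (AI β s))
  have hfinal : ExteriorAlgebra.ιMulti ℝ W (E β)
      = ∑ s ∈ (lowS β.1).powerset,
        (ε * (-1 : ℝ) ^ ((lowS β.1).card - s.card)) • ExteriorAlgebra.ιMulti ℝ W (uv (AI β s)) := by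
    calc ExteriorAlgebra.ιMulti ℝ W (E β)
        = (ε * ε) • ExteriorAlgebra.ιMulti ℝ W (E β) := by rw [hε2, one_smul]
      _ = ε • (ε • ExteriorAlgebra.ιMulti ℝ W (E β)) := by rw [smul_smul]
      _ = ε • ∑ s ∈ (lowS β.1).powerset,
            ((-1 : ℝ) ^ ((lowS β.1).card - s.card)) • ExteriorAlgebra.ιMulti ℝ W (uv (AI β s)) := by
          rw [hmain]
      _ = _ := by rw [Finset.smul_sum]; exact Finset.sum_congr rfl fun s _ => by rw [smul_smul]
  refine ⟨fun α => ∑ s ∈ (lowS β.1).powerset,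
    if AI β s = α then ε * (-1 : ℝ) ^ ((lowS β.1).card - s.card) else 0, ?_, ?_⟩
  · intro α
    dsimp only
    by_cases hex : ∃ s ∈ (lowS β.1).powerset, AI β s = α
    · obtain ⟨s₀, hs₀, hA⟩ := hex
      rw [Finset.sum_eq_single_of_mem s₀ hs₀]
      · rw [if_pos hA, abs_mul, hε, one_mul, abs_pow, abs_neg, abs_one, one_pow]
      · intro b hb hbne
        rw [if_neg]
        intro hc
        apply hbne
        have h1 := lowS_AI (Finset.mem_powerset.mp hb)
        have h2 := lowS_AI (Finset.mem_powerset.mp hs₀)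
        rw [← h1, hc, ← hA, h2]
    · rw [Finset.sum_eq_zero (fun s hs => if_neg (fun hc => hex ⟨s, hs, hc⟩))]
      simp
  · rw [hfinal]
    rw [Finset.sum_congr rfl (fun α _ => Finset.sum_smul)]
    rw [Finset.sum_comm]
    refine Finset.sum_congr rfl fun s hs => ?_
    simp only [ite_smul, zero_smul]
    rw [Finset.sum_ite_eq Finset.univ (AI β s)
      (fun α => (ε * (-1 : ℝ) ^ ((lowS β.1).card - s.card)) • ExteriorAlgebra.ιMulti ℝ W (uv α)),
      if_pos (Finset.mem_univ _)]


lemma single_smul_one (k : Fin (W + W)) (c : ℝ) :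
    (Pi.single k c : Fin (W + W) → ℝ) = c • (Pi.single k (1 : ℝ) : Fin (W + W) → ℝ) := by
  funext x
  rcases eq_or_ne x k with rfl | h
  · simp
  · simp [Pi.single_eq_of_ne h]

lemma span_exterior_le :
    (⋀[ℝ]^W (Fin (W + W) → ℝ) : Submodule ℝ (ExteriorAlgebra ℝ (Fin (W + W) → ℝ))) ≤
      Submodule.span ℝ (Set.range fun β : Idx W => ExteriorAlgebra.ιMulti ℝ W (E β)) := by
  classical
  rw [← ExteriorAlgebra.ιMulti_span_fixedDegree, Submodule.span_le]
  rintro x ⟨w, rfl⟩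
  have hw : w = fun i => ∑ k, w i k • (Pi.single k (1 : ℝ) : Fin (W + W) → ℝ) := by
    funext i
    have h2 : (∑ k, w i k • (Pi.single k (1 : ℝ) : Fin (W + W) → ℝ))
        = ∑ k, Pi.single k (w i k) :=
      Finset.sum_congr rfl fun k _ => (single_smul_one k (w i k)).symm
    rw [h2, Finset.univ_sum_single]
  rw [show ExteriorAlgebra.ιMulti ℝ W w
      = (ExteriorAlgebra.ιMulti ℝ W (M := Fin (W + W) → ℝ)).toMultilinearMap w from rfl, hw]
  rw [MultilinearMap.map_sum]
  apply Submodule.sum_mem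
  intro r _
  rw [MultilinearMap.map_smul_univ]
  apply Submodule.smul_mem
  by_cases hr : Function.Injective r
  · set βr : Idx W := ⟨Finset.image r Finset.univ, by
      rw [Finset.card_image_of_injective _ hr, Finset.card_univ, Fintype.card_fin]⟩ with hβr
    obtain ⟨ε, _, heq⟩ := wedge_single_reindex βr r hr
      (fun i => Finset.mem_image.mpr ⟨i, Finset.mem_univ _, rfl⟩)
    rw [show (ExteriorAlgebra.ιMulti ℝ W (M := Fin (W + W) → ℝ)).toMultilinearMap
        (fun i => Pi.single (r i) (1 : ℝ))
        = ExteriorAlgebra.ιMulti ℝ W (fun i => Pi.single (r i) (1 : ℝ)) from rfl, heq]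
    exact Submodule.smul_mem _ _ (Submodule.subset_span ⟨βr, rfl⟩)
  · obtain ⟨i, j, hij, hne⟩ := Function.not_injective_iff.mp hr
    rw [show (ExteriorAlgebra.ιMulti ℝ W (M := Fin (W + W) → ℝ)).toMultilinearMap
        (fun i => Pi.single (r i) (1 : ℝ))
        = ExteriorAlgebra.ιMulti ℝ W (fun i => Pi.single (r i) (1 : ℝ)) from rfl]
    rw [AlternatingMap.map_eq_zero_of_eq _ _ (by rw [hij]) hne]
    exact Submodule.zero_mem _

lemma top_le_span_sub {V : Type*} [AddCommGroup V] [Module ℝ V] {N : Submodule ℝ V}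
    {I : Type*} (v : I → N) (hle : N ≤ Submodule.span ℝ (Set.range fun i => (v i : V))) :
    ⊤ ≤ Submodule.span ℝ (Set.range v) := by
  intro x _
  have hx : (x : V) ∈ Submodule.span ℝ (Set.range fun i => (v i : V)) := hle x.2
  have hrange : (Set.range fun i => (v i : V)) = N.subtype '' Set.range v := by
    rw [← Set.range_comp]; rfl
  rw [hrange, ← Submodule.map_span] at hx
  obtain ⟨y, hy, hyx⟩ := Submodule.mem_map.mp hx
  obtain rfl : y = x := Subtype.coe_injective hyx
  exact hy

def vE : Idx W → (⋀[ℝ]^W (Fin (W + W) → ℝ) : Submodule ℝ (ExteriorAlgebra ℝ (Fin (W + W) → ℝ))) :=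
  fun β => ⟨ExteriorAlgebra.ιMulti ℝ W (E β),
    ExteriorAlgebra.ιMulti_range ℝ W (Set.mem_range_self _)⟩

def vU : Idx W → (⋀[ℝ]^W (Fin (W + W) → ℝ) : Submodule ℝ (ExteriorAlgebra ℝ (Fin (W + W) → ℝ))) :=
  fun α => ⟨ExteriorAlgebra.ιMulti ℝ W (uv α),
    ExteriorAlgebra.ιMulti_range ℝ W (Set.mem_range_self _)⟩

lemma indep_vE : LinearIndependent ℝ (vE (W := W)) :=
  LinearIndependent.of_comp ((⋀[ℝ]^W (Fin (W + W) → ℝ)).subtype) indep_E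

def bV : Module.Basis (Idx W) ℝ (⋀[ℝ]^W (Fin (W + W) → ℝ)) :=
  Module.Basis.mk indep_vE (top_le_span_sub vE span_exterior_le)

lemma span_le_u :
    Submodule.span ℝ (Set.range fun β : Idx W => ExteriorAlgebra.ιMulti ℝ W (E β)) ≤
      Submodule.span ℝ (Set.range fun α : Idx W => ExteriorAlgebra.ιMulti ℝ W (uv α)) := by
  rw [Submodule.span_le]
  rintro x ⟨β, rfl⟩
  obtain ⟨c, _, heq⟩ := key β
  show ExteriorAlgebra.ιMulti ℝ W (E β) ∈ _
  rw [heq]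
  exact Submodule.sum_mem _ fun α _ =>
    Submodule.smul_mem _ _ (Submodule.subset_span ⟨α, rfl⟩)

def bU : Module.Basis (Idx W) ℝ (⋀[ℝ]^W (Fin (W + W) → ℝ)) :=
  basisOfTopLeSpanOfCardEqFinrank vU
    (top_le_span_sub vU (le_trans span_exterior_le span_le_u))
    (by
      haveI : Module.Finite ℝ (⋀[ℝ]^W (Fin (W + W) → ℝ) :
        Submodule ℝ (ExteriorAlgebra ℝ (Fin (W + W) → ℝ))) := Module.Finite.of_basis bV
      exact (Module.finrank_eq_card_basis (bV (W := W))).symm)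

lemma bU_apply (α : Idx W) : ((bU α : (⋀[ℝ]^W (Fin (W + W) → ℝ) : Submodule ℝ _))
    : ExteriorAlgebra ℝ (Fin (W + W) → ℝ)) = ExteriorAlgebra.ιMulti ℝ W (uv α) := by
  rw [bU, coe_basisOfTopLeSpanOfCardEqFinrank]
  rfl


lemma uv_castAdd (α : Idx W) (i j : Fin W) :
    uv α j (Fin.castAdd W i) = if i = j then 1 else 0 := by
  have hsingle : (Pi.single (Fin.castAdd W j) (1 : ℝ) : Fin (W + W) → ℝ) (Fin.castAdd W i)
      = if i = j then 1 else 0 := by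
    rw [Pi.single_apply]
    by_cases h : i = j
    · subst h; simp
    · rw [if_neg (fun hc => h (Fin.castAdd_injective _ _ hc)), if_neg h]
  rw [uv]
  by_cases h : Fin.castAdd W j ∈ α.1
  · rw [if_pos h]; exact hsingle
  · rw [if_neg h]
    have hj : j ∈ lowS α.1 := mem_lowS_iff.mpr h
    have h0 : (Pi.single (phi α j) (1 : ℝ) : Fin (W + W) → ℝ) (Fin.castAdd W i) = 0 := by
      rw [Pi.single_apply, if_neg]
      intro hc
      exact (mem_highT_iff.mp (phi_mem hj)).2 (hc ▸ castAdd_lt i)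
    rw [Pi.add_apply, h0, add_zero]; exact hsingle

lemma uv_natAdd (α : Idx W) (i j : Fin W) :
    uv α j (Fin.natAdd W i) =
      if j ∈ lowS α.1 ∧ phi α j = Fin.natAdd W i then 1 else 0 := by
  have h0 : (Pi.single (Fin.castAdd W j) (1 : ℝ) : Fin (W + W) → ℝ) (Fin.natAdd W i) = 0 := by
    rw [Pi.single_apply, if_neg]
    intro hc
    have h1 : ((Fin.natAdd W i : Fin (W + W)) : ℕ) = W + i := rfl
    have h2 := castAdd_lt j
    rw [← hc, h1] at h2
    omega
  rw [uv]
  by_cases h : Fin.castAdd W j ∈ α.1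
  · rw [if_pos h, h0, if_neg]
    rintro ⟨hl, -⟩
    exact (mem_lowS_iff.mp hl) h
  · rw [if_neg h, Pi.add_apply, h0, zero_add, Pi.single_apply]
    have hj : j ∈ lowS α.1 := mem_lowS_iff.mpr h
    by_cases hp : phi α j = Fin.natAdd W i
    · rw [if_pos hp.symm, if_pos ⟨hj, hp⟩]
    · rw [if_neg (fun hc => hp hc.symm), if_neg (fun hc => hp hc.2)]

lemma norm_bound (α : Idx W) :
    ‖LinearMap.toContinuousLinearMap (Matrix.toEuclideanLin
      (Matrix.of fun i j : Fin W => uv α j (Fin.natAdd W i)))‖ ≤ 1 := by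
  classical
  apply ContinuousLinearMap.opNorm_le_bound _ zero_le_one
  intro x
  rw [one_mul, LinearMap.coe_toContinuousLinearMap']
  set y := Matrix.toEuclideanLin
    (Matrix.of fun i j : Fin W => uv α j (Fin.natAdd W i)) x with hy
  set J : Fin W → Finset (Fin W) :=
    fun i => Finset.univ.filter (fun j => j ∈ lowS α.1 ∧ phi α j = Fin.natAdd W i) with hJ
  have hyi : ∀ i, y i = ∑ j ∈ J i, x j := by
    intro i
    have h1 : y i = ∑ j, uv α j (Fin.natAdd W i) * x j := rfl
    rw [h1, Finset.sum_filter]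
    refine Finset.sum_congr rfl fun j _ => ?_
    rw [uv_natAdd, ite_mul, one_mul, zero_mul]
  have huniq : ∀ i : Fin W, ∀ j ∈ J i, ∀ j' ∈ J i, j = j' := by
    intro i j hj j' hj'
    rw [hJ, Finset.mem_filter] at hj hj'
    exact phi_injOn hj.2.1 hj'.2.1 (hj.2.2.trans hj'.2.2.symm)
  have hsq : ∀ i, ‖y i‖ ^ 2 = ∑ j ∈ J i, ‖x j‖ ^ 2 := by
    intro i
    rcases Finset.eq_empty_or_nonempty (J i) with he | ⟨a, ha⟩
    · rw [hyi, he]; simp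
    · have hsing : J i = {a} :=
        Finset.eq_singleton_iff_unique_mem.mpr ⟨ha, fun b hb => huniq i b hb a ha⟩
      rw [hyi, hsing]; simp
  have hdisj : ∀ i ∈ (Finset.univ : Finset (Fin W)), ∀ i' ∈ (Finset.univ : Finset (Fin W)),
      i ≠ i' → Disjoint (J i) (J i') := by
    intro i _ i' _ hne
    rw [Finset.disjoint_left]
    intro j hj hj'
    rw [hJ, Finset.mem_filter] at hj hj'
    apply hne
    have heq := hj.2.2.symm.trans hj'.2.2
    have hval : W + (i : ℕ) = W + (i' : ℕ) := by
      have := congrArg (fun z : Fin (W + W) => (z : ℕ)) heq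
      simpa using this
    exact Fin.ext (by omega)
  rw [EuclideanSpace.norm_eq, EuclideanSpace.norm_eq]
  apply Real.sqrt_le_sqrt
  calc ∑ i, ‖y i‖ ^ 2
      = ∑ i, ∑ j ∈ J i, ‖x j‖ ^ 2 := Finset.sum_congr rfl fun i _ => hsq i
    _ = ∑ j ∈ Finset.univ.biUnion J, ‖x j‖ ^ 2 := (Finset.sum_biUnion hdisj).symm
    _ ≤ ∑ j, ‖x j‖ ^ 2 := Finset.sum_le_sum_of_subset_of_nonneg
        (Finset.subset_univ _) (fun j _ _ => by positivity)

end
end Stmt12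

open Matrix

theorem stmt_12 (W : ℕ) (hW : 1 ≤ W) :
    ∃ u : {α : Finset (Fin (W + W)) // α.card = W} → Fin W → (Fin (W + W) → ℝ),
      (∃ b : Module.Basis {α : Finset (Fin (W + W)) // α.card = W} ℝ
          (⋀[ℝ]^W (Fin (W + W) → ℝ)),
        ∀ α, (b α : ExteriorAlgebra ℝ (Fin (W + W) → ℝ)) =
          ExteriorAlgebra.ιMulti ℝ W (u α)) ∧
      (∀ α,
        (∀ i j : Fin W, u α j (Fin.castAdd W i) = if i = j then 1 else 0) ∧
        ‖LinearMap.toContinuousLinearMap (Matrix.toEuclideanLin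
          (Matrix.of fun i j : Fin W => u α j (Fin.natAdd W i)))‖ ≤ 1) ∧
      (∀ β : {α : Finset (Fin (W + W)) // α.card = W},
        ∃ c : {α : Finset (Fin (W + W)) // α.card = W} → ℝ,
          (∀ α, |c α| ≤ 1) ∧
          ExteriorAlgebra.ιMulti ℝ W
              (fun i : Fin W => Pi.single ((β.1.orderIsoOfFin β.2) i : Fin (W + W)) (1 : ℝ)) =
            ∑ α, c α • ExteriorAlgebra.ιMulti ℝ W (u α)) := by
  refine ⟨Stmt12.uv, ⟨Stmt12.bU, fun α => Stmt12.bU_apply α⟩, ?_, ?_⟩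
  · exact fun α => ⟨fun i j => Stmt12.uv_castAdd α i j, Stmt12.norm_bound α⟩
  · exact fun β => Stmt12.key β
end

section
/- Let u and v be decomposable vectors in ∧^W ℝ^{2W} with matrices [u] = [A_u; B_u] and [v] = [A_v; B_v] (2W × W matrices split into top and bottom W × W blocks), and suppose A_u and A_v are invertible. Let S₁, …, S_N be W × W symmetric matrices, E ∈ ℝ, and define T = ∏_{k=N}^{1} [[S_k − E, −I],[I, 0]]. Then det([v]ᵗ T [u]) = det(A_u) det(A_v) · det(H − E), where H is the NW × NW block-tridiagonal matrix with off-diagonal blocks −I and diagonal blocks S₁ − B_u A_u^{-1}, S₂, …, S_{N−1}, S_N + (B_v A_v^{-1})ᵗ. -/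
open Matrix Polynomial Finset
namespace Stmt13
variable {R : Type*} [CommRing R] {W : ℕ}

def rec2 (D : ℕ → Matrix (Fin W) (Fin W) R) (a b : Matrix (Fin W) (Fin W) R) :
    ℕ → Matrix (Fin W) (Fin W) R × Matrix (Fin W) (Fin W) R
  | 0 => (a, b)
  | k+1 => (D k * (rec2 D a b k).1 - (rec2 D a b k).2, (rec2 D a b k).1)

def cC (G : ℕ → Matrix (Fin W) (Fin W) R) (k : ℕ) : Matrix (Fin W) (Fin W) R :=
  (rec2 G 1 0 k).1

lemma cC_zero (G : ℕ → Matrix (Fin W) (Fin W) R) : cC G 0 = 1 := rfl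

lemma cC_one (G : ℕ → Matrix (Fin W) (Fin W) R) : cC G 1 = G 0 := by
  simp [cC, rec2]

lemma rec2_snd (G : ℕ → Matrix (Fin W) (Fin W) R) (k : ℕ) :
    (rec2 G 1 0 (k+1)).2 = cC G k := rfl

lemma cC_succ_succ (G : ℕ → Matrix (Fin W) (Fin W) R) (k : ℕ) :
    cC G (k+2) = G (k+1) * cC G (k+1) - cC G k := rfl

lemma rec2_mul (D : ℕ → Matrix (Fin W) (Fin W) R) (a b m : Matrix (Fin W) (Fin W) R) :
    ∀ k, rec2 D (a*m) (b*m) k = ((rec2 D a b k).1 * m, (rec2 D a b k).2 * m)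
  | 0 => rfl
  | (k+1) => by
    rw [rec2, rec2, rec2_mul D a b m k]
    simp [sub_mul, mul_assoc]

section blocks
variable (N : ℕ) (G : ℕ → Matrix (Fin W) (Fin W) R)

def Tb (i j : Fin N) : Matrix (Fin W) (Fin W) R :=
  if (i:ℕ) = j then G i
  else if (i:ℕ)+1 = j ∨ (j:ℕ)+1 = i then -1 else 0

def Ub (i j : Fin N) : Matrix (Fin W) (Fin W) R :=
  if (i:ℕ) ≤ j then cC G i else 0

def Lb (i j : Fin N) : Matrix (Fin W) (Fin W) R :=
  if (i:ℕ) = j then cC G (i+1)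
  else if (j:ℕ)+1 = i then -(cC G j) else 0

lemma sum_ite_val (f : Fin N → Matrix (Fin W) (Fin W) R) (m : ℕ) :
    ∑ j : Fin N, (if m = (j:ℕ) then f j else 0) = if h : m < N then f ⟨m, h⟩ else 0 := by
  split
  · next h =>
    rw [Finset.sum_eq_single ⟨m, h⟩]
    · simp
    · intro j _ hj
      rw [if_neg]
      intro he
      exact hj (by apply Fin.ext; simp [← he])
    · simp
  · next h =>
    apply Finset.sum_eq_zero
    intro j _
    rw [if_neg]
    have := j.isLt
    omega

lemma sum_ite_val' (f : Fin N → Matrix (Fin W) (Fin W) R) (m : ℕ) :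
    ∑ j : Fin N, (if (j:ℕ)+1 = m then f j else 0)
      = if h : m-1 < N ∧ 1 ≤ m then f ⟨m-1, h.1⟩ else 0 := by
  split
  · next h =>
    rw [Finset.sum_eq_single ⟨m-1, h.1⟩]
    · have hcond : ((⟨m-1, h.1⟩ : Fin N) : ℕ) + 1 = m := by
        simp only [Fin.val_mk]; omega
      rw [if_pos hcond]
    · intro j _ hj
      rw [if_neg]
      intro he
      exact hj (by apply Fin.ext; simp only [Fin.val_mk]; omega)
    · simp
  · next h =>
    apply Finset.sum_eq_zero
    intro j _
    rw [if_neg]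
    have := j.isLt
    omega

lemma key_block (i k : Fin N) : ∑ j, Tb N G i j * Ub N G j k = Lb N G i k := by
  have hsplit : ∀ j : Fin N, Tb N G i j * Ub N G j k =
      (if (i:ℕ) = (j:ℕ) then G i * Ub N G j k else 0) +
      ((if (i:ℕ)+1 = (j:ℕ) then -Ub N G j k else 0) +
       (if (j:ℕ)+1 = (i:ℕ) then -Ub N G j k else 0)) := by
    intro j
    unfold Tb
    by_cases h1 : (i:ℕ) = (j:ℕ)
    · simp [h1, show ¬((j:ℕ)+1 = (j:ℕ)) by omega]
    · by_cases h2 : (i:ℕ)+1 = (j:ℕ)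
      · simp [h1, h2, show ¬((j:ℕ)+1 = (i:ℕ)) by omega]
      · by_cases h3 : (j:ℕ)+1 = (i:ℕ)
        · simp [h1, h2, h3]
        · simp [h1, h2, h3]
  simp_rw [hsplit]
  rw [Finset.sum_add_distrib, Finset.sum_add_distrib]
  have e1 : ∑ j : Fin N, (if (i:ℕ) = (j:ℕ) then G i * Ub N G j k else 0)
      = G i * Ub N G i k := by
    rw [sum_ite_val N (fun j => G i * Ub N G j k) (i:ℕ), dif_pos i.isLt]
    try simp
  rw [e1, sum_ite_val N (fun j => -Ub N G j k) ((i:ℕ)+1),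
    sum_ite_val' N (fun j => -Ub N G j k) (i:ℕ)]
  obtain ⟨a, ha⟩ := i
  obtain ⟨c, hc⟩ := k
  simp only [Ub, Lb, Fin.val_mk]
  match a with
  | 0 =>
    split_ifs <;>
      first
        | (exfalso; omega)
        | contradiction
        | ((try simp only [cC_zero, cC_one, Nat.zero_add, mul_one, mul_zero, neg_zero,
              add_zero, zero_add]); all_goals abel)
  | Nat.succ b =>
    have hrec : cC G (b+1+1) = G (b+1) * cC G (b+1) - cC G b := rfl
    by_cases hbc : b = c
    all_goals
      try subst hbc
    all_goals
      split_ifs <;>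
        first
          | (exfalso; omega)
          | contradiction
          | ((try simp only [Nat.succ_eq_add_one, Nat.add_sub_cancel, hrec, cC_zero, cC_one,
                mul_one, mul_zero, neg_zero, neg_sub, add_zero, zero_add]);
             all_goals abel)

def triT : Matrix (Fin N × Fin W) (Fin N × Fin W) R := fun p q => Tb N G p.1 q.1 p.2 q.2
def triU : Matrix (Fin N × Fin W) (Fin N × Fin W) R := fun p q => Ub N G p.1 q.1 p.2 q.2
def triL : Matrix (Fin N × Fin W) (Fin N × Fin W) R := fun p q => Lb N G p.1 q.1 p.2 q.2

lemma triT_mul_triU : triT N G * triU N G = triL N G := by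
  ext ⟨i, x⟩ ⟨k, y⟩
  rw [Matrix.mul_apply, Fintype.sum_prod_type]
  have : ∀ j : Fin N, ∑ z : Fin W, Tb N G i j x z * Ub N G j k z y
      = (Tb N G i j * Ub N G j k) x y := fun j => (Matrix.mul_apply).symm
  calc ∑ j : Fin N, ∑ z : Fin W, triT N G (i,x) (j,z) * triU N G (j,z) (k,y)
      = ∑ j : Fin N, (Tb N G i j * Ub N G j k) x y := by
        apply Finset.sum_congr rfl
        intro j _
        exact this j
    _ = (∑ j : Fin N, Tb N G i j * Ub N G j k) x y := by
        rw [Matrix.sum_apply]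
    _ = Lb N G i k x y := by rw [key_block]
    _ = triL N G (i,x) (k,y) := rfl

lemma det_triU : (triU N G).det = ∏ a : Fin N, (cC G (a:ℕ)).det := by
  have hbt : (triU N G).BlockTriangular Prod.fst := by
    intro p q h
    have : ¬ ((p.1:ℕ) ≤ (q.1:ℕ)) := by
      simp only [not_le]
      exact h
    simp [triU, Ub, this]
  rw [hbt.det_fintype]
  apply Finset.prod_congr rfl
  intro a _
  let e : Fin W ≃ {p : Fin N × Fin W // p.1 = a} :=
    { toFun := fun x => ⟨(a, x), rfl⟩
      invFun := fun p => p.1.2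
      left_inv := fun x => rfl
      right_inv := fun p => by
        obtain ⟨⟨i, x⟩, hp⟩ := p
        simp only at hp
        subst hp
        rfl }
  rw [← Matrix.det_submatrix_equiv_self e]
  congr 1
  ext x y
  simp [triU, Ub, Matrix.toSquareBlock_def, e]

lemma det_triL : (triL N G).det = ∏ a : Fin N, (cC G ((a:ℕ)+1)).det := by
  rw [← Matrix.det_transpose]
  have hbt : ((triL N G)ᵀ).BlockTriangular Prod.fst := by
    intro p q h
    have h1 : ¬ ((q.1:ℕ) = (p.1:ℕ)) := by
      intro he
      exact absurd (Fin.ext he : q.1 = p.1) (ne_of_gt h).symm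
    have h2 : ¬ ((p.1:ℕ)+1 = (q.1:ℕ)) := by
      have : (q.1:ℕ) < (p.1:ℕ) := h
      omega
    simp [Matrix.transpose_apply, triL, Lb, h1, h2]
  rw [hbt.det_fintype]
  apply Finset.prod_congr rfl
  intro a _
  let e : Fin W ≃ {p : Fin N × Fin W // p.1 = a} :=
    { toFun := fun x => ⟨(a, x), rfl⟩
      invFun := fun p => p.1.2
      left_inv := fun x => rfl
      right_inv := fun p => by
        obtain ⟨⟨i, x⟩, hp⟩ := p
        simp only at hp
        subst hp
        rfl }
  rw [← Matrix.det_submatrix_equiv_self e, ← Matrix.det_transpose]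
  congr 1
  ext x y
  simp [triL, Lb, Matrix.toSquareBlock_def, e, Matrix.transpose_apply]

/-- Core identity, valid over any commutative ring. -/
lemma core_identity :
    (triT N G).det * ∏ k ∈ Finset.range N, (cC G k).det
      = ∏ k ∈ Finset.range N, (cC G (k+1)).det := by
  have h := congrArg Matrix.det (triT_mul_triU N G)
  rw [Matrix.det_mul, det_triU, det_triL] at h
  rw [Fin.prod_univ_eq_prod_range (fun k => (cC G k).det) N] at h
  rw [Fin.prod_univ_eq_prod_range (fun k => (cC G (k+1)).det) N] at h
  exact h

end blocks

section poly
variable (A : ℕ → Matrix (Fin W) (Fin W) ℝ)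

/-- The perturbed coefficient sequence over ℝ[X]. -/
noncomputable def pert (n : ℕ) : Matrix (Fin W) (Fin W) ℝ[X] :=
  (A n).map Polynomial.C - (Polynomial.X : ℝ[X]) • 1

lemma pert_apply (n : ℕ) (x z : Fin W) :
    pert A n x z = Polynomial.C (A n x z) - (if x = z then Polynomial.X else 0) := by
  simp [pert, Matrix.sub_apply, Matrix.smul_apply, Matrix.one_apply, Matrix.map_apply,
    mul_ite, mul_one, mul_zero, smul_eq_mul]

lemma pert_natDegree_le (n : ℕ) (x z : Fin W) : (pert A n x z).natDegree ≤ 1 := by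
  rw [pert_apply]
  refine (natDegree_sub_le _ _).trans ?_
  simp only [natDegree_C]
  split <;> simp

lemma pert_coeff_one (n : ℕ) (x z : Fin W) :
    (pert A n x z).coeff 1 = if x = z then -1 else 0 := by
  rw [pert_apply, coeff_sub, coeff_C, apply_ite (fun p : ℝ[X] => p.coeff 1)]
  simp only [coeff_X_one, coeff_zero, if_neg one_ne_zero, zero_sub]
  split <;> simp

lemma cC_pert_deg : ∀ k : ℕ,
    (∀ x y : Fin W, ((rec2 (pert A) 1 0 k).1 x y).natDegree ≤ k ∧
      ((rec2 (pert A) 1 0 k).1 x y).coeff k = if x = y then (-1)^k else 0) ∧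
    (∀ x y : Fin W, ((rec2 (pert A) 1 0 k).2 x y).natDegree ≤ k ∧
      ((rec2 (pert A) 1 0 k).2 x y).coeff k = 0)
  | 0 => by
    constructor
    · intro x y
      simp only [rec2, Matrix.one_apply]
      constructor
      · split <;> simp
      · split <;> simp
    · intro x y
      simp [rec2]
  | (k+1) => by
    obtain ⟨hf, hs⟩ := cC_pert_deg k
    have hfst : (rec2 (pert A) 1 0 (k+1)).1
        = pert A k * (rec2 (pert A) 1 0 k).1 - (rec2 (pert A) 1 0 k).2 := rfl
    have hsnd : (rec2 (pert A) 1 0 (k+1)).2 = (rec2 (pert A) 1 0 k).1 := rfl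
    have hdeg : ∀ x y : Fin W, ((rec2 (pert A) 1 0 (k+1)).1 x y).natDegree ≤ k+1 := by
      intro x y
      rw [hfst]
      simp only [Matrix.sub_apply, Matrix.mul_apply]
      refine (natDegree_sub_le _ _).trans (max_le ?_ ((hs x y).1.trans (by omega)))
      refine natDegree_sum_le_of_forall_le _ _ ?_
      intro z _
      refine natDegree_mul_le.trans ?_
      have := (pert_natDegree_le A k x z)
      have := (hf z y).1
      omega
    refine ⟨fun x y => ⟨hdeg x y, ?_⟩, fun x y => ⟨(hf x y).1.trans (by omega), ?_⟩⟩
    · rw [hfst]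
      simp only [Matrix.sub_apply, Matrix.mul_apply, coeff_sub, finset_sum_coeff]
      have hz : ∀ z : Fin W, (pert A k x z * (rec2 (pert A) 1 0 k).1 z y).coeff (k+1)
          = if x = z then (if z = y then -(-1)^k else 0) else 0 := by
        intro z
        have := coeff_mul_add_eq_of_natDegree_le (pert_natDegree_le A k x z) (hf z y).1
        rw [show 1 + k = k + 1 by omega] at this
        rw [this, pert_coeff_one, (hf z y).2]
        split <;> split <;> simp
      rw [Finset.sum_congr rfl (fun z _ => hz z), Finset.sum_ite_eq Finset.univ x
        (fun z => if z = y then -(-1)^k else 0)]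
      rw [coeff_eq_zero_of_natDegree_lt ((hs x y).1.trans_lt (by omega))]
      simp [pow_succ]
    · rw [hsnd, coeff_eq_zero_of_natDegree_lt ((hf x y).1.trans_lt (by omega))]

lemma det_cC_pert_coeff (k : ℕ) :
    ((cC (pert A) k).det).coeff (W*k) = ((-1 : ℝ)^k)^W := by
  obtain ⟨hf, -⟩ := cC_pert_deg A k
  have hfd : ∀ x y : Fin W, ((cC (pert A) k) x y).natDegree ≤ k := fun x y => (hf x y).1
  have hf' : ∀ x y : Fin W, ((cC (pert A) k) x y).coeff k = if x = y then (-1:ℝ)^k else 0 :=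
    fun x y => (hf x y).2
  rw [Matrix.det_apply, finset_sum_coeff]
  have hterm : ∀ σ : Equiv.Perm (Fin W),
      ((Equiv.Perm.sign σ) • ∏ i, cC (pert A) k (σ i) i).coeff (W*k)
        = if σ = 1 then ((-1:ℝ)^k)^W else 0 := by
    intro σ
    rw [Polynomial.coeff_smul]
    have hprod : (∏ i, cC (pert A) k (σ i) i).coeff (W*k)
        = ∏ i : Fin W, (cC (pert A) k (σ i) i).coeff k := by
      have := Polynomial.coeff_prod_of_natDegree_le (s := Finset.univ)
        (fun i => cC (pert A) k (σ i) i) k (fun i _ => hfd (σ i) i)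
      rwa [Finset.card_univ, Fintype.card_fin] at this
    rw [hprod]
    by_cases hσ : σ = 1
    · subst hσ
      rw [if_pos rfl]
      have : ∀ i : Fin W, (cC (pert A) k ((1 : Equiv.Perm (Fin W)) i) i).coeff k = (-1:ℝ)^k := by
        intro i
        rw [show ((1 : Equiv.Perm (Fin W)) i) = i from rfl, hf' i i, if_pos rfl]
      rw [Finset.prod_congr rfl (fun i _ => this i), Finset.prod_const, Finset.card_univ,
        Fintype.card_fin]
      simp
    · rw [if_neg hσ]
      obtain ⟨i, hi⟩ : ∃ i, σ i ≠ i := by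
        by_contra hc
        push_neg at hc
        exact hσ (Equiv.ext hc)
      rw [Finset.prod_eq_zero (Finset.mem_univ i) (by rw [hf' (σ i) i, if_neg hi])]
      simp
  rw [Finset.sum_congr rfl (fun σ _ => hterm σ), Finset.sum_ite_eq' Finset.univ
    (1 : Equiv.Perm (Fin W)) (fun _ => ((-1:ℝ)^k)^W)]
  simp

lemma det_cC_pert_ne_zero (k : ℕ) : (cC (pert A) k).det ≠ 0 := by
  intro h
  have hc := det_cC_pert_coeff A k
  rw [h, coeff_zero] at hc
  have : ((-1 : ℝ)^k)^W ≠ 0 := pow_ne_zero _ (pow_ne_zero _ (by norm_num))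
  exact this hc.symm

lemma det_triT_pert (N : ℕ) : (triT N (pert A)).det = (cC (pert A) N).det := by
  have hcore := core_identity N (pert A)
  have e1 := Finset.prod_range_succ' (fun k => (cC (pert A) k).det) N
  rw [Finset.prod_range_succ (fun k => (cC (pert A) k).det) N] at e1
  simp only [cC_zero, Matrix.det_one, mul_one] at e1
  rw [← e1] at hcore
  have hP : (∏ k ∈ Finset.range N, (cC (pert A) k).det) ≠ 0 :=
    Finset.prod_ne_zero_iff.2 fun k _ => det_cC_pert_ne_zero A k
  rw [mul_comm] at hcore
  exact mul_left_cancel₀ hP hcore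

end poly

section maps
variable {S : Type*} [CommRing S] (f : R →+* S)

lemma matmap_mul (P Q : Matrix (Fin W) (Fin W) R) : (P * Q).map f = P.map f * Q.map f :=
  Matrix.map_mul

lemma matmap_sub (P Q : Matrix (Fin W) (Fin W) R) : (P - Q).map f = P.map f - Q.map f := by
  ext x y
  simp [Matrix.map_apply, Matrix.sub_apply]

lemma rec2_map (D : ℕ → Matrix (Fin W) (Fin W) R) (a b : Matrix (Fin W) (Fin W) R) :
    ∀ k, rec2 (fun n => (D n).map f) (a.map f) (b.map f) k
      = ((rec2 D a b k).1.map f, (rec2 D a b k).2.map f)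
  | 0 => rfl
  | (k+1) => by
    rw [rec2, rec2, rec2_map D a b k]
    simp only [matmap_sub, matmap_mul]

lemma cC_map (D : ℕ → Matrix (Fin W) (Fin W) R) (k : ℕ) :
    cC (fun n => (D n).map f) k = (cC D k).map f := by
  have h1 : ((1 : Matrix (Fin W) (Fin W) R)).map f = 1 := Matrix.map_one f (map_zero f) (map_one f)
  have h0 : ((0 : Matrix (Fin W) (Fin W) R)).map f = 0 := Matrix.map_zero f (map_zero f)
  unfold cC
  rw [← h1, ← h0, rec2_map]

lemma triT_map (N : ℕ) (G : ℕ → Matrix (Fin W) (Fin W) R) :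
    (triT N G).map f = triT N (fun n => (G n).map f) := by
  ext ⟨i, x⟩ ⟨j, y⟩
  simp only [Matrix.map_apply, triT, Tb]
  split_ifs <;> simp [Matrix.neg_apply, Matrix.one_apply, apply_ite f]

end maps

/-- Determinant of the block-tridiagonal matrix equals determinant of the continuant. -/
theorem det_triT (N : ℕ) (A : ℕ → Matrix (Fin W) (Fin W) ℝ) :
    (triT N A).det = (cC A N).det := by
  have hA : ∀ n, (pert A n).map (Polynomial.evalRingHom 0) = A n := by
    intro n
    ext x y
    rw [Matrix.map_apply, pert_apply]
    simp [apply_ite (Polynomial.eval (0:ℝ))]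
  have hfun : (fun n => (pert A n).map (Polynomial.evalRingHom 0)) = A := funext hA
  calc (triT N A).det
      = ((triT N (pert A)).map (Polynomial.evalRingHom 0)).det := by
        rw [triT_map _ N (pert A), hfun]
    _ = Polynomial.evalRingHom 0 ((triT N (pert A)).det) := by
        rw [RingHom.map_det, RingHom.mapMatrix_apply]
    _ = Polynomial.evalRingHom 0 ((cC (pert A) N).det) := by rw [det_triT_pert]
    _ = ((cC (pert A) N).map (Polynomial.evalRingHom 0)).det := by
        rw [RingHom.map_det, RingHom.mapMatrix_apply]
    _ = (cC (fun n => (pert A n).map (Polynomial.evalRingHom 0)) N).det := by rw [cC_map]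
    _ = (cC A N).det := by rw [hfun]

section transfer
variable {R : Type*} [CommRing R] {W : ℕ}

lemma fbfr (D1 P Q : Matrix (Fin W) (Fin W) R) :
    (Matrix.fromBlocks D1 (-1) 1 0 : Matrix (Fin W ⊕ Fin W) (Fin W ⊕ Fin W) R) *
      Matrix.fromRows P Q = Matrix.fromRows (D1 * P - Q) P := by
  ext i j
  cases i with
  | inl x =>
    rw [Matrix.mul_apply, Fintype.sum_sum_type]
    simp [Matrix.fromRows_apply_inl, Matrix.sub_apply, Matrix.mul_apply,
      Matrix.neg_apply, Matrix.one_apply, ite_mul, Finset.sum_ite_eq, sub_eq_add_neg,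
      Finset.sum_add_distrib, Finset.sum_neg_distrib]
  | inr x =>
    rw [Matrix.mul_apply, Fintype.sum_sum_type]
    simp [Matrix.fromRows_apply_inl, Matrix.fromRows_apply_inr, Matrix.one_apply, ite_mul,
      Finset.sum_ite_eq]

lemma transfer_prod (D : ℕ → Matrix (Fin W) (Fin W) R) (a b : Matrix (Fin W) (Fin W) R) :
    ∀ n : ℕ, (List.ofFn fun k : Fin n =>
        (Matrix.fromBlocks (D (k:ℕ)) (-1) 1 0 : Matrix (Fin W ⊕ Fin W) (Fin W ⊕ Fin W) R)).reverse.prod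
        * Matrix.fromRows a b
      = Matrix.fromRows (rec2 D a b n).1 (rec2 D a b n).2
  | 0 => by simp [rec2]
  | (n+1) => by
    rw [List.ofFn_succ']
    have hfun : (fun i : Fin n => (Matrix.fromBlocks (D ((Fin.castSucc i):ℕ)) (-1) 1 0 :
        Matrix (Fin W ⊕ Fin W) (Fin W ⊕ Fin W) R))
        = fun i : Fin n => Matrix.fromBlocks (D (i:ℕ)) (-1) 1 0 := by
      funext i
      simp
    rw [List.concat_eq_append, List.reverse_append, List.reverse_singleton, List.singleton_append,
      List.prod_cons, hfun, Fin.val_last, Matrix.mul_assoc, transfer_prod D a b n, fbfr]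
    rfl

/-- relation between the continuant with boundary terms and the free recursion -/
lemma cc_boundary (D : ℕ → Matrix (Fin W) (Fin W) R) (U0 V0 : Matrix (Fin W) (Fin W) R)
    (N : ℕ) (hN : 1 ≤ N) :
    cC (fun k => D k + (if k = 0 then -U0 else 0) + (if k+1 = N then V0 else 0)) N
      = (rec2 D 1 U0 N).1 + V0 * (rec2 D 1 U0 N).2 := by
  set G : ℕ → Matrix (Fin W) (Fin W) R :=
    fun k => D k + (if k = 0 then -U0 else 0) + (if k+1 = N then V0 else 0) with hG
  have mid : ∀ n, 1 ≤ n → n < N → rec2 G 1 0 n = rec2 D 1 U0 n := by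
    intro n
    induction n with
    | zero => omega
    | succ m ih =>
      intro _ hnN
      rcases Nat.eq_zero_or_pos m with rfl | hm
      · have hG0 : G 0 = D 0 - U0 := by
          rw [hG]
          simp only [if_pos rfl, if_neg (show ¬(0+1 = N) by omega)]
          abel
        show (G 0 * (1:Matrix (Fin W) (Fin W) R) - 0, (1:Matrix (Fin W) (Fin W) R))
            = (D 0 * 1 - U0, 1)
        rw [hG0]
        simp [sub_mul]
      · have hprev := ih (by omega) (by omega)
        show (G m * (rec2 G 1 0 m).1 - (rec2 G 1 0 m).2, (rec2 G 1 0 m).1)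
            = (D m * (rec2 D 1 U0 m).1 - (rec2 D 1 U0 m).2, (rec2 D 1 U0 m).1)
        have hGm : G m = D m := by
          rw [hG]
          simp only [if_neg (show ¬(m = 0) by omega), if_neg (show ¬(m+1 = N) by omega)]
          abel
        rw [hprev, hGm]
  match N, hN with
  | 1, _ =>
    have hG0 : G 0 = D 0 - U0 + V0 := by
      rw [hG]
      simp only [if_pos rfl]
      abel
    show G 0 * 1 - 0 = (D 0 * 1 - U0) + V0 * (1:Matrix (Fin W) (Fin W) R)
    rw [hG0]
    simp [sub_mul, add_mul]
  | (m+2), _ =>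
    have hmid := mid (m+1) (by omega) (by omega)
    have hGm : G (m+1) = D (m+1) + V0 := by
      rw [hG]
      simp only [if_neg (show ¬(m+1 = 0) by omega), if_pos rfl]
      abel
    calc cC G (m+2) = G (m+1) * (rec2 G 1 0 (m+1)).1 - (rec2 G 1 0 (m+1)).2 := rfl
      _ = (D (m+1) + V0) * (rec2 D 1 U0 (m+1)).1 - (rec2 D 1 U0 (m+1)).2 := by
          rw [hmid, hGm]
      _ = (rec2 D 1 U0 (m+2)).1 + V0 * (rec2 D 1 U0 (m+2)).2 := by
          show _ = (D (m+1) * (rec2 D 1 U0 (m+1)).1 - (rec2 D 1 U0 (m+1)).2)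
            + V0 * (rec2 D 1 U0 (m+1)).1
          rw [add_mul]
          abel

end transfer
end Stmt13

open Stmt13 in
theorem stmt_13 (N W : ℕ) (hN : 1 ≤ N)
    (Au Bu Av Bv : Matrix (Fin W) (Fin W) ℝ)
    (hAu : IsUnit Au.det) (hAv : IsUnit Av.det)
    (S : Fin N → Matrix (Fin W) (Fin W) ℝ) (hS : ∀ k, (S k).IsSymm) (E : ℝ)
    (H : Matrix (Fin N × Fin W) (Fin N × Fin W) ℝ)
    (hH : ∀ (i j : Fin N) (x y : Fin W), H (i, x) (j, y) =
      if i = j then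
        S i x y + (if (i : ℕ) = 0 then -(Bu * Au⁻¹) x y else 0)
          + (if (i : ℕ) + 1 = N then (Bv * Av⁻¹)ᵀ x y else 0)
      else if (i : ℕ) + 1 = (j : ℕ) ∨ (j : ℕ) + 1 = (i : ℕ) then
        (if x = y then -1 else 0)
      else 0) :
    ((Matrix.fromRows Av Bv)ᵀ *
      ((List.ofFn fun k : Fin N =>
        (Matrix.fromBlocks (S k - E • 1) (-1) 1 0 :
          Matrix (Fin W ⊕ Fin W) (Fin W ⊕ Fin W) ℝ)).reverse.prod) *
      Matrix.fromRows Au Bu).det =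
    Au.det * Av.det * (H - E • 1).det := by
  classical
  set U0 : Matrix (Fin W) (Fin W) ℝ := Bu * Au⁻¹ with hU0
  set V0 : Matrix (Fin W) (Fin W) ℝ := (Bv * Av⁻¹)ᵀ with hV0
  set D : ℕ → Matrix (Fin W) (Fin W) ℝ :=
    fun k => if h : k < N then S ⟨k, h⟩ - E • 1 else 0 with hD
  set G : ℕ → Matrix (Fin W) (Fin W) ℝ :=
    fun k => D k + (if k = 0 then -U0 else 0) + (if k+1 = N then V0 else 0) with hG
  have hDk : ∀ k : Fin N, D (k:ℕ) = S k - E • 1 := by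
    intro k
    simp only [hD]
    rw [dif_pos k.isLt]
  have hlist : (List.ofFn fun k : Fin N =>
      (Matrix.fromBlocks (S k - E • 1) (-1) 1 0 :
        Matrix (Fin W ⊕ Fin W) (Fin W ⊕ Fin W) ℝ))
      = List.ofFn fun k : Fin N => Matrix.fromBlocks (D (k:ℕ)) (-1) 1 0 := by
    congr 1
    funext k
    rw [hDk k]
  rw [hlist, Matrix.mul_assoc, transfer_prod D Au Bu N]
  have hAuinv : U0 * Au = Bu := by
    rw [hU0, mul_assoc, Matrix.nonsing_inv_mul _ hAu, mul_one]
  have hx : rec2 D Au Bu N = ((rec2 D 1 U0 N).1 * Au, (rec2 D 1 U0 N).2 * Au) := by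
    have h := rec2_mul D 1 U0 Au N
    rw [one_mul, hAuinv] at h
    exact h
  rw [hx]
  rw [Matrix.transpose_fromRows, Matrix.fromCols_mul_fromRows]
  have hBv : Bvᵀ = Avᵀ * V0 := by
    have h1 : Bv * Av⁻¹ * Av = Bv := by
      rw [mul_assoc, Matrix.nonsing_inv_mul _ hAv, mul_one]
    calc Bvᵀ = (Bv * Av⁻¹ * Av)ᵀ := by rw [h1]
      _ = Avᵀ * (Bv * Av⁻¹)ᵀ := Matrix.transpose_mul _ _
  have hcomb : Avᵀ * ((rec2 D 1 U0 N).1 * Au) + Bvᵀ * ((rec2 D 1 U0 N).2 * Au)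
      = Avᵀ * cC G N * Au := by
    rw [hBv, hG, cc_boundary D U0 V0 N hN]
    noncomm_ring
  rw [hcomb]
  have hHtri : H - E • 1 = triT N G := by
    ext ⟨i, x⟩ ⟨j, y⟩
    rw [Matrix.sub_apply, hH i j x y, Matrix.smul_apply, Matrix.one_apply]
    show _ = Tb N G i j x y
    unfold Tb
    by_cases hij : i = j
    · subst hij
      rw [if_pos rfl, if_pos rfl]
      have hGi : G (i:ℕ) = (S i - E • 1) + (if (i:ℕ) = 0 then -U0 else 0)
          + (if (i:ℕ)+1 = N then V0 else 0) := by
        simp only [hG]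
        rw [hDk i]
      rw [hGi]
      simp only [Matrix.add_apply, Matrix.sub_apply,
        apply_ite (fun M : Matrix (Fin W) (Fin W) ℝ => M x y), Matrix.neg_apply,
        Matrix.zero_apply, Matrix.smul_apply, Matrix.one_apply, smul_eq_mul]
      by_cases hxy : x = y
      · subst hxy
        simp only [eq_self_iff_true, if_true]
        ring
      · have hp : ¬ ((i, x) = (i, y)) := fun h => hxy (congrArg Prod.snd h)
        rw [if_neg hxy, if_neg hp]
        ring
    · have hval : ¬ ((i:ℕ) = (j:ℕ)) := fun h => hij (Fin.ext h)
      rw [if_neg hij, if_neg hval]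
      have hmk : ¬ ((i, x) = (j, y)) := by
        intro h
        exact hij (congrArg Prod.fst h)
      rw [if_neg hmk]
      split
      · by_cases hxy : x = y <;> simp [Matrix.neg_apply, Matrix.one_apply, hxy]
      · simp
  rw [hHtri, det_triT N G, Matrix.det_mul, Matrix.det_mul, Matrix.det_transpose]
  ring
end

section
/- Let μ be a Borel probability measure on ℝ and let I ⊂ ℝ be a nondegenerate bounded interval with M = sup_{x∈I}|x|, and suppose μ({ζ : |ζ| > R}) ≤ C₀/R for R ≥ C₁ with C₀, C₁ ≥ 1. Then for every K ≥ A·max(1, log M, −log|I|, log C₀, log C₁) with A a sufficiently large absolute constant, the product measure satisfies (μ × m_I)({(ζ,x) : |log|x − ζ|| > K}) ≤ exp(−K/2). -/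
open MeasureTheory Real

theorem stmt_16 :
    ∃ A : ℝ, 0 < A ∧
      ∀ (μ : Measure ℝ) (_ : IsProbabilityMeasure μ) (C₀ C₁ : ℝ) (_ : 1 ≤ C₀) (_ : 1 ≤ C₁)
        (_ : ∀ R : ℝ, C₁ ≤ R → μ {ζ : ℝ | |ζ| > R} ≤ ENNReal.ofReal (C₀ / R))
        (a b : ℝ) (_ : a < b) (K : ℝ),
        A * max 1 (max (Real.log (max |a| |b|))
            (max (-Real.log (b - a)) (max (Real.log C₀) (Real.log C₁)))) ≤ K →
        (μ.prod ((ENNReal.ofReal (b - a))⁻¹ • volume.restrict (Set.Icc a b)))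
            {p : ℝ × ℝ | abs (Real.log |p.2 - p.1|) > K}
          ≤ ENNReal.ofReal (Real.exp (-K / 2)) := by
  refine ⟨10, by norm_num, ?_⟩
  intro μ hμ C₀ C₁ hC₀ hC₁ htail a b hab K hK
  have hba : (0:ℝ) < b - a := sub_pos.mpr hab
  set M : ℝ := max |a| |b| with hMdef
  set L : ℝ := max 1 (max (Real.log M)
      (max (-Real.log (b - a)) (max (Real.log C₀) (Real.log C₁)))) with hLdef
  have hL1 : (1:ℝ) ≤ L := le_max_left _ _
  have hK10 : (10:ℝ) ≤ K := by nlinarith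
  have hK0 : (0:ℝ) < K := by linarith
  have hLK : L ≤ K / 10 := by linarith
  have hM0 : (0:ℝ) < M := by
    rcases eq_or_ne b 0 with h | h
    · have ha : a ≠ 0 := by rintro rfl; rw [h] at hab; exact lt_irrefl 0 hab
      exact lt_max_of_lt_left (abs_pos.mpr ha)
    · exact lt_max_of_lt_right (abs_pos.mpr h)
  have hexpb : ∀ x : ℝ, 0 < x → Real.log x ≤ L → x ≤ Real.exp (K / 10) := by
    intro x hx hlx
    calc x = Real.exp (Real.log x) := (Real.exp_log hx).symm
    _ ≤ Real.exp (K / 10) := Real.exp_le_exp.mpr (le_trans hlx hLK)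
  have hMle : M ≤ Real.exp (K / 10) :=
    hexpb M hM0 (le_trans (le_max_left _ _) (le_max_right _ _))
  have hinvle : (b - a)⁻¹ ≤ Real.exp (K / 10) := by
    refine hexpb _ (by positivity) ?_
    rw [Real.log_inv]
    exact le_trans (le_max_left _ _) (le_trans (le_max_right _ _) (le_max_right _ _))
  have hC₀le : C₀ ≤ Real.exp (K / 10) := by
    refine hexpb _ (by linarith) ?_
    exact le_trans (le_max_left _ _)
      (le_trans (le_max_right _ _) (le_trans (le_max_right _ _) (le_max_right _ _)))
  have hC₁le : C₁ ≤ Real.exp (K / 10) := by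
    refine hexpb _ (by linarith) ?_
    exact le_trans (le_max_right _ _)
      (le_trans (le_max_right _ _) (le_trans (le_max_right _ _) (le_max_right _ _)))
  have hexphalf : Real.exp (K / 10) ≤ Real.exp K / 2 := by
    have h9 : (2:ℝ) ≤ Real.exp (9 * K / 10) := by
      have := Real.add_one_le_exp (9 * K / 10); nlinarith
    have heq : Real.exp K = Real.exp (K / 10) * Real.exp (9 * K / 10) := by
      rw [← Real.exp_add]; ring_nf
    nlinarith [Real.exp_pos (K / 10)]
  set R : ℝ := Real.exp K - M with hRdef
  have hRhalf : Real.exp K / 2 ≤ R := by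
    have : M ≤ Real.exp K / 2 := le_trans hMle hexphalf
    simp only [hRdef]; linarith
  have hR0 : (0:ℝ) < R := lt_of_lt_of_le (by positivity) hRhalf
  have hRC₁ : C₁ ≤ R := le_trans (le_trans hC₁le hexphalf) hRhalf
  -- the key real inequality
  have hkey : C₀ / R + (b - a)⁻¹ * (2 * Real.exp (-K)) ≤ Real.exp (-K / 2) := by
    have hexpK : Real.exp (-K) * Real.exp K = 1 := by rw [← Real.exp_add]; simp
    have h1 : C₀ / R ≤ 2 * (Real.exp (K / 10) * Real.exp (-K)) := by
      rw [div_le_iff₀ hR0]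
      have hpos : (0:ℝ) ≤ 2 * (Real.exp (K / 10) * Real.exp (-K)) := by positivity
      calc C₀ ≤ Real.exp (K / 10) := hC₀le
      _ = 2 * (Real.exp (K / 10) * Real.exp (-K)) * (Real.exp K / 2) := by
          have : 2 * (Real.exp (K / 10) * Real.exp (-K)) * (Real.exp K / 2)
              = Real.exp (K / 10) * (Real.exp (-K) * Real.exp K) := by ring
          rw [this, hexpK, mul_one]
      _ ≤ 2 * (Real.exp (K / 10) * Real.exp (-K)) * R :=
          mul_le_mul_of_nonneg_left hRhalf hpos
    have h2 : (b - a)⁻¹ * (2 * Real.exp (-K)) ≤ 2 * (Real.exp (K / 10) * Real.exp (-K)) := by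
      nlinarith [Real.exp_pos (-K)]
    have h3 : 4 * (Real.exp (K / 10) * Real.exp (-K)) ≤ Real.exp (-K / 2) := by
      have e1 : Real.exp (K / 10) * Real.exp (-K) = Real.exp (-(9 * K / 10)) := by
        rw [← Real.exp_add]; ring_nf
      have e2 : Real.exp (-K / 2) = Real.exp (-(9 * K / 10)) * Real.exp (2 * K / 5) := by
        rw [← Real.exp_add]; ring_nf
      rw [e1, e2]
      have h4 : (4:ℝ) ≤ Real.exp (2 * K / 5) := by
        have := Real.add_one_le_exp (2 * K / 5); nlinarith
      nlinarith [Real.exp_pos (-(9 * K / 10))]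
    linarith
  -- measure theory
  set ν : Measure ℝ := (ENNReal.ofReal (b - a))⁻¹ • volume.restrict (Set.Icc a b) with hν
  haveI : SFinite ν := by infer_instance
  have hν_compl : ν (Set.Icc a b)ᶜ = 0 := by
    rw [hν, Measure.smul_apply, Measure.restrict_apply measurableSet_Icc.compl]
    simp
  have hν_univ : ν Set.univ = 1 := by
    rw [hν, Measure.smul_apply, Measure.restrict_apply_univ, Real.volume_Icc, smul_eq_mul]
    exact ENNReal.inv_mul_cancel (ENNReal.ofReal_pos.mpr hba).ne' ENNReal.ofReal_ne_top
  set T : Set ℝ := {ζ : ℝ | |ζ| > R} with hT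
  set S₂ : Set (ℝ × ℝ) := {p : ℝ × ℝ | |p.2 - p.1| < Real.exp (-K)} with hS₂
  have hsub : {p : ℝ × ℝ | abs (Real.log |p.2 - p.1|) > K} ⊆
      (T ×ˢ Set.univ ∪ Set.univ ×ˢ (Set.Icc a b)ᶜ) ∪ S₂ := by
    rintro ⟨ζ, x⟩ hp
    simp only [Set.mem_setOf_eq] at hp
    have ht0 : (0:ℝ) ≤ |x - ζ| := abs_nonneg _
    rcases lt_abs.mp hp with h | h
    · -- far case
      left
      have htpos : (0:ℝ) < |x - ζ| := by
        rcases lt_or_eq_of_le ht0 with h' | h'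
        · exact h'
        · exfalso; rw [← h', Real.log_zero] at h; linarith
      have hte : Real.exp K < |x - ζ| := by
        have := Real.exp_lt_exp.mpr h
        rwa [Real.exp_log htpos] at this
      by_cases hx : x ∈ Set.Icc a b
      · left
        refine Set.mem_prod.mpr ⟨?_, Set.mem_univ _⟩
        have hxM : |x| ≤ M := by
          rcases hx with ⟨hx1, hx2⟩
          refine abs_le.mpr ⟨?_, ?_⟩
          · have h1 : -|a| ≤ a := neg_abs_le a
            have h2 : |a| ≤ M := le_max_left _ _
            linarith
          · have h1 : b ≤ |b| := le_abs_self b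
            have h2 : |b| ≤ M := le_max_right _ _
            linarith
        have htri : |x - ζ| ≤ |x| + |ζ| := by
          rw [sub_eq_add_neg]
          exact le_trans (abs_add_le _ _) (by rw [abs_neg])
        show R < |ζ|
        simp only [hRdef]
        linarith
      · right; exact ⟨Set.mem_univ _, hx⟩
    · -- close case
      right
      have hne : |x - ζ| ≠ 0 := by
        intro h0; rw [h0, Real.log_zero] at h; simp at h; linarith
      have htpos : (0:ℝ) < |x - ζ| := lt_of_le_of_ne ht0 (Ne.symm hne)
      show |x - ζ| < Real.exp (-K)
      have hlt : Real.log |x - ζ| < -K := by linarith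
      calc |x - ζ| = Real.exp (Real.log |x - ζ|) := (Real.exp_log htpos).symm
      _ < Real.exp (-K) := Real.exp_lt_exp.mpr hlt
  have hS₂m : MeasurableSet S₂ :=
    measurableSet_lt ((measurable_snd.sub measurable_fst).abs) measurable_const
  have hS₂bound : (μ.prod ν) S₂ ≤ ENNReal.ofReal ((b - a)⁻¹ * (2 * Real.exp (-K))) := by
    rw [Measure.prod_apply hS₂m]
    have hfib : ∀ ζ : ℝ, ν (Prod.mk ζ ⁻¹' S₂) ≤
        ENNReal.ofReal ((b - a)⁻¹ * (2 * Real.exp (-K))) := by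
      intro ζ
      have hpre : Prod.mk ζ ⁻¹' S₂ = Metric.ball ζ (Real.exp (-K)) := by
        ext x
        simp [hS₂, Metric.mem_ball, Real.dist_eq]
      rw [hpre, hν, Measure.smul_apply, smul_eq_mul]
      have hres : (volume.restrict (Set.Icc a b)) (Metric.ball ζ (Real.exp (-K))) ≤
          ENNReal.ofReal (2 * Real.exp (-K)) := by
        refine le_trans (Measure.restrict_le_self _) ?_
        rw [Real.volume_ball]
      calc (ENNReal.ofReal (b - a))⁻¹ * (volume.restrict (Set.Icc a b)) (Metric.ball ζ (Real.exp (-K)))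
          ≤ (ENNReal.ofReal (b - a))⁻¹ * ENNReal.ofReal (2 * Real.exp (-K)) := by
            exact mul_le_mul_right hres _
      _ = ENNReal.ofReal ((b - a)⁻¹ * (2 * Real.exp (-K))) := by
            rw [← ENNReal.ofReal_inv_of_pos hba, ← ENNReal.ofReal_mul (by positivity)]
    calc ∫⁻ ζ, ν (Prod.mk ζ ⁻¹' S₂) ∂μ
        ≤ ∫⁻ _, ENNReal.ofReal ((b - a)⁻¹ * (2 * Real.exp (-K))) ∂μ := lintegral_mono hfib
    _ = ENNReal.ofReal ((b - a)⁻¹ * (2 * Real.exp (-K))) := by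
          rw [lintegral_const, measure_univ, mul_one]
  have hTbound : (μ.prod ν) (T ×ˢ Set.univ) ≤ ENNReal.ofReal (C₀ / R) := by
    rw [Measure.prod_prod, hν_univ, mul_one]
    exact htail R hRC₁
  have hcompl : (μ.prod ν) (Set.univ ×ˢ (Set.Icc a b)ᶜ) = 0 := by
    rw [Measure.prod_prod, hν_compl, mul_zero]
  calc (μ.prod ν) {p : ℝ × ℝ | abs (Real.log |p.2 - p.1|) > K}
      ≤ (μ.prod ν) ((T ×ˢ Set.univ ∪ Set.univ ×ˢ (Set.Icc a b)ᶜ) ∪ S₂) := measure_mono hsub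
  _ ≤ (μ.prod ν) (T ×ˢ Set.univ ∪ Set.univ ×ˢ (Set.Icc a b)ᶜ) + (μ.prod ν) S₂ :=
        measure_union_le _ _
  _ ≤ ((μ.prod ν) (T ×ˢ Set.univ) + (μ.prod ν) (Set.univ ×ˢ (Set.Icc a b)ᶜ)) + (μ.prod ν) S₂ :=
        add_le_add_left (measure_union_le _ _) _
  _ ≤ (ENNReal.ofReal (C₀ / R) + 0) + ENNReal.ofReal ((b - a)⁻¹ * (2 * Real.exp (-K))) := by
        exact add_le_add (add_le_add hTbound (le_of_eq hcompl)) hS₂bound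
  _ = ENNReal.ofReal (C₀ / R + (b - a)⁻¹ * (2 * Real.exp (-K))) := by
        rw [add_zero, ← ENNReal.ofReal_add (by positivity) (by positivity)]
  _ ≤ ENNReal.ofReal (Real.exp (-K / 2)) := ENNReal.ofReal_le_ofReal hkey
end
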